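/- arXiv:2404.01111 — 5 statements merged into one kernel-verified Lean document; each statement's English description precedes it below -/
import Mathlib

section
/- Let W be a finite alphabet, Π a probability distribution on W^n, and Γ a probability distribution on W such that ‖Π − Γ^{⊗n}‖_TV ≤ ε < 1/4. Then (1/n) Σ_{t=1}^n I_Π(W_t ; W^{t−1}) ≤ 4ε(log|W| + log(1/ε)), where I_Π(W_t; W^{t−1}) is the mutual information under Π between the t-th coordinate and the first t−1 coordinates. -/
open MeasureTheory Real

/-- Total variation distance between two measures. -/
noncomputable def tvDist {α : Type*} [MeasurableSpace α] (μ ν : Measure α) : ℝ :=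
  ⨆ s : {s : Set α // MeasurableSet s}, |(μ s.1).toReal - (ν s.1).toReal|

/-- Shannon entropy (base 2) of a distribution on a finite type. -/
noncomputable def entropy {α : Type*} [Fintype α] [MeasurableSpace α] (μ : Measure α) : ℝ :=
  -∑ x : α, (μ {x}).toReal * Real.logb 2 (μ {x}).toReal

/-- Shannon mutual information (base 2) between the two coordinates of a joint
distribution on a product of finite types. -/
noncomputable def mutualInfo {α β : Type*} [Fintype α] [MeasurableSpace α]
    [Fintype β] [MeasurableSpace β] (μ : Measure (α × β)) : ℝ :=
  entropy (μ.map Prod.fst) + entropy (μ.map Prod.snd) - entropy μ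

set_option linter.unusedSectionVars false
set_option linter.unusedVariables false

namespace S4

section Analytic


lemma log_one_div_ge_one {ε : ℝ} (hε0 : 0 < ε) (hε : ε < 1/4) : 1 ≤ Real.log (1/ε) := by
  have h4 : Real.exp 1 < 4 := by
    have := Real.exp_one_lt_d9
    linarith
  have : Real.exp 1 < 1/ε := by
    have : (4:ℝ) ≤ 1/ε := by
      rw [le_div_iff₀ hε0]; linarith
    linarith
  calc (1:ℝ) = Real.log (Real.exp 1) := (Real.log_exp 1).symm
    _ ≤ Real.log (1/ε) := Real.log_le_log (Real.exp_pos 1) this.le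

lemma negMulLog_le_eps {ε x : ℝ} (hε0 : 0 < ε) (hε : ε < 1/4) (hx0 : 0 ≤ x)
    (hx : x ≤ 2*ε) : Real.negMulLog x ≤ 2*ε*Real.log (1/ε) := by
  have hl1 : 1 ≤ Real.log (1/ε) := log_one_div_ge_one hε0 hε
  have hl0 : 0 ≤ Real.log (1/ε) := by linarith
  rcases eq_or_lt_of_le hx0 with h0 | hx0'
  · rw [← h0, Real.negMulLog_zero]
    positivity
  rcases le_or_gt x ε with h | h
  · -- x ≤ ε : negMulLog x = x log(ε/x) + x log (1/ε) ≤ (ε − x) + x log(1/ε)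
    have key : Real.negMulLog x = x * Real.log (ε/x) + x * Real.log (1/ε) := by
      rw [Real.negMulLog, Real.log_div (ne_of_gt hε0) (ne_of_gt hx0'),
        Real.log_div one_ne_zero (ne_of_gt hε0), Real.log_one]
      ring
    have h1 : x * Real.log (ε/x) ≤ ε - x := by
      have := Real.log_le_sub_one_of_pos (show 0 < ε/x by positivity)
      calc x * Real.log (ε/x) ≤ x * (ε/x - 1) := by nlinarith
        _ = ε - x := by field_simp
    have h2 : x * Real.log (1/ε) ≤ ε * Real.log (1/ε) := by nlinarith
    nlinarith
  · have : Real.negMulLog x = x * Real.log (1/x) := by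
      rw [Real.negMulLog, Real.log_div one_ne_zero (ne_of_gt hx0'), Real.log_one]; ring
    rw [this]
    have h1 : Real.log (1/x) ≤ Real.log (1/ε) := by
      apply Real.log_le_log (by positivity)
      rw [div_le_div_iff₀ hx0' hε0]; nlinarith
    have h2 : 0 ≤ Real.log (1/x) ∨ Real.log (1/x) < 0 := le_or_gt _ _
    nlinarith [Real.log_le_log (by positivity : (0:ℝ) < 1/x) (show 1/x ≤ 1/ε by rw [div_le_div_iff₀ hx0' hε0]; nlinarith)]

-- φ(1−d) ≤ φ(d) for 0 < d ≤ 1/2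
lemma negMulLog_one_sub_le {d : ℝ} (hd0 : 0 < d) (hd : d ≤ 1/2) :
    Real.negMulLog (1 - d) ≤ Real.negMulLog d := by
  have h1d : 0 < 1 - d := by linarith
  set r := d / (1 - d) with hr
  have hr0 : 0 ≤ r := by positivity
  have hr1 : r ≤ 1 := by rw [hr, div_le_one h1d]; linarith
  have hgm : d ^ r * 1 ^ (1 - r) ≤ r * d + (1 - r) * 1 :=
    Real.geom_mean_le_arith_mean2_weighted hr0 (by linarith) hd0.le zero_le_one (by ring)
  have hpow : d ^ r ≤ 1 - d := by
    have : r * d + (1 - r) * 1 = 1 - r * (1 - d) := by ring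
    rw [Real.one_rpow, mul_one] at hgm
    have hrd : r * (1 - d) = d := by rw [hr]; field_simp
    calc d ^ r ≤ 1 - r * (1-d) := by linarith
      _ = 1 - d := by rw [hrd]
  have hlog : r * Real.log d ≤ Real.log (1 - d) := by
    calc r * Real.log d = Real.log (d ^ r) := (Real.log_rpow hd0 r).symm
      _ ≤ Real.log (1 - d) := Real.log_le_log (Real.rpow_pos_of_pos hd0 r) hpow
  have : d * Real.log d ≤ (1 - d) * Real.log (1 - d) := by
    have := mul_le_mul_of_nonneg_left hlog h1d.le
    calc d * Real.log d = (1 - d) * (r * Real.log d) := by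
          rw [hr]; field_simp
      _ ≤ (1 - d) * Real.log (1 - d) := this
  simp only [Real.negMulLog]; nlinarith




-- (a) φ(p+d) − φ(p) ≤ φ(d), for p ≥ 0, d ≥ 0, p+d ≤ 1
lemma phi_add_sub_le {p d : ℝ} (hp : 0 ≤ p) (hd : 0 ≤ d) (h1 : p + d ≤ 1) :
    negMulLog (p + d) - negMulLog p ≤ negMulLog d := by
  rcases eq_or_lt_of_le hd with h0 | hd0
  · simp [← h0]
  have hq0 : 0 < p + d := by linarith
  have t2 : -(d * Real.log (p+d)) ≤ negMulLog d := by
    have : Real.log d ≤ Real.log (p+d) := Real.log_le_log hd0 (by linarith)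
    simp only [negMulLog]; nlinarith
  rcases eq_or_lt_of_le hp with hp0 | hp0
  · simp only [negMulLog, ← hp0] at *
    nlinarith
  have t1 : -(p * Real.log (p+d)) ≤ -(p * Real.log p) := by
    have : Real.log p ≤ Real.log (p+d) := Real.log_le_log hp0 (by linarith)
    nlinarith
  simp only [negMulLog] at *
  nlinarith

-- monotone part: φ(x) − φ(x+d) increasing in x on [0, 1−d]
lemma phi_sub_mono {d : ℝ} (hd0 : 0 < d) (hd1 : d < 1) :
    MonotoneOn (fun x => negMulLog x - negMulLog (x + d)) (Set.Icc 0 (1 - d)) := by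
  apply monotoneOn_of_deriv_nonneg (convex_Icc _ _)
  · exact (continuous_negMulLog.sub (continuous_negMulLog.comp (continuous_id.add continuous_const))).continuousOn
  · rw [interior_Icc]
    intro x hx
    have hx0 : 0 < x := hx.1
    have hxd : 0 < x + d := by linarith
    apply DifferentiableAt.differentiableWithinAt
    exact (differentiableAt_negMulLog (ne_of_gt hx0)).sub
      ((differentiableAt_negMulLog (ne_of_gt hxd)).comp x (differentiableAt_id.add_const d))
  · rw [interior_Icc]
    intro x hx
    have hx0 : 0 < x := hx.1
    have hxd : 0 < x + d := by linarith
    have h1 : HasDerivAt (fun x => negMulLog x - negMulLog (x + d))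
        ((-Real.log x - 1) - (-Real.log (x+d) - 1)) x := by
      have hA := hasDerivAt_negMulLog (ne_of_gt hx0)
      have hB : HasDerivAt (fun y => negMulLog (y + d)) (-Real.log (x+d) - 1) x := by
        have := (hasDerivAt_negMulLog (ne_of_gt hxd)).comp x
          ((hasDerivAt_id x).add_const d)
        rw [mul_one] at this
        exact this
      exact hA.sub hB
    rw [h1.deriv]
    have : Real.log x ≤ Real.log (x + d) := Real.log_le_log hx0 (by linarith)
    linarith

-- (b) φ(p) − φ(p+d) ≤ φ(d)  for 0 ≤ p, 0 < d ≤ 1/2, p+d ≤ 1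
lemma phi_sub_add_le {p d : ℝ} (hp : 0 ≤ p) (hd : 0 ≤ d) (hd2 : d ≤ 1/2) (h1 : p + d ≤ 1) :
    negMulLog p - negMulLog (p + d) ≤ negMulLog d := by
  rcases eq_or_lt_of_le hd with h0 | hd0
  · simp [← h0]
  calc negMulLog p - negMulLog (p + d)
      ≤ negMulLog (1-d) - negMulLog ((1-d) + d) := by
        apply phi_sub_mono hd0 (by linarith)
          (Set.mem_Icc.2 ⟨hp, by linarith⟩) (Set.mem_Icc.2 ⟨by linarith, le_refl _⟩)
        linarith
    _ = negMulLog (1-d) := by norm_num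
    _ ≤ negMulLog d := negMulLog_one_sub_le hd0 hd2

-- main pointwise lemma
lemma abs_phi_sub_phi {p q : ℝ} (hp0 : 0 ≤ p) (hp1 : p ≤ 1) (hq0 : 0 ≤ q) (hq1 : q ≤ 1)
    (hd : |p - q| ≤ 1/2) : |negMulLog p - negMulLog q| ≤ negMulLog |p - q| := by
  wlog h : p ≤ q generalizing p q
  · rw [abs_sub_comm, abs_sub_comm p q]
    exact this hq0 hq1 hp0 hp1 (by rwa [abs_sub_comm]) (by linarith [le_of_not_ge h])
  have hd0 : 0 ≤ q - p := by linarith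
  set d := q - p with hdd
  rw [abs_sub_comm, abs_of_nonneg hd0] at hd
  have hq : q = p + d := by ring
  have habs : |p - q| = d := by rw [abs_sub_comm]; exact abs_of_nonneg hd0
  rw [habs, abs_le]
  constructor
  · have := phi_add_sub_le hp0 hd0 (show p + d ≤ 1 by linarith)
    rw [← hq] at this; linarith
  · have := phi_sub_add_le hp0 hd0 hd (by linarith)
    rw [← hq] at this; linarith


end Analytic

noncomputable def He {α : Type*} [Fintype α] [MeasurableSpace α] (μ : Measure α) : ℝ :=
  ∑ x : α, Real.negMulLog (μ {x}).toReal

section TV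
open ENNReal


lemma tvDist_ge {α : Type*} [MeasurableSpace α] (μ ν : Measure α)
    [IsProbabilityMeasure μ] [IsProbabilityMeasure ν] {s : Set α} (hs : MeasurableSet s) :
    |(μ s).toReal - (ν s).toReal| ≤ tvDist μ ν := by
  apply le_ciSup (f := fun s : {s : Set α // MeasurableSet s} => |(μ s.1).toReal - (ν s.1).toReal|)
    ?_ (⟨s, hs⟩ : {s : Set α // MeasurableSet s})
  refine ⟨2, ?_⟩
  rintro x ⟨t, rfl⟩
  have h1 : (μ t.1).toReal ≤ 1 := by
    have : μ t.1 ≤ 1 := prob_le_one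
    simpa using ENNReal.toReal_mono (by simp) this
  have h2 : (ν t.1).toReal ≤ 1 := by
    have : ν t.1 ≤ 1 := prob_le_one
    simpa using ENNReal.toReal_mono (by simp) this
  have h3 : 0 ≤ (μ t.1).toReal := ENNReal.toReal_nonneg
  have h4 : 0 ≤ (ν t.1).toReal := ENNReal.toReal_nonneg
  rw [abs_le]; constructor <;> linarith

lemma tvDist_nonneg {α : Type*} [MeasurableSpace α] (μ ν : Measure α)
    [IsProbabilityMeasure μ] [IsProbabilityMeasure ν] : 0 ≤ tvDist μ ν := by
  have := tvDist_ge μ ν MeasurableSet.empty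
  have h : (0:ℝ) ≤ |(μ ∅).toReal - (ν ∅).toReal| := abs_nonneg _
  linarith

lemma tvDist_map_le {α β : Type*} [MeasurableSpace α] [MeasurableSpace β]
    (μ ν : Measure α) [IsProbabilityMeasure μ] [IsProbabilityMeasure ν]
    {f : α → β} (hf : Measurable f) :
    tvDist (μ.map f) (ν.map f) ≤ tvDist μ ν := by
  apply ciSup_le
  rintro ⟨s, hs⟩
  rw [Measure.map_apply hf hs, Measure.map_apply hf hs]
  exact tvDist_ge μ ν (hf hs)


end TV

section Meas
open ENNReal
variable {α : Type*} [Fintype α] [MeasurableSpace α] [MeasurableSingletonClass α]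


lemma entropy_eq (μ : Measure α) :
    entropy μ = He μ / Real.log 2 := by
  rw [entropy, He, Finset.sum_div, ← Finset.sum_neg_distrib]
  congr 1; ext x
  rw [Real.logb, Real.negMulLog]
  field_simp

lemma meas_finset_eq_sum (μ : Measure α) (s : Finset α) : μ ↑s = ∑ x ∈ s, μ {x} := by
  rw [← measure_biUnion_finset]
  · congr 1; exact (Set.biUnion_of_singleton (↑s : Set α)).symm
  · intro x _ y _ hxy
    simp [Function.onFun, Set.disjoint_singleton, hxy]
  · exact fun x _ => measurableSet_singleton x

lemma meas_finset_toReal (μ : Measure α) [IsFiniteMeasure μ] (s : Finset α) :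
    (μ ↑s).toReal = ∑ x ∈ s, (μ {x}).toReal := by
  rw [meas_finset_eq_sum, ENNReal.toReal_sum]
  exact fun a _ => measure_ne_top μ _

lemma sum_atoms (μ : Measure α) [IsProbabilityMeasure μ] :
    ∑ x : α, (μ {x}).toReal = 1 := by
  rw [← meas_finset_toReal μ Finset.univ]
  simp

lemma atom_le_one (μ : Measure α) [IsProbabilityMeasure μ] (x : α) :
    (μ {x}).toReal ≤ 1 := by
  have : μ {x} ≤ 1 := prob_le_one
  calc (μ {x}).toReal ≤ (1 : ℝ≥0∞).toReal := ENNReal.toReal_mono (by simp) this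
    _ = 1 := by simp

open scoped Classical in
lemma l1_le_two_tvDist (μ ν : Measure α) [IsProbabilityMeasure μ] [IsProbabilityMeasure ν] :
    ∑ x : α, |(μ {x}).toReal - (ν {x}).toReal| ≤ 2 * tvDist μ ν := by
  set p : α → ℝ := fun x => (μ {x}).toReal
  set q : α → ℝ := fun x => (ν {x}).toReal
  set S : Finset α := Finset.univ.filter (fun x => q x ≤ p x) with hS
  have hmS : MeasurableSet (↑S : Set α) := (Set.toFinite _).measurableSet
  have hmSc : MeasurableSet (↑(Finset.univ \ S) : Set α) := (Set.toFinite _).measurableSet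
  have split : ∑ x : α, |p x - q x|
      = (∑ x ∈ S, (p x - q x)) + ∑ x ∈ Finset.univ \ S, (q x - p x) := by
    rw [← Finset.sum_filter_add_sum_filter_not Finset.univ (fun x => q x ≤ p x) (fun x => |p x - q x|)]
    congr 1
    · apply Finset.sum_congr rfl
      intro x hx
      rw [abs_of_nonneg]
      simp only [hS, Finset.mem_filter] at hx
      linarith [hx.2]
    · rw [show Finset.univ \ S = Finset.univ.filter (fun x => ¬ q x ≤ p x) by
        rw [hS, Finset.filter_not, Finset.sdiff_eq_filter]]
      apply Finset.sum_congr rfl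
      intro x hx
      simp only [Finset.mem_filter] at hx
      rw [abs_of_nonpos] <;> [skip; linarith [hx.2]]
      ring
  have e1 : ∑ x ∈ S, (p x - q x) = (μ ↑S).toReal - (ν ↑S).toReal := by
    rw [Finset.sum_sub_distrib, meas_finset_toReal, meas_finset_toReal]
  have e2 : ∑ x ∈ Finset.univ \ S, (q x - p x)
      = (ν ↑(Finset.univ \ S)).toReal - (μ ↑(Finset.univ \ S)).toReal := by
    rw [Finset.sum_sub_distrib, meas_finset_toReal, meas_finset_toReal]
  have b1 := tvDist_ge μ ν hmS
  have b2 := tvDist_ge μ ν hmSc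
  rw [split, e1, e2]
  rw [abs_le] at b1 b2
  linarith [b1.2, b2.1]

lemma He_diff_le (μ ν : Measure α) [IsProbabilityMeasure μ] [IsProbabilityMeasure ν]
    (hT : ∑ x : α, |(μ {x}).toReal - (ν {x}).toReal| ≤ 1/2) :
    |He μ - He ν| ≤ (∑ x : α, |(μ {x}).toReal - (ν {x}).toReal|) * Real.log (Fintype.card α)
      + Real.negMulLog (∑ x : α, |(μ {x}).toReal - (ν {x}).toReal|) := by
  set p : α → ℝ := fun x => (μ {x}).toReal
  set q : α → ℝ := fun x => (ν {x}).toReal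
  set T : ℝ := ∑ x : α, |p x - q x| with hTdef
  have hT0 : 0 ≤ T := Finset.sum_nonneg fun x _ => abs_nonneg _
  have hdx : ∀ x : α, |p x - q x| ≤ T := fun x =>
    Finset.single_le_sum (f := fun x => |p x - q x|) (fun y _ => abs_nonneg _) (Finset.mem_univ x)
  haveI hne : Nonempty α := Measure.nonempty_of_neZero μ
  have hN : 0 < (Fintype.card α : ℝ) := by
    have : 0 < Fintype.card α := Fintype.card_pos
    exact_mod_cast this
  -- step 1: |He μ − He ν| ≤ Σ φ(|p−q|)
  have step1 : |He μ - He ν| ≤ ∑ x : α, Real.negMulLog |p x - q x| := by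
    rw [He, He, ← Finset.sum_sub_distrib]
    calc |∑ x : α, (Real.negMulLog (p x) - Real.negMulLog (q x))|
        ≤ ∑ x : α, |Real.negMulLog (p x) - Real.negMulLog (q x)| := Finset.abs_sum_le_sum_abs _ _
      _ ≤ ∑ x : α, Real.negMulLog |p x - q x| := by
          apply Finset.sum_le_sum
          intro x _
          exact abs_phi_sub_phi ENNReal.toReal_nonneg (atom_le_one μ x)
            ENNReal.toReal_nonneg (atom_le_one ν x) (le_trans (hdx x) hT)
  -- step 2: Jensen
  have step2 : ∑ x : α, Real.negMulLog |p x - q x|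
      ≤ (Fintype.card α : ℝ) * Real.negMulLog (T / Fintype.card α) := by
    have hjen := ConcaveOn.le_map_sum (t := Finset.univ) Real.concaveOn_negMulLog
      (w := fun _ : α => 1 / (Fintype.card α : ℝ)) (p := fun x => |p x - q x|)
      (fun _ _ => by positivity)
      (by rw [Finset.sum_const, Finset.card_univ, nsmul_eq_mul]; field_simp)
      (fun x _ => Set.mem_Ici.2 (abs_nonneg _))
    simp only [smul_eq_mul] at hjen
    have lhs : ∑ x : α, 1 / (Fintype.card α:ℝ) * Real.negMulLog |p x - q x|
        = (1/(Fintype.card α:ℝ)) * ∑ x : α, Real.negMulLog |p x - q x| := by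
      rw [Finset.mul_sum]
    have rhs : ∑ x : α, 1 / (Fintype.card α:ℝ) * |p x - q x| = T / Fintype.card α := by
      rw [← Finset.mul_sum, ← hTdef]; ring
    rw [lhs, rhs] at hjen
    calc ∑ x : α, Real.negMulLog |p x - q x|
        = (Fintype.card α:ℝ) * ((1/(Fintype.card α:ℝ)) * ∑ x : α, Real.negMulLog |p x - q x|) := by
          field_simp
      _ ≤ (Fintype.card α:ℝ) * Real.negMulLog (T / Fintype.card α) := by
          apply mul_le_mul_of_nonneg_left hjen hN.le
  -- step 3: N φ(T/N) = T log N + φ T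
  have step3 : (Fintype.card α:ℝ) * Real.negMulLog (T / Fintype.card α)
      = T * Real.log (Fintype.card α) + Real.negMulLog T := by
    rcases eq_or_lt_of_le hT0 with h0 | hT0'
    · rw [← h0]; simp
    rw [Real.negMulLog, Real.negMulLog, Real.log_div (ne_of_gt hT0') (ne_of_gt hN)]
    field_simp
    ring
  calc |He μ - He ν| ≤ ∑ x : α, Real.negMulLog |p x - q x| := step1
    _ ≤ (Fintype.card α:ℝ) * Real.negMulLog (T / Fintype.card α) := step2
    _ = T * Real.log (Fintype.card α) + Real.negMulLog T := step3


variable {α : Type*} [Fintype α] [MeasurableSpace α] [MeasurableSingletonClass α]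

open scoped Classical in
lemma He_map_injective {β : Type*} [Fintype β] [MeasurableSpace β] [MeasurableSingletonClass β]
    (μ : Measure α) {f : α → β} (hf : Measurable f) (hinj : Function.Injective f) :
    He (μ.map f) = He μ := by
  rw [He, He]
  rw [← Finset.sum_filter_add_sum_filter_not Finset.univ (fun y => y ∈ Finset.univ.image f)]
  have h2 : ∑ y ∈ Finset.univ.filter (fun y => ¬ y ∈ Finset.univ.image f),
      Real.negMulLog ((μ.map f) {y}).toReal = 0 := by
    apply Finset.sum_eq_zero
    intro y hy
    simp only [Finset.mem_filter, Finset.mem_image] at hy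
    have : (μ.map f) {y} = 0 := by
      rw [Measure.map_apply hf (measurableSet_singleton y)]
      have : f ⁻¹' {y} = ∅ := by
        ext x; simp only [Set.mem_preimage, Set.mem_singleton_iff, Set.mem_empty_iff_false,
          iff_false]
        intro h
        exact hy.2 ⟨x, Finset.mem_univ x, h⟩
      rw [this]; simp
    rw [this]; simp
  rw [h2, add_zero]
  rw [show Finset.univ.filter (fun y => y ∈ Finset.univ.image f) = Finset.univ.image f by
    ext y; simp]
  rw [Finset.sum_image (fun x _ y _ h => hinj h)]
  apply Finset.sum_congr rfl
  intro x _
  congr 2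
  rw [Measure.map_apply hf (measurableSet_singleton (f x))]
  congr 1
  ext z
  simp only [Set.mem_preimage, Set.mem_singleton_iff]
  exact ⟨fun h => hinj h, fun h => by rw [h]⟩

lemma He_unique [Unique α] (μ : Measure α) [IsProbabilityMeasure μ] : He μ = 0 := by
  rw [He]
  rw [Finset.sum_eq_single_of_mem default (Finset.mem_univ _) (fun b _ hb => absurd (Unique.eq_default b) hb)]
  have : ({default} : Set α) = Set.univ := by
    ext x; simp [Unique.eq_default x]
  rw [this, measure_univ]
  simp


end Meas

section Pi
open ENNReal
variable {W : Type*} [Fintype W] [MeasurableSpace W] [MeasurableSingletonClass W]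

variable {W : Type*} [Fintype W] [MeasurableSpace W] [MeasurableSingletonClass W]

lemma negMulLog_finset_prod {ι : Type*} [DecidableEq ι] (s : Finset ι) (a : ι → ℝ) :
    Real.negMulLog (∏ i ∈ s, a i) = ∑ i ∈ s, (∏ j ∈ s.erase i, a j) * Real.negMulLog (a i) := by
  induction s using Finset.induction_on with
  | empty => simp
  | insert i s hnotmem ih =>
    rw [Finset.prod_insert hnotmem, Real.negMulLog_mul, Finset.sum_insert hnotmem,
      Finset.erase_insert hnotmem, ih]
    rw [Finset.mul_sum]
    congr 1
    apply Finset.sum_congr rfl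
    intro j hj
    rw [Finset.erase_insert_of_ne (by rintro rfl; exact hnotmem hj)]
    rw [Finset.prod_insert (fun h => hnotmem (Finset.mem_of_mem_erase h))]
    ring

lemma pi_singleton_toReal {n : ℕ} (G : Measure W) [IsProbabilityMeasure G] (w : Fin n → W) :
    ((Measure.pi fun _ : Fin n => G) {w}).toReal = ∏ t, (G {w t}).toReal := by
  have : ({w} : Set (Fin n → W)) = Set.pi Set.univ fun i => {w i} :=
    (Set.univ_pi_singleton w).symm
  rw [this, Measure.pi_pi, ENNReal.toReal_prod]

lemma He_pi {n : ℕ} (G : Measure W) [IsProbabilityMeasure G] :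
    He (Measure.pi fun _ : Fin n => G) = n * He G := by
  classical
  have hsum : ∑ x : W, (G {x}).toReal = 1 := sum_atoms G
  rw [He]
  calc ∑ w : Fin n → W, Real.negMulLog (((Measure.pi fun _ : Fin n => G) {w}).toReal)
      = ∑ w : Fin n → W, ∑ t : Fin n,
          (∏ s ∈ Finset.univ.erase t, (G {w s}).toReal) * Real.negMulLog ((G {w t}).toReal) := by
        apply Finset.sum_congr rfl
        intro w _
        rw [pi_singleton_toReal, negMulLog_finset_prod]
    _ = ∑ t : Fin n, ∑ w : Fin n → W,
          (∏ s ∈ Finset.univ.erase t, (G {w s}).toReal) * Real.negMulLog ((G {w t}).toReal) :=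
        Finset.sum_comm
    _ = ∑ t : Fin n, He G := by
        apply Finset.sum_congr rfl
        intro t _
        -- rewrite as product over all coordinates of f s (w s)
        have key : ∀ w : Fin n → W,
            (∏ s ∈ Finset.univ.erase t, (G {w s}).toReal) * Real.negMulLog ((G {w t}).toReal)
            = ∏ s : Fin n, (fun s x => if s = t then Real.negMulLog ((G {x}).toReal)
                else (G {x}).toReal) s (w s) := by
          intro w
          rw [← Finset.prod_erase_mul Finset.univ _ (Finset.mem_univ t)]
          simp only [if_pos rfl]
          congr 1
          apply Finset.prod_congr rfl
          intro s hs
          rw [if_neg (Finset.ne_of_mem_erase hs)]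
        rw [Finset.sum_congr rfl (fun w _ => key w)]
        have hps := Finset.prod_univ_sum (fun _ : Fin n => (Finset.univ : Finset W))
          (fun s x => if s = t then Real.negMulLog ((G {x}).toReal) else (G {x}).toReal)
        rw [Fintype.piFinset_univ] at hps
        rw [← hps]
        rw [Finset.prod_eq_single t ?h1 ?h2]
        · rw [Finset.sum_congr rfl (fun x _ => by rw [if_pos rfl])]; rfl
        case h1 =>
          intro s _ hs
          rw [Finset.sum_congr rfl (fun x _ => by rw [if_neg hs])]
          exact hsum
        case h2 =>
          intro h
          exact absurd (Finset.mem_univ t) h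
    _ = n * He G := by rw [Finset.sum_const, Finset.card_univ, Fintype.card_fin, nsmul_eq_mul]


end Pi

section PiEval
variable {V : Type*} [MeasurableSpace V]

lemma pi_map_eval' {n : ℕ} (G : Measure V) [IsProbabilityMeasure G] (t : Fin n) :
    (Measure.pi fun _ : Fin n => G).map (fun w => w t) = G := by


  classical
  ext s hs
  rw [Measure.map_apply (measurable_pi_apply t) hs]
  have hset : (fun w : Fin n → V => w t) ⁻¹' s
      = Set.pi Set.univ (Function.update (fun _ : Fin n => Set.univ) t s) := by
    ext w
    simp only [Set.mem_preimage, Set.mem_univ_pi, Function.update_apply]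
    constructor
    · intro h i
      by_cases hi : i = t
      · subst hi; simp [h]
      · simp [hi]
    · intro h
      have := h t
      simpa using this
  rw [hset, Measure.pi_pi]
  rw [Finset.prod_eq_single t ?h1 ?h2]
  · simp
  case h1 =>
    intro i _ hi
    simp [Function.update_apply, hi]
  case h2 =>
    intro h; exact absurd (Finset.mem_univ t) h



end PiEval

end S4

open S4

/-- Nearly-i.i.d. lemma: if the law Π of W^n is ε-close in TV to an i.i.d. product Γ^{⊗n}
with ε < 1/4, then (1/n) Σ_t I(W_t ; W^{t−1}) ≤ 4ε(log|W| + log(1/ε)). -/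
theorem stmt_4 {W : Type*} [Fintype W] [MeasurableSpace W] [MeasurableSingletonClass W]
    {n : ℕ} (hn : 0 < n)
    (P : Measure (Fin n → W)) [IsProbabilityMeasure P]
    (G : Measure W) [IsProbabilityMeasure G]
    (ε : ℝ) (hε0 : 0 < ε) (hε : ε < 1 / 4)
    (hTV : tvDist P (Measure.pi fun _ => G) ≤ ε) :
    (1 / n : ℝ) * ∑ t : Fin n,
        mutualInfo (P.map fun w => (w t, fun i : Fin t => w (Fin.castLE t.2.le i)))
      ≤ 4 * ε * (Real.logb 2 (Fintype.card W) + Real.logb 2 (1 / ε)) := by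
  classical
  set L := Real.log 2 with hLdef
  have hL : 0 < L := Real.log_pos one_lt_two
  set Pi : Measure (Fin n → W) := Measure.pi fun _ => G with hPidef
  -- measurability helpers
  have hrst : ∀ (k : ℕ) (h : k ≤ n),
      Measurable (fun (w : Fin n → W) (i : Fin k) => w (Fin.castLE h i)) :=
    fun k h => measurable_pi_lambda _ fun i => measurable_pi_apply _
  have hev : ∀ t : Fin n, Measurable (fun w : Fin n → W => w t) :=
    fun t => measurable_pi_apply t
  have hpair : ∀ t : Fin n,
      Measurable (fun w : Fin n → W => (w t, fun i : Fin t => w (Fin.castLE t.2.le i))) :=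
    fun t => (hev t).prodMk (measurable_pi_lambda _ fun i => measurable_pi_apply _)
  set F : ℕ → ℝ := fun k =>
    if h : k ≤ n then He (P.map (fun w (i : Fin k) => w (Fin.castLE h i))) else 0 with hFdef
  -- mutual info identity
  have hmut : ∀ t : Fin n,
      mutualInfo (P.map fun w => (w t, fun i : Fin t => w (Fin.castLE t.2.le i)))
        = (He (P.map (fun w => w t)) + (F ↑t - F (↑t + 1))) / L := by
    intro t
    have h1 : (P.map fun w => (w t, fun i : Fin t => w (Fin.castLE t.2.le i))).map Prod.fst
        = P.map (fun w => w t) := by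
      rw [Measure.map_map measurable_fst (hpair t)]
      rfl
    have h2 : (P.map fun w => (w t, fun i : Fin t => w (Fin.castLE t.2.le i))).map Prod.snd
        = P.map (fun w (i : Fin t) => w (Fin.castLE t.2.le i)) := by
      rw [Measure.map_map measurable_snd (hpair t)]
      rfl
    have hFt : F ↑t = He (P.map (fun w (i : Fin ↑t) => w (Fin.castLE t.2.le i))) := by
      simp only [hFdef]
      rw [dif_pos t.2.le]
    -- joint entropy
    have ht1 : (↑t + 1 : ℕ) ≤ n := t.2
    set e : (Fin (↑t + 1) → W) → W × (Fin ↑t → W) :=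
      fun v => (v (Fin.last ↑t), fun i => v i.castSucc) with hedef
    have hemeas : Measurable e :=
      (measurable_pi_apply _).prodMk (measurable_pi_lambda _ fun i => measurable_pi_apply _)
    have heinj : Function.Injective e := by
      intro v v' h
      funext j
      refine Fin.lastCases ?_ ?_ j
      · exact congrArg Prod.fst h
      · intro i
        exact congrFun (congrArg Prod.snd h) i
    have hcomp : e ∘ (fun w (i : Fin (↑t + 1)) => w (Fin.castLE ht1 i))
        = fun w : Fin n → W => (w t, fun i : Fin t => w (Fin.castLE t.2.le i)) := by
      funext w
      apply Prod.ext
      · exact congrArg w (Fin.ext rfl)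
      · funext i
        exact congrArg w (Fin.ext rfl)
    have h3 : He (P.map fun w => (w t, fun i : Fin t => w (Fin.castLE t.2.le i)))
        = F (↑t + 1) := by
      simp only [hFdef]
      rw [dif_pos ht1]
      rw [← hcomp, ← Measure.map_map hemeas (hrst _ ht1)]
      exact He_map_injective _ hemeas heinj
    rw [mutualInfo, h1, h2, entropy_eq, entropy_eq, entropy_eq, h3, hFt, ← hLdef]
    ring
  -- telescoping
  have htel : ∑ t : Fin n, (F ↑t - F (↑t + 1)) = F 0 - F n := by
    rw [Fin.sum_univ_eq_sum_range (fun k => F k - F (k + 1)) n]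
    exact Finset.sum_range_sub' F n
  have hF0 : F 0 = 0 := by
    simp only [hFdef]
    rw [dif_pos (Nat.zero_le n)]
    haveI : IsProbabilityMeasure (P.map (fun w (i : Fin 0) => w (Fin.castLE (Nat.zero_le n) i))) :=
      Measure.isProbabilityMeasure_map (hrst 0 (Nat.zero_le n)).aemeasurable
    exact He_unique _
  have hFn : F n = He P := by
    simp only [hFdef]
    rw [dif_pos (le_refl n)]
    have hid : (fun w (i : Fin n) => w (Fin.castLE (le_refl n) i)) = (id : (Fin n → W) → _) := by
      funext w i
      exact congrArg w (Fin.ext rfl)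
    rw [hid, Measure.map_id]
  -- sum of mutual infos
  have hsum : ∑ t : Fin n,
      mutualInfo (P.map fun w => (w t, fun i : Fin t => w (Fin.castLE t.2.le i)))
      = ((∑ t : Fin n, He (P.map (fun w => w t))) - He P) / L := by
    rw [Finset.sum_congr rfl (fun t _ => hmut t), ← Finset.sum_div, Finset.sum_add_distrib,
      htel, hF0, hFn]
    ring_nf
  -- bounds
  haveI hPt : ∀ t : Fin n, IsProbabilityMeasure (P.map (fun w => w t)) :=
    fun t => Measure.isProbabilityMeasure_map (hev t).aemeasurable
  have hcardW : (1:ℝ) ≤ Fintype.card W := by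
    have : Nonempty W := by
      rcases isEmpty_or_nonempty W with h | h
      · exfalso
        haveI hie : IsEmpty (Fin n → W) := by
          haveI : Nonempty (Fin n) := ⟨⟨0, hn⟩⟩
          exact Function.isEmpty (β := W) (fun f => f (Classical.arbitrary (Fin n)))
        have h1 := measure_univ (μ := P)
        rw [Set.univ_eq_empty_iff.2 hie] at h1
        simp at h1
      · exact h
    exact_mod_cast Fintype.card_pos
  have hlogW : 0 ≤ Real.log (Fintype.card W) := Real.log_nonneg hcardW
  have hlogε : 0 ≤ Real.log (1/ε) := by
    apply Real.log_nonneg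
    rw [le_div_iff₀ hε0]
    linarith
  have hεhalf : 2 * ε ≤ 1/2 := by linarith
  -- per-coordinate bound
  have hbd_t : ∀ t : Fin n, He (P.map (fun w => w t)) - He G
      ≤ 2*ε*Real.log (Fintype.card W) + 2*ε*Real.log (1/ε) := by
    intro t
    set Pt := P.map (fun w => w t) with hPt
    set T := ∑ x : W, |(Pt {x}).toReal - (G {x}).toReal| with hT
    have hT0 : 0 ≤ T := Finset.sum_nonneg fun _ _ => abs_nonneg _
    have hT2ε : T ≤ 2*ε := by
      have h1 : T ≤ 2 * tvDist Pt G := l1_le_two_tvDist Pt G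
      have h2 : tvDist Pt G ≤ ε := by
        have : tvDist Pt G = tvDist (P.map (fun w => w t)) (Pi.map (fun w => w t)) := by
          rw [hPt]
          congr 1
          rw [hPidef, pi_map_eval']
        rw [this]
        exact le_trans (tvDist_map_le P Pi (hev t)) hTV
      linarith
    have hdiff := He_diff_le Pt G (by linarith)
    rw [← hT] at hdiff
    have hb1 : T * Real.log (Fintype.card W) ≤ 2*ε*Real.log (Fintype.card W) := by
      apply mul_le_mul_of_nonneg_right hT2ε hlogW
    have hb2 : Real.negMulLog T ≤ 2*ε*Real.log (1/ε) := negMulLog_le_eps hε0 hε hT0 hT2ε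
    have := abs_le.1 hdiff
    linarith [this.2]
  -- joint bound
  have hbd_joint : He Pi - He P ≤ 2*ε*(n * Real.log (Fintype.card W)) + 2*ε*Real.log (1/ε) := by
    set T := ∑ x : Fin n → W, |(Pi {x}).toReal - (P {x}).toReal| with hT
    have hT0 : 0 ≤ T := Finset.sum_nonneg fun _ _ => abs_nonneg _
    have hT2ε : T ≤ 2*ε := by
      have h1 : T ≤ 2 * tvDist Pi P := l1_le_two_tvDist Pi P
      have h2 : tvDist Pi P ≤ ε := by
        have : tvDist Pi P = tvDist P Pi := by
          rw [tvDist, tvDist]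
          congr 1
          funext s
          rw [abs_sub_comm]
        rw [this]; exact hTV
      linarith
    have hdiff := He_diff_le Pi P (by linarith)
    rw [← hT] at hdiff
    have hcard : (Fintype.card (Fin n → W) : ℝ) = (Fintype.card W : ℝ) ^ n := by
      rw [Fintype.card_fun, Fintype.card_fin]
      push_cast
      ring
    have hlogcard : Real.log (Fintype.card (Fin n → W)) = n * Real.log (Fintype.card W) := by
      rw [hcard, Real.log_pow]
    rw [hlogcard] at hdiff
    have hb1 : T * (n * Real.log (Fintype.card W)) ≤ 2*ε*(n * Real.log (Fintype.card W)) := by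
      apply mul_le_mul_of_nonneg_right hT2ε
      positivity
    have hb2 : Real.negMulLog T ≤ 2*ε*Real.log (1/ε) := negMulLog_le_eps hε0 hε hT0 hT2ε
    have := abs_le.1 hdiff
    linarith [this.2]
  -- combine
  have hHePi : He Pi = n * He G := He_pi G
  have hmain : (∑ t : Fin n, He (P.map (fun w => w t))) - He P
      ≤ n * (4*ε*Real.log (Fintype.card W) + 4*ε*Real.log (1/ε)) := by
    have e1 : (∑ t : Fin n, He (P.map (fun w => w t))) - He P
        = (∑ t : Fin n, (He (P.map (fun w => w t)) - He G)) + (He Pi - He P) := by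
      rw [Finset.sum_sub_distrib, Finset.sum_const, Finset.card_univ, Fintype.card_fin,
        hHePi, nsmul_eq_mul]
      ring
    rw [e1]
    have e2 : ∑ t : Fin n, (He (P.map (fun w => w t)) - He G)
        ≤ n * (2*ε*Real.log (Fintype.card W) + 2*ε*Real.log (1/ε)) := by
      calc ∑ t : Fin n, (He (P.map (fun w => w t)) - He G)
          ≤ ∑ _t : Fin n, (2*ε*Real.log (Fintype.card W) + 2*ε*Real.log (1/ε)) :=
            Finset.sum_le_sum fun t _ => hbd_t t
        _ = n * (2*ε*Real.log (Fintype.card W) + 2*ε*Real.log (1/ε)) := by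
            rw [Finset.sum_const, Finset.card_univ, Fintype.card_fin, nsmul_eq_mul]
    have hn1 : (1:ℝ) ≤ n := by exact_mod_cast hn
    have e3 : 2*ε*Real.log (1/ε) ≤ n * (2*ε*Real.log (1/ε)) := by
      nlinarith [mul_nonneg (mul_nonneg (by linarith : (0:ℝ) ≤ 2) hε0.le) hlogε]
    nlinarith [e2, hbd_joint, e3]
  -- final conversion
  rw [hsum]
  have hrhs : 4 * ε * (Real.logb 2 (Fintype.card W) + Real.logb 2 (1 / ε))
      = (4*ε*Real.log (Fintype.card W) + 4*ε*Real.log (1/ε)) / L := by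
    rw [Real.logb, Real.logb, hLdef]
    field_simp
  rw [hrhs]
  have hn0 : (0:ℝ) < n := by exact_mod_cast hn
  set X := (∑ t : Fin n, He (P.map (fun w => w t))) - He P with hX
  set Y := 4*ε*Real.log (Fintype.card W) + 4*ε*Real.log (1/ε) with hY
  have hstep : 1/(n:ℝ) * (X/L) = X / (n*L) := by
    field_simp
  rw [hstep, div_le_div_iff₀ (by positivity) hL]
  nlinarith [hmain, hL]
end

section
/- Let W be a finite alphabet, Π a probability distribution on W^n with ‖Π − Γ^{⊗n}‖_TV ≤ ε < 1/4 for some distribution Γ on W, and let T be uniformly distributed on {1,…,n} and independent of W^n ∼ Π. Then I(W_T ; T) ≤ 4ε(log|W| + log(1/ε)). -/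
open MeasureTheory Real

/-- The uniform distribution on a finite type. -/
noncomputable def unif (α : Type*) [Fintype α] [MeasurableSpace α] : Measure α :=
  (Fintype.card α : ENNReal)⁻¹ • Measure.count


section AuxLemmas
open Finset


lemma aux_one_le_log_four : 1 ≤ Real.log 4 := by
  have h2 : (0.6931471803:ℝ) < Real.log 2 := Real.log_two_gt_d9
  have : Real.log 4 = 2 * Real.log 2 := by
    rw [show (4:ℝ) = 2^2 by norm_num, Real.log_pow]; push_cast; ring
  linarith

lemma aux_negMulLog_pair {a d : ℝ} (ha : 0 ≤ a) (hd : 0 ≤ d) (h1 : a + d ≤ 1)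
    (hd4 : d ≤ 1/4) :
    |Real.negMulLog a - Real.negMulLog (a + d)| ≤ Real.negMulLog d := by
  rcases eq_or_lt_of_le hd with rfl | hd0
  · simp
  have hlogd : Real.log d ≤ -1 := by
    have := Real.log_le_log (by positivity) hd4
    have h4 : Real.log (1/4) = -Real.log 4 := by
      rw [one_div, Real.log_inv]
    nlinarith [aux_one_le_log_four]
  have hηd : d ≤ Real.negMulLog d := by
    simp only [Real.negMulLog, neg_mul]
    nlinarith
  rw [abs_sub_le_iff]
  constructor
  · -- negMulLog a - negMulLog (a+d) ≤ negMulLog d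
    -- i.e. -a log a + (a+d) log (a+d) ≤ -d log d ; we show LHS ≤ d
    have key : -(a * Real.log a) + (a + d) * Real.log (a + d) ≤ d := by
      rcases eq_or_lt_of_le ha with rfl | ha0
      · simp only [Real.log_zero, mul_zero, neg_zero, zero_add]
        nlinarith [Real.log_nonpos hd (by linarith : d ≤ 1), hd0]
      · have h3 : Real.log (a + d) - Real.log a ≤ d / a := by
          have : Real.log ((a+d)/a) ≤ (a+d)/a - 1 := Real.log_le_sub_one_of_pos (by positivity)
          rw [Real.log_div (by positivity) (ne_of_gt ha0)] at this
          have : (a+d)/a - 1 = d/a := by field_simp; ring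
          linarith [Real.log_le_sub_one_of_pos (show (0:ℝ) < (a+d)/a by positivity),
            Real.log_div (show a+d ≠ 0 by positivity) (ne_of_gt ha0), this]
        have h4 : a * (Real.log (a+d) - Real.log a) ≤ d := by
          rw [div_eq_mul_inv] at h3
          calc a * (Real.log (a+d) - Real.log a) ≤ a * (d * a⁻¹) :=
                mul_le_mul_of_nonneg_left h3 ha
            _ = d := by field_simp
        have h5 : d * Real.log (a + d) ≤ 0 :=
          mul_nonpos_of_nonneg_of_nonpos hd (Real.log_nonpos (by positivity) h1)
        nlinarith
    simp only [Real.negMulLog, neg_mul]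
    nlinarith
  · -- negMulLog (a+d) - negMulLog a ≤ negMulLog d : subadditivity
    have h1' : a * Real.log a ≤ a * Real.log (a + d) := by
      rcases eq_or_lt_of_le ha with rfl | ha0
      · simp
      · exact mul_le_mul_of_nonneg_left (Real.log_le_log ha0 (by linarith)) ha
    have h2' : d * Real.log d ≤ d * Real.log (a + d) :=
      mul_le_mul_of_nonneg_left (Real.log_le_log hd0 (by linarith)) hd
    simp only [Real.negMulLog, neg_mul]
    have : (a + d) * Real.log (a + d) = a * Real.log (a+d) + d * Real.log (a+d) := by ring
    nlinarith

lemma aux_negMulLog_abs {a b : ℝ} (ha : 0 ≤ a) (ha1 : a ≤ 1) (hb : 0 ≤ b) (hb1 : b ≤ 1)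
    (hab : |a - b| ≤ 1/4) :
    |Real.negMulLog a - Real.negMulLog b| ≤ Real.negMulLog (|a - b|) := by
  rcases le_total a b with h | h
  · have : |a - b| = b - a := by rw [abs_sub_comm]; exact abs_of_nonneg (by linarith)
    rw [this]
    have := aux_negMulLog_pair ha (show 0 ≤ b - a by linarith) (by linarith)
      (by rw [this] at hab; linarith)
    simpa [show a + (b - a) = b by ring] using this
  · have : |a - b| = a - b := abs_of_nonneg (by linarith)
    rw [this]
    have := aux_negMulLog_pair hb (show 0 ≤ a - b by linarith) (by linarith)
      (by rw [this] at hab; linarith)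
    rw [abs_sub_comm]
    simpa [show b + (a - b) = a by ring] using this


-- Gibbs: max entropy
lemma aux_maxent {α : Type*} [Fintype α] (t : α → ℝ) (h0 : ∀ x, 0 ≤ t x)
    (h1 : ∑ x, t x = 1) : ∑ x, Real.negMulLog (t x) ≤ Real.log (Fintype.card α) := by
  have hne : Nonempty α := by
    by_contra h
    rw [not_nonempty_iff] at h
    simp [Finset.univ_eq_empty] at h1
  have hN : (0:ℝ) < Fintype.card α := by
    have := Fintype.card_pos_iff.mpr hne; positivity
  set N : ℝ := (Fintype.card α : ℝ) with hNdef
  have key : ∀ x, Real.negMulLog (t x) ≤ t x * Real.log N + (N⁻¹ - t x) := by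
    intro x
    rcases eq_or_lt_of_le (h0 x) with h | h
    · rw [← h]; simp; positivity
    · have hlog : Real.log ((t x * N)⁻¹) ≤ (t x * N)⁻¹ - 1 :=
        Real.log_le_sub_one_of_pos (by positivity)
      rw [Real.log_inv, Real.log_mul (ne_of_gt h) (ne_of_gt hN)] at hlog
      have := mul_le_mul_of_nonneg_left hlog (le_of_lt h)
      have hinv : t x * (t x * N)⁻¹ = N⁻¹ := by field_simp
      simp only [Real.negMulLog, neg_mul]
      nlinarith
  calc ∑ x, Real.negMulLog (t x) ≤ ∑ x, (t x * Real.log N + (N⁻¹ - t x)) :=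
        Finset.sum_le_sum fun x _ => key x
    _ = (∑ x, t x) * Real.log N + (Fintype.card α : ℝ) * N⁻¹ - ∑ x, t x := by
        rw [Finset.sum_add_distrib, Finset.sum_sub_distrib, ← Finset.sum_mul]
        simp [Finset.sum_const, Finset.card_univ]
        ring
    _ = Real.log N := by
        rw [h1]
        field_simp
        rw [← hNdef]; ring

lemma aux_sum_delta {α : Type*} [Fintype α] (d : α → ℝ) (h0 : ∀ x, 0 ≤ d x) :
    ∑ x, Real.negMulLog (d x) ≤
      (∑ x, d x) * Real.log (Fintype.card α) + Real.negMulLog (∑ x, d x) := by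
  set S := ∑ x, d x with hS
  rcases eq_or_lt_of_le (Finset.sum_nonneg fun x _ => h0 x : (0:ℝ) ≤ S) with h | hS0
  · have hz : ∀ x ∈ Finset.univ, d x = 0 :=
      (Finset.sum_eq_zero_iff_of_nonneg fun x _ => h0 x).mp h.symm
    have : ∑ x, Real.negMulLog (d x) = 0 :=
      Finset.sum_eq_zero fun x hx => by rw [hz x hx]; simp
    rw [this, hS, ← h]; simp
  · have hrw : ∀ x, Real.negMulLog (d x) =
        (d x / S) * Real.negMulLog S + S * Real.negMulLog (d x / S) := by
      intro x
      have : d x = S * (d x / S) := (mul_div_cancel₀ (d x) (ne_of_gt hS0)).symm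
      calc Real.negMulLog (d x) = Real.negMulLog (S * (d x / S)) := by rw [← this]
        _ = _ := Real.negMulLog_mul S (d x / S)
    calc ∑ x, Real.negMulLog (d x)
        = (∑ x, d x / S) * Real.negMulLog S + S * ∑ x, Real.negMulLog (d x / S) := by
          simp only [hrw, Finset.sum_add_distrib, ← Finset.sum_mul, Finset.mul_sum]
      _ ≤ 1 * Real.negMulLog S + S * Real.log (Fintype.card α) := by
          have hsum1 : ∑ x, d x / S = 1 := by
            rw [← Finset.sum_div]; exact div_self (ne_of_gt hS0)
          rw [hsum1]
          have := aux_maxent (fun x => d x / S) (fun x => div_nonneg (h0 x) (le_of_lt hS0)) hsum1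
          nlinarith
      _ = S * Real.log (Fintype.card α) + Real.negMulLog S := by ring

lemma aux_eta_S_le {S ε : ℝ} (hS0 : 0 ≤ S) (hSe : S ≤ 2*ε) (hε0 : 0 < ε) (hε : ε < 1/4) :
    Real.negMulLog S ≤ 2*ε*Real.log (1/ε) := by
  have hlog2 : (0.6931471803:ℝ) < Real.log 2 := Real.log_two_gt_d9
  have he : (2.7182818283:ℝ) < Real.exp 1 := Real.exp_one_gt_d9
  have hloge : Real.log (1/ε) = -Real.log ε := by rw [one_div, Real.log_inv]
  have h2e : Real.log (1/(2*ε)) = -Real.log 2 - Real.log ε := by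
    rw [one_div, Real.log_inv, Real.log_mul (by norm_num) (ne_of_gt hε0)]; ring
  have h2e0 : 0 ≤ Real.log (1/(2*ε)) := by
    apply Real.log_nonneg; rw [le_one_div (by norm_num) (by linarith)]; linarith
  rcases eq_or_lt_of_le hS0 with rfl | hS0'
  · simp only [Real.negMulLog_zero]
    have : 0 ≤ Real.log (1/ε) := by
      apply Real.log_nonneg; rw [le_one_div (by norm_num) hε0]; linarith
    positivity
  · -- S > 0
    have hsplit : Real.negMulLog S = S * Real.log (1/(2*ε)) + S * Real.log (2*ε/S) := by
      simp only [Real.negMulLog, neg_mul]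
      rw [h2e, Real.log_div (by positivity) (ne_of_gt hS0'),
        Real.log_mul (by norm_num) (ne_of_gt hε0)]
      ring
    have h1 : S * Real.log (1/(2*ε)) ≤ 2*ε*Real.log (1/(2*ε)) :=
      mul_le_mul_of_nonneg_right hSe h2e0
    have h2 : S * Real.log (2*ε/S) ≤ 2*ε / Real.exp 1 := by
      have hx : (0:ℝ) < 2*ε/S/Real.exp 1 := by positivity
      have := Real.log_le_sub_one_of_pos hx
      rw [Real.log_div (by positivity) (ne_of_gt (Real.exp_pos 1)), Real.log_exp] at this
      -- log(2ε/S) - 1 ≤ 2ε/(S e) - 1  ⇒ log(2ε/S) ≤ 2ε/(S e)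
      have h3 : Real.log (2*ε/S) ≤ 2*ε/S/Real.exp 1 := by linarith
      calc S * Real.log (2*ε/S) ≤ S * (2*ε/S/Real.exp 1) :=
            mul_le_mul_of_nonneg_left h3 (le_of_lt hS0')
        _ = 2*ε / Real.exp 1 := by field_simp
    have h4 : 2*ε/Real.exp 1 ≤ 2*ε*Real.log 2 := by
      have key : (1:ℝ) ≤ Real.log 2 * Real.exp 1 := by nlinarith
      rw [div_le_iff₀ (Real.exp_pos 1)]
      nlinarith [mul_le_mul_of_nonneg_left key (by linarith : (0:ℝ) ≤ 2*ε)]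
    calc Real.negMulLog S ≤ 2*ε*Real.log (1/(2*ε)) + 2*ε*Real.log 2 := by
          rw [hsplit]; linarith
      _ = 2*ε*Real.log (1/ε) := by rw [h2e, hloge]; ring


lemma aux_entropy_diff {α : Type*} [Fintype α] (p q : α → ℝ) (ε : ℝ)
    (hp0 : ∀ x, 0 ≤ p x) (hp1 : ∑ x, p x = 1)
    (hq0 : ∀ x, 0 ≤ q x) (hq1 : ∑ x, q x = 1)
    (hpt : ∀ x, |p x - q x| ≤ ε) (hsum : ∑ x, |p x - q x| ≤ 2*ε)
    (hε0 : 0 < ε) (hε : ε < 1/4) :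
    |∑ x, Real.negMulLog (p x) - ∑ x, Real.negMulLog (q x)|
      ≤ 2*ε*(Real.log (Fintype.card α) + Real.log (1/ε)) := by
  have hne : Nonempty α := by
    by_contra h
    rw [not_nonempty_iff] at h
    simp [Finset.univ_eq_empty] at hp1
  have hlogN : 0 ≤ Real.log (Fintype.card α) := by
    apply Real.log_nonneg
    exact_mod_cast Fintype.card_pos_iff.mpr hne
  have hp1' : ∀ x, p x ≤ 1 := fun x => hp1 ▸ Finset.single_le_sum (fun y _ => hp0 y) (Finset.mem_univ x)
  have hq1' : ∀ x, q x ≤ 1 := fun x => hq1 ▸ Finset.single_le_sum (fun y _ => hq0 y) (Finset.mem_univ x)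
  have step1 : |∑ x, Real.negMulLog (p x) - ∑ x, Real.negMulLog (q x)|
      ≤ ∑ x, Real.negMulLog (|p x - q x|) := by
    rw [← Finset.sum_sub_distrib]
    refine (Finset.abs_sum_le_sum_abs _ _).trans (Finset.sum_le_sum fun x _ => ?_)
    exact aux_negMulLog_abs (hp0 x) (hp1' x) (hq0 x) (hq1' x) ((hpt x).trans (by linarith))
  have step2 := aux_sum_delta (fun x => |p x - q x|) (fun x => abs_nonneg _)
  have hS0 : (0:ℝ) ≤ ∑ x, |p x - q x| := Finset.sum_nonneg fun x _ => abs_nonneg _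
  have step3 : (∑ x, |p x - q x|) * Real.log (Fintype.card α)
      ≤ 2*ε * Real.log (Fintype.card α) := mul_le_mul_of_nonneg_right hsum hlogN
  have step4 := aux_eta_S_le hS0 hsum hε0 hε
  calc |∑ x, Real.negMulLog (p x) - ∑ x, Real.negMulLog (q x)|
      ≤ ∑ x, Real.negMulLog (|p x - q x|) := step1
    _ ≤ (∑ x, |p x - q x|) * Real.log (Fintype.card α)
        + Real.negMulLog (∑ x, |p x - q x|) := step2
    _ ≤ 2*ε*Real.log (Fintype.card α) + 2*ε*Real.log (1/ε) := add_le_add step3 step4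
    _ = 2*ε*(Real.log (Fintype.card α) + Real.log (1/ε)) := by ring

lemma entropy_eq {β : Type*} [Fintype β] [MeasurableSpace β] (μ : Measure β) :
    entropy μ = (∑ x, Real.negMulLog ((μ {x}).toReal)) / Real.log 2 := by
  rw [entropy, Finset.sum_div, ← Finset.sum_neg_distrib]
  refine Finset.sum_congr rfl fun x _ => ?_
  rw [Real.negMulLog, Real.logb]
  ring


end AuxLemmas

/-- If Π is ε-close in TV to an i.i.d. product Γ^{⊗n} with ε < 1/4, and T is an
independent uniform index, then I(W_T ; T) ≤ 4ε(log|W| + log(1/ε)). -/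
theorem stmt_5 {W : Type*} [Fintype W] [MeasurableSpace W] [MeasurableSingletonClass W]
    {n : ℕ} (hn : 0 < n)
    (P : Measure (Fin n → W)) [IsProbabilityMeasure P]
    (G : Measure W) [IsProbabilityMeasure G]
    (ε : ℝ) (hε0 : 0 < ε) (hε : ε < 1 / 4)
    (hTV : tvDist P (Measure.pi fun _ => G) ≤ ε) :
    mutualInfo ((P.prod (unif (Fin n))).map fun p => (p.1 p.2, p.2))
      ≤ 4 * ε * (Real.logb 2 (Fintype.card W) + Real.logb 2 (1 / ε)) := by
  classical
  have hWmeas : ∀ A : Set W, MeasurableSet A := fun A => (Set.toFinite A).measurableSet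
  have hn0 : (n : ENNReal) ≠ 0 := Nat.cast_ne_zero.mpr hn.ne'
  have hnR : (0:ℝ) < n := by exact_mod_cast hn
  set U := unif (Fin n) with hUdef
  have hUsing : ∀ t : Fin n, U {t} = (n : ENNReal)⁻¹ := by
    intro t
    rw [hUdef, unif, Measure.smul_apply, Measure.count_singleton, smul_eq_mul, mul_one,
      Fintype.card_fin]
  have hUprob : IsProbabilityMeasure U := by
    constructor
    rw [hUdef, unif, Measure.smul_apply, Measure.count_univ, smul_eq_mul, Fintype.card_fin]
    rw [ENat.card_eq_coe_fintype_card, Fintype.card_fin, ENat.toENNReal_coe]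
    exact ENNReal.inv_mul_cancel hn0 (ENNReal.natCast_ne_top n)
  have hev : Measurable fun p : (Fin n → W) × Fin n => p.1 p.2 := by
    intro A hA
    have hpre : (fun p : (Fin n → W) × Fin n => p.1 p.2) ⁻¹' A
        = ⋃ t : Fin n, ((fun x : Fin n → W => x t) ⁻¹' A) ×ˢ ({t} : Set (Fin n)) := by
      ext ⟨x, s⟩
      simp only [Set.mem_preimage, Set.mem_iUnion, Set.mem_prod, Set.mem_singleton_iff]
      constructor
      · intro h; exact ⟨s, h, rfl⟩
      · rintro ⟨t, h, rfl⟩; exact h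
    rw [hpre]
    exact MeasurableSet.iUnion fun t =>
      (measurable_pi_apply t hA).prod (measurableSet_singleton t)
  have hf : Measurable fun p : (Fin n → W) × Fin n => (p.1 p.2, p.2) :=
    hev.prodMk measurable_snd
  set J := (P.prod U).map (fun p : (Fin n → W) × Fin n => (p.1 p.2, p.2)) with hJdef
  set c : Fin n → W → ℝ := fun t w => (P {x | x t = w}).toReal with hcdef
  have hc0 : ∀ t w, 0 ≤ c t w := fun t w => ENNReal.toReal_nonneg
  have hpre1 : ∀ (w : W) (t : Fin n),
      (fun p : (Fin n → W) × Fin n => (p.1 p.2, p.2)) ⁻¹' {(w, t)}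
        = {x : Fin n → W | x t = w} ×ˢ ({t} : Set (Fin n)) := by
    intro w t
    ext ⟨x, s⟩
    simp only [Set.mem_preimage, Set.mem_singleton_iff, Prod.mk.injEq, Set.mem_prod,
      Set.mem_setOf_eq]
    constructor
    · rintro ⟨h1, rfl⟩; exact ⟨h1, rfl⟩
    · rintro ⟨h1, rfl⟩; exact ⟨h1, rfl⟩
  have hJsing : ∀ w t, J {(w, t)} = P {x | x t = w} * (n : ENNReal)⁻¹ := by
    intro w t
    rw [hJdef, Measure.map_apply hf
      (Set.singleton_prod_singleton ▸ ((hWmeas {w}).prod (measurableSet_singleton t)))]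
    rw [hpre1 w t, Measure.prod_prod, hUsing t]
  have hJsingR : ∀ w t, (J {(w, t)}).toReal = c t w * (n:ℝ)⁻¹ := by
    intro w t
    rw [hJsing w t, ENNReal.toReal_mul, ENNReal.toReal_inv, ENNReal.toReal_natCast]
  -- sums of c
  have hPev : ∀ (t : Fin n) (s : Finset W),
      ∑ w ∈ s, P ((fun x : Fin n → W => x t) ⁻¹' {w}) = P ((fun x : Fin n → W => x t) ⁻¹' ↑s) :=
    fun t s => sum_measure_preimage_singleton s (fun w _ => measurable_pi_apply t (hWmeas {w}))
  have hPevR : ∀ (t : Fin n) (s : Finset W),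
      (P ((fun x : Fin n → W => x t) ⁻¹' ↑s)).toReal = ∑ w ∈ s, c t w := by
    intro t s
    rw [← hPev t s, ENNReal.toReal_sum (fun w _ => measure_ne_top P _)]
    rfl
  have hcsum : ∀ t, ∑ w, c t w = 1 := by
    intro t
    have := hPevR t Finset.univ
    rw [Finset.coe_univ, Set.preimage_univ, measure_univ, ENNReal.toReal_one] at this
    exact this.symm
  -- G side
  set Gpi := (Measure.pi fun _ : Fin n => G) with hGpidef
  have hGpiprob : IsProbabilityMeasure Gpi := by rw [hGpidef]; infer_instance
  set g : W → ℝ := fun w => (G {w}).toReal with hgdef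
  have hg0 : ∀ w, 0 ≤ g w := fun w => ENNReal.toReal_nonneg
  have hGfin : ∀ s : Finset W, (G ↑s).toReal = ∑ w ∈ s, g w := by
    intro s
    have h := sum_measure_preimage_singleton (μ := G) s (f := id) (fun w _ => hWmeas _)
    simp only [Set.preimage_id] at h
    rw [← h, ENNReal.toReal_sum (fun w _ => measure_ne_top G _)]
  have hgsum : ∑ w, g w = 1 := by
    have := hGfin Finset.univ
    rw [Finset.coe_univ, measure_univ, ENNReal.toReal_one] at this
    exact this.symm
  have hGpiev : ∀ (t : Fin n) (A : Set W), Gpi ((fun x : Fin n → W => x t) ⁻¹' A) = G A := by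
    intro t A
    have hset : (fun x : Fin n → W => x t) ⁻¹' A
        = Set.pi Set.univ (Function.update (fun _ : Fin n => (Set.univ : Set W)) t A) := by
      ext x
      simp only [Set.mem_preimage, Set.mem_pi, Set.mem_univ, forall_true_left, true_implies]
      constructor
      · intro h i
        by_cases hi : i = t
        · subst hi; simpa using h
        · simp [Function.update_of_ne hi]
      · intro h
        have := h t
        simpa using this
    rw [hset, hGpidef, Measure.pi_pi]
    rw [Finset.prod_eq_single_of_mem t (Finset.mem_univ t)
      (fun b _ hb => by rw [Function.update_of_ne hb]; exact measure_univ)]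
    rw [Function.update_self]
  -- TV facts
  have hbdd : BddAbove (Set.range fun s : {s : Set (Fin n → W) // MeasurableSet s} =>
      |(P s.1).toReal - (Gpi s.1).toReal|) := by
    refine ⟨1, ?_⟩
    rintro r ⟨s, rfl⟩
    have h1 : (P s.1).toReal ≤ 1 := by
      rw [← ENNReal.toReal_one]
      exact ENNReal.toReal_mono ENNReal.one_ne_top prob_le_one
    have h2 : (Gpi s.1).toReal ≤ 1 := by
      rw [← ENNReal.toReal_one]
      exact ENNReal.toReal_mono ENNReal.one_ne_top prob_le_one
    have h3 : (0:ℝ) ≤ (P s.1).toReal := ENNReal.toReal_nonneg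
    have h4 : (0:ℝ) ≤ (Gpi s.1).toReal := ENNReal.toReal_nonneg
    rw [abs_sub_le_iff]
    constructor <;> linarith
  have hTVset : ∀ B : Set (Fin n → W), MeasurableSet B →
      |(P B).toReal - (Gpi B).toReal| ≤ ε := by
    intro B hB
    exact le_trans (le_ciSup hbdd ⟨B, hB⟩) hTV
  have hTVfin : ∀ (t : Fin n) (s : Finset W), |∑ w ∈ s, c t w - ∑ w ∈ s, g w| ≤ ε := by
    intro t s
    have hB := hTVset ((fun x : Fin n → W => x t) ⁻¹' ↑s) (measurable_pi_apply t (hWmeas _))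
    rw [hPevR t s, hGpiev t ↑s, hGfin s] at hB
    exact hB
  have hpt : ∀ t w, |c t w - g w| ≤ ε := by
    intro t w
    simpa using hTVfin t {w}
  have habs : ∀ t, ∑ w, |c t w - g w| ≤ 2 * ε := by
    intro t
    rw [← Finset.sum_filter_add_sum_filter_not Finset.univ (fun w => g w ≤ c t w)]
    have e1 : ∑ w ∈ Finset.univ.filter (fun w => g w ≤ c t w), |c t w - g w|
        = ∑ w ∈ Finset.univ.filter (fun w => g w ≤ c t w), (c t w - g w) := by
      refine Finset.sum_congr rfl fun w hw => ?_
      rw [Finset.mem_filter] at hw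
      exact abs_of_nonneg (by linarith [hw.2])
    have e2 : ∑ w ∈ Finset.univ.filter (fun w => ¬ (g w ≤ c t w)), |c t w - g w|
        = ∑ w ∈ Finset.univ.filter (fun w => ¬ (g w ≤ c t w)), (g w - c t w) := by
      refine Finset.sum_congr rfl fun w hw => ?_
      rw [Finset.mem_filter] at hw
      rw [abs_sub_comm]
      exact abs_of_nonneg (by push_neg at hw; linarith [hw.2])
    rw [e1, e2, Finset.sum_sub_distrib, Finset.sum_sub_distrib]
    have k1 := le_trans (le_abs_self _) (hTVfin t (Finset.univ.filter (fun w => g w ≤ c t w)))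
    have k2 := le_trans (neg_le_abs _) (hTVfin t (Finset.univ.filter (fun w => ¬ (g w ≤ c t w))))
    linarith
  -- mixture
  set m : W → ℝ := fun w => (n:ℝ)⁻¹ * ∑ t, c t w with hmdef
  have hm0 : ∀ w, 0 ≤ m w := fun w => by
    have : 0 ≤ ∑ t, c t w := Finset.sum_nonneg fun t _ => hc0 t w
    positivity
  have hmsum : ∑ w, m w = 1 := by
    rw [hmdef]
    rw [← Finset.mul_sum, Finset.sum_comm]
    rw [Finset.sum_congr rfl (fun t (_ : t ∈ Finset.univ) => hcsum t)]
    rw [Finset.sum_const, Finset.card_univ, Fintype.card_fin, nsmul_eq_mul, mul_one]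
    exact inv_mul_cancel₀ (ne_of_gt hnR)
  have hmg : ∀ w, m w - g w = (n:ℝ)⁻¹ * ∑ t, (c t w - g w) := by
    intro w
    rw [hmdef, Finset.sum_sub_distrib, Finset.sum_const, Finset.card_univ, Fintype.card_fin,
      nsmul_eq_mul, mul_sub]
    have hg' : ((n:ℝ))⁻¹ * ((n:ℝ) * g w) = g w := by field_simp
    rw [hg']
  have hmpt : ∀ w, |m w - g w| ≤ ε := by
    intro w
    rw [hmg w, abs_mul, abs_inv, Nat.abs_cast]
    calc (n:ℝ)⁻¹ * |∑ t, (c t w - g w)| ≤ (n:ℝ)⁻¹ * ∑ t, |c t w - g w| := by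
          apply mul_le_mul_of_nonneg_left (Finset.abs_sum_le_sum_abs _ _) (by positivity)
      _ ≤ (n:ℝ)⁻¹ * ∑ t : Fin n, ε := by
          apply mul_le_mul_of_nonneg_left (Finset.sum_le_sum fun t _ => hpt t w) (by positivity)
      _ = ε := by
          rw [Finset.sum_const, Finset.card_univ, Fintype.card_fin, nsmul_eq_mul]
          field_simp
  have hmabs : ∑ w, |m w - g w| ≤ 2 * ε := by
    calc ∑ w, |m w - g w| ≤ ∑ w, (n:ℝ)⁻¹ * ∑ t, |c t w - g w| := by
          refine Finset.sum_le_sum fun w _ => ?_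
          rw [hmg w, abs_mul, abs_inv, Nat.abs_cast]
          exact mul_le_mul_of_nonneg_left (Finset.abs_sum_le_sum_abs _ _) (by positivity)
      _ = (n:ℝ)⁻¹ * ∑ t, ∑ w, |c t w - g w| := by
          rw [← Finset.mul_sum, Finset.sum_comm]
      _ ≤ (n:ℝ)⁻¹ * ∑ t : Fin n, 2 * ε := by
          apply mul_le_mul_of_nonneg_left (Finset.sum_le_sum fun t _ => habs t) (by positivity)
      _ = 2 * ε := by
          rw [Finset.sum_const, Finset.card_univ, Fintype.card_fin, nsmul_eq_mul]
          field_simp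
  -- entropies
  have hlog2pos : (0:ℝ) < Real.log 2 := Real.log_pos one_lt_two
  have hsndmap : J.map Prod.snd = U := by
    rw [hJdef, Measure.map_map measurable_snd hf]
    have hcomp : (Prod.snd ∘ fun p : (Fin n → W) × Fin n => (p.1 p.2, p.2))
        = (Prod.snd : ((Fin n → W) × Fin n) → Fin n) := rfl
    rw [hcomp, Measure.map_snd_prod, measure_univ, one_smul]
  have hUsingR : ∀ t : Fin n, (U {t}).toReal = (n:ℝ)⁻¹ := by
    intro t
    rw [hUsing t, ENNReal.toReal_inv, ENNReal.toReal_natCast]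
  have hEsnd : entropy (J.map Prod.snd) = Real.log n / Real.log 2 := by
    rw [hsndmap, entropy_eq]
    rw [Finset.sum_congr rfl (fun t (_ : t ∈ Finset.univ) => by rw [hUsingR t])]
    rw [Finset.sum_const, Finset.card_univ, Fintype.card_fin, nsmul_eq_mul]
    congr 1
    rw [Real.negMulLog, Real.log_inv]
    field_simp
  have hfsting : ∀ w : W, ((J.map Prod.fst) {w}).toReal = m w := by
    intro w
    rw [hJdef, Measure.map_map measurable_fst hf]
    have hcomp : (Prod.fst ∘ fun p : (Fin n → W) × Fin n => (p.1 p.2, p.2))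
        = fun p : (Fin n → W) × Fin n => p.1 p.2 := rfl
    rw [hcomp, Measure.map_apply hev (hWmeas {w})]
    have hpre2 : (fun p : (Fin n → W) × Fin n => p.1 p.2) ⁻¹' {w}
        = ⋃ t : Fin n, ({x : Fin n → W | x t = w} ×ˢ ({t} : Set (Fin n))) := by
      ext ⟨x, s⟩
      simp only [Set.mem_preimage, Set.mem_singleton_iff, Set.mem_iUnion, Set.mem_prod,
        Set.mem_setOf_eq]
      constructor
      · intro h; exact ⟨s, h, rfl⟩
      · rintro ⟨t, h, rfl⟩; exact h
    have hdisj : Pairwise (Function.onFun Disjoint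
        fun t : Fin n => ({x : Fin n → W | x t = w} ×ˢ ({t} : Set (Fin n)))) := by
      intro i j hij
      simp only [Function.onFun]
      rw [Set.disjoint_left]
      rintro ⟨x, s⟩ h1 h2
      rw [Set.mem_prod] at h1 h2
      exact hij (h1.2.symm.trans h2.2)
    have hmeas2 : ∀ t : Fin n,
        MeasurableSet ({x : Fin n → W | x t = w} ×ˢ ({t} : Set (Fin n))) := by
      intro t
      have e : {x : Fin n → W | x t = w} = (fun x : Fin n → W => x t) ⁻¹' {w} := rfl
      rw [e]
      exact (measurable_pi_apply t (hWmeas {w})).prod (measurableSet_singleton t)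
    rw [hpre2, measure_iUnion hdisj hmeas2, tsum_fintype]
    rw [ENNReal.toReal_sum (fun t _ => measure_ne_top _ _)]
    have hterm : ∀ t : Fin n,
        ((P.prod U) ({x : Fin n → W | x t = w} ×ˢ ({t} : Set (Fin n)))).toReal
          = c t w * (n:ℝ)⁻¹ := by
      intro t
      rw [Measure.prod_prod, hUsing t, ENNReal.toReal_mul, ENNReal.toReal_inv,
        ENNReal.toReal_natCast]
    rw [Finset.sum_congr rfl (fun t (_ : t ∈ Finset.univ) => hterm t)]
    rw [← Finset.sum_mul, hmdef]
    ring
  have hEfst : entropy (J.map Prod.fst) = (∑ w, Real.negMulLog (m w)) / Real.log 2 := by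
    rw [entropy_eq]
    congr 1
    exact Finset.sum_congr rfl fun w _ => by rw [hfsting w]
  have hcgrand : ∑ w, ∑ t, c t w = (n:ℝ) := by
    rw [Finset.sum_comm]
    rw [Finset.sum_congr rfl (fun t (_ : t ∈ Finset.univ) => hcsum t)]
    rw [Finset.sum_const, Finset.card_univ, Fintype.card_fin, nsmul_eq_mul, mul_one]
  have hEJ : entropy J
      = (Real.log n + (n:ℝ)⁻¹ * ∑ t, ∑ w, Real.negMulLog (c t w)) / Real.log 2 := by
    rw [entropy_eq]
    congr 1
    rw [Fintype.sum_prod_type]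
    have hterm : ∀ (w : W) (t : Fin n), Real.negMulLog ((J {(w, t)}).toReal)
        = (n:ℝ)⁻¹ * Real.negMulLog (c t w) + c t w * Real.negMulLog ((n:ℝ)⁻¹) := by
      intro w t
      rw [hJsingR w t, Real.negMulLog_mul]
    rw [Finset.sum_congr rfl (fun w (_ : w ∈ Finset.univ) =>
      Finset.sum_congr rfl (fun t (_ : t ∈ Finset.univ) => hterm w t))]
    have split : ∑ w : W, ∑ t : Fin n,
        ((n:ℝ)⁻¹ * Real.negMulLog (c t w) + c t w * Real.negMulLog ((n:ℝ)⁻¹))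
        = (n:ℝ)⁻¹ * (∑ w : W, ∑ t : Fin n, Real.negMulLog (c t w))
          + (∑ w : W, ∑ t : Fin n, c t w) * Real.negMulLog ((n:ℝ)⁻¹) := by
      simp only [Finset.sum_add_distrib, Finset.mul_sum, Finset.sum_mul]
    rw [split, hcgrand]
    have hnml : (n:ℝ) * Real.negMulLog ((n:ℝ)⁻¹) = Real.log n := by
      rw [Real.negMulLog, Real.log_inv]
      field_simp
    rw [Finset.sum_comm (f := fun w (t : Fin n) => Real.negMulLog (c t w))]
    rw [hnml]
    ring
  -- final assembly
  set B := 2*ε*(Real.log (Fintype.card W) + Real.log (1/ε)) with hBdef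
  have hB1 : |∑ w, Real.negMulLog (m w) - ∑ w, Real.negMulLog (g w)| ≤ B :=
    aux_entropy_diff m g ε hm0 hmsum hg0 hgsum hmpt hmabs hε0 (by linarith)
  have hB2 : ∀ t, |∑ w, Real.negMulLog (c t w) - ∑ w, Real.negMulLog (g w)| ≤ B :=
    fun t => aux_entropy_diff (c t) g ε (hc0 t) (hcsum t) hg0 hgsum (hpt t) (habs t)
      hε0 (by linarith)
  have hnum : (∑ w, Real.negMulLog (m w)) + Real.log n
      - (Real.log n + (n:ℝ)⁻¹ * ∑ t, ∑ w, Real.negMulLog (c t w)) ≤ 2 * B := by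
    have hdecomp : (∑ w, Real.negMulLog (m w)) + Real.log n
        - (Real.log n + (n:ℝ)⁻¹ * ∑ t, ∑ w, Real.negMulLog (c t w))
        = (∑ w, Real.negMulLog (m w) - ∑ w, Real.negMulLog (g w))
          + (n:ℝ)⁻¹ * ∑ t, (∑ w, Real.negMulLog (g w) - ∑ w, Real.negMulLog (c t w)) := by
      rw [Finset.sum_sub_distrib, Finset.sum_const, Finset.card_univ, Fintype.card_fin,
        nsmul_eq_mul]
      field_simp
      ring
    rw [hdecomp]
    have hone : (∑ w, Real.negMulLog (m w) - ∑ w, Real.negMulLog (g w)) ≤ B :=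
      le_trans (le_abs_self _) hB1
    have htwo : (n:ℝ)⁻¹ * ∑ t, (∑ w, Real.negMulLog (g w) - ∑ w, Real.negMulLog (c t w))
        ≤ B := by
      calc (n:ℝ)⁻¹ * ∑ t, (∑ w, Real.negMulLog (g w) - ∑ w, Real.negMulLog (c t w))
          ≤ (n:ℝ)⁻¹ * ∑ t : Fin n, B := by
            apply mul_le_mul_of_nonneg_left _ (by positivity)
            refine Finset.sum_le_sum fun t _ => ?_
            have := hB2 t
            rw [abs_sub_comm] at this
            exact le_trans (le_abs_self _) this
        _ = B := by
            rw [Finset.sum_const, Finset.card_univ, Fintype.card_fin, nsmul_eq_mul]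
            field_simp
    linarith
  rw [mutualInfo, hEfst, hEsnd, hEJ]
  have hrhs : 4 * ε * (Real.logb 2 (Fintype.card W) + Real.logb 2 (1 / ε))
      = (2 * B) / Real.log 2 := by
    rw [hBdef, Real.logb, Real.logb]
    field_simp
    ring
  rw [hrhs]
  rw [← add_div, ← sub_div]
  exact div_le_div_of_nonneg_right hnum hlog2pos.le
end

section
/- Let X^n ∼ p_X^{⊗n} on a finite alphabet, with Markov chain X^n − (M,J) − Y^n where J is independent of X^n, and suppose ‖P_{Y^n} − p_X^{⊗n}‖_TV ≤ ε < 1/4. With T uniform on [n] independent of everything else and V = (M, J, T, Y^{T−1}), we have I(M,J; Y^n) ≥ n·I(V; Y_T) − 2n·g(ε), where g(ε) = 4ε(log|X| + log(1/ε)). -/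
open MeasureTheory ProbabilityTheory Real

/-- Discrete measurable structure on `Option`. -/
instance {α : Type*} : MeasurableSpace (Option α) := ⊤

/-- The prefix y^{t-1} of a sequence y^n, encoded as a function `Fin n → Option X`
revealing exactly the first t coordinates. -/
def prefixOf {X : Type*} {n : ℕ} (y : Fin n → X) (t : Fin n) : Fin n → Option X :=
  fun i => if (i : ℕ) < (t : ℕ) then some (y i) else none

set_option maxHeartbeats 2000000

namespace Stmt8

lemma nml_subadd {u v : ℝ} (hu : 0 ≤ u) (hv : 0 ≤ v) :
    negMulLog (u + v) ≤ negMulLog u + negMulLog v := by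
  rcases eq_or_lt_of_le hu with h | h
  · simp [← h]
  rcases eq_or_lt_of_le hv with h' | h'
  · simp [← h']
  simp only [negMulLog, neg_mul]
  have h1 : u * Real.log u ≤ u * Real.log (u + v) :=
    mul_le_mul_of_nonneg_left (Real.log_le_log h (by linarith)) hu
  have h2 : v * Real.log v ≤ v * Real.log (u + v) :=
    mul_le_mul_of_nonneg_left (Real.log_le_log h' (by linarith)) hv
  nlinarith [h1, h2]

lemma nml_mono {s u : ℝ} (hs : 0 ≤ s) (hsu : s ≤ u) (hu : u ≤ Real.exp (-1)) :
    negMulLog s ≤ negMulLog u := by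
  have hu1 : u ≤ 1 := le_trans hu (by
    rw [Real.exp_neg]
    have := Real.exp_one_gt_d9
    rw [inv_le_one_iff₀]; right; linarith)
  rcases eq_or_lt_of_le hs with h | h
  · rw [← h]
    simpa [negMulLog] using negMulLog_nonneg (le_trans hs hsu) hu1
  have hu0 : 0 < u := lt_of_lt_of_le h hsu
  have hlogu : Real.log u ≤ -1 := by
    have := Real.log_le_log hu0 hu
    rwa [Real.log_exp] at this
  have hkey : Real.log (u / s) ≤ u / s - 1 := Real.log_le_sub_one_of_pos (by positivity)
  have hds : Real.log (u / s) = Real.log u - Real.log s := Real.log_div hu0.ne' h.ne'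
  -- s * (log u - log s) ≤ s * (u/s - 1) = u - s
  have h3 : s * (Real.log u - Real.log s) ≤ u - s := by
    have := mul_le_mul_of_nonneg_left (hds ▸ hkey) hs
    calc s * (Real.log u - Real.log s) ≤ s * (u / s - 1) := this
      _ = u - s := by field_simp
  simp only [negMulLog, neg_mul]
  -- want : -(s log s) ≤ -(u log u), i.e. u log u ≤ s log s
  -- u log u - s log s = (u - s) log u + s(log u - log s) ≤ (u-s)(-1) + (u - s) = 0
  have h4 : (u - s) * Real.log u ≤ (u - s) * (-1) :=
    mul_le_mul_of_nonneg_left hlogu (by linarith)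
  nlinarith [h3, h4]

lemma nml_one_sub {s : ℝ} (hs : 0 ≤ s) (hs1 : s < 1) : negMulLog (1 - s) ≤ s := by
  have h1 : 0 < 1 - s := by linarith
  have hkey : Real.log ((1 - s)⁻¹) ≤ (1 - s)⁻¹ - 1 := Real.log_le_sub_one_of_pos (by positivity)
  rw [Real.log_inv] at hkey
  have : -Real.log (1 - s) ≤ s / (1 - s) := by
    have : (1 - s)⁻¹ - 1 = s / (1 - s) := by field_simp; ring
    linarith [hkey, this.symm.le]
  have := mul_le_mul_of_nonneg_left this h1.le
  simp only [negMulLog, neg_mul]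
  calc -((1 - s) * Real.log (1 - s)) = (1 - s) * (-Real.log (1 - s)) := by ring
    _ ≤ (1 - s) * (s / (1 - s)) := by exact mul_le_mul_of_nonneg_left ‹-Real.log (1-s) ≤ s/(1-s)› h1.le
    _ = s := by field_simp

lemma nml_concave_pt {u v a b : ℝ} (hu : 0 ≤ u) (hv : 0 ≤ v) (ha : 0 ≤ a) (hb : 0 ≤ b)
    (hab : a + b = 1) : a * negMulLog u + b * negMulLog v ≤ negMulLog (a * u + b * v) :=
  Real.concaveOn_negMulLog.2 hu hv ha hb hab

lemma nml_mix_upper {u v a b : ℝ} (hu : 0 ≤ u) (hv : 0 ≤ v) (ha : 0 ≤ a) (hb : 0 ≤ b) :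
    negMulLog (a * u + b * v) ≤
      a * negMulLog u + b * negMulLog v + u * negMulLog a + v * negMulLog b := by
  have h1 := nml_subadd (mul_nonneg ha hu) (mul_nonneg hb hv)
  have h2 : negMulLog (a * u) = u * negMulLog a + a * negMulLog u := negMulLog_mul a u
  have h3 : negMulLog (b * v) = v * negMulLog b + b * negMulLog v := negMulLog_mul b v
  linarith

lemma sum_nml_le {β : Type*} [Fintype β] (d : β → ℝ) (hd : ∀ b, 0 ≤ d b) :
    ∑ b, negMulLog (d b) ≤
      (∑ b, d b) * Real.log (Fintype.card β) + negMulLog (∑ b, d b) := by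
  classical
  set s := ∑ b, d b with hsdef
  have hs0 : 0 ≤ s := Finset.sum_nonneg fun b _ => hd b
  rcases eq_or_lt_of_le hs0 with h | h
  · have : ∀ b ∈ Finset.univ, d b = 0 := by
      intro b _
      exact ((Finset.sum_eq_zero_iff_of_nonneg (fun b _ => hd b)).1 h.symm) b (Finset.mem_univ b)
    have : ∀ b : β, d b = 0 := fun b => this b (Finset.mem_univ b)
    simp [this, ← h, negMulLog]
  · have hcard : 0 < (Fintype.card β : ℝ) := by
      have : Nonempty β := by
        by_contra hne
        rw [not_nonempty_iff] at hne
        rw [hsdef] at h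
        simp [Finset.univ_eq_empty] at h
      exact_mod_cast Fintype.card_pos
    set K := (Fintype.card β : ℝ)
    have hpt : ∀ b : β, negMulLog (d b) ≤ s / K - d b + d b * Real.log (K / s) := by
      intro b
      rcases eq_or_lt_of_le (hd b) with h0 | h0
      · simp [← h0, negMulLog]; positivity
      · have hk1 : Real.log (s / (K * d b)) ≤ s / (K * d b) - 1 :=
          Real.log_le_sub_one_of_pos (by positivity)
        have hexp : Real.log (s / (K * d b)) = Real.log s - Real.log K - Real.log (d b) := by
          rw [Real.log_div h.ne' (by positivity), Real.log_mul (by positivity) h0.ne']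
          ring
        have hexp2 : Real.log (K / s) = Real.log K - Real.log s :=
          Real.log_div (by positivity) h.ne'
        have := mul_le_mul_of_nonneg_left hk1 (hd b)
        rw [hexp] at this
        have hds : d b * (s / (K * d b) - 1) = s / K - d b := by field_simp
        rw [hds] at this
        simp only [negMulLog, neg_mul, hexp2]
        nlinarith [this]
    calc ∑ b, negMulLog (d b) ≤ ∑ b, (s / K - d b + d b * Real.log (K / s)) :=
          Finset.sum_le_sum fun b _ => hpt b
      _ = (Fintype.card β : ℝ) * (s / K) - s + s * Real.log (K / s) := by
          rw [Finset.sum_add_distrib, Finset.sum_sub_distrib, ← Finset.sum_mul,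
            Finset.sum_const, Finset.card_univ, nsmul_eq_mul]
      _ = s * Real.log (K / s) := by field_simp; rw [show (Fintype.card β : ℝ) = K from rfl]; ring
      _ = s * Real.log K + negMulLog s := by
          rw [Real.log_div (by positivity) h.ne', negMulLog]; ring


section HL

variable {α β γ : Type*} [Fintype α] [Fintype β] [Fintype γ]

open Finset

/-- entropy (in nats) of a weight vector -/
noncomputable def HL (F : α → ℝ) : ℝ := ∑ a, Real.negMulLog (F a)

open scoped Classical in
/-- pushforward of a weight vector -/
noncomputable def push (F : α → ℝ) (g : α → β) : β → ℝ :=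
  fun b => ∑ a, if g a = b then F a else 0

lemma push_nonneg {F : α → ℝ} (hF : ∀ a, 0 ≤ F a) (g : α → β) (b : β) : 0 ≤ push F g b := by
  classical
  apply Finset.sum_nonneg
  intro a _
  split_ifs <;> simp [hF a]

lemma push_sum (F : α → ℝ) (g : α → β) : ∑ b, push F g b = ∑ a, F a := by
  classical
  unfold push
  rw [Finset.sum_comm]
  congr 1
  ext a
  simp

lemma push_congr {F : α → ℝ} {g g' : α → β} (h : ∀ a, g a = g' a) : push F g = push F g' := by
  classical
  funext b
  unfold push
  congr 1
  ext a
  simp [h a]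

lemma push_apply_eq_zero {F : α → ℝ} {g : α → β} {b : β} (h : ∀ a, g a ≠ b) :
    push F g b = 0 := by
  classical
  unfold push
  apply Finset.sum_eq_zero
  intro a _
  simp [h a]

lemma push_comp_inj (F : α → ℝ) (g : α → β) {h : β → γ} (hinj : Function.Injective h) (b : β) :
    push F (fun a => h (g a)) (h b) = push F g b := by
  classical
  unfold push
  congr 1
  ext a
  simp [hinj.eq_iff]

lemma HL_push_comp_inj (F : α → ℝ) (g : α → β) {h : β → γ} (hinj : Function.Injective h) :
    HL (push F (fun a => h (g a))) = HL (push F g) := by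
  classical
  unfold HL
  rw [← Finset.sum_subset (Finset.subset_univ (Finset.univ.image h))]
  · rw [Finset.sum_image (fun x _ y _ hxy => hinj hxy)]
    congr 1
    ext b
    rw [push_comp_inj F g hinj]
  · intro c _ hc
    have : ∀ a, h (g a) ≠ c := by
      intro a hcon
      exact hc (Finset.mem_image.2 ⟨g a, Finset.mem_univ _, hcon⟩)
    rw [push_apply_eq_zero this]
    simp [negMulLog]

lemma HL_push_pair_left (F : α → ℝ) (g : α → β) (σ : β → γ) :
    HL (push F (fun a => ((g a, σ (g a)) : β × γ))) = HL (push F g) :=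
  HL_push_comp_inj F g (h := fun b => (b, σ b)) (fun _ _ hxy => congrArg Prod.fst hxy)

lemma HL_push_pair_right (F : α → ℝ) (g : α → γ) (τ : γ → β) :
    HL (push F (fun a => ((τ (g a), g a) : β × γ))) = HL (push F g) :=
  HL_push_comp_inj F g (h := fun c => (τ c, c)) (fun _ _ hxy => congrArg Prod.snd hxy)

/-- two random variables generating the same partition have the same entropy -/
lemma HL_push_eq_of_mutual (F : α → ℝ) (g : α → β) (g' : α → γ) (σ : β → γ) (τ : γ → β)
    (h1 : ∀ a, g' a = σ (g a)) (h2 : ∀ a, g a = τ (g' a)) :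
    HL (push F g) = HL (push F g') := by
  have e1 := HL_push_pair_left F g σ
  have e2 := HL_push_pair_right F g' τ
  have c1 : push F (fun a => ((g a, σ (g a)) : β × γ)) =
      push F (fun a => ((τ (g' a), g' a) : β × γ)) := by
    apply push_congr
    intro a
    rw [← h1 a, ← h2 a]
  rw [c1] at e1
  rw [e1] at e2
  exact e2

end HL


section Unif

variable {α β : Type*} [Fintype α] [Fintype β]

/-- entropy of a variable on `α × Fin n` (uniform on second coordinate) which
determines the index. -/
lemma HL_push_unif {n : ℕ} (hn : 0 < n) (F : α → ℝ) (hF1 : ∑ a, F a = 1)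
    (Φ : α × Fin n → β) (τ : β → Fin n) (hτ : ∀ q : α × Fin n, τ (Φ q) = q.2) :
    HL (push (fun q : α × Fin n => F q.1 / n) Φ) =
      Real.log n + (1 / n) * ∑ t : Fin n, HL (push F (fun a => Φ (a, t))) := by
  classical
  have hn' : (0 : ℝ) < n := by exact_mod_cast hn
  -- the pushforward mass at b comes only from t = τ b
  have key : ∀ b, push (fun q : α × Fin n => F q.1 / n) Φ b =
      (1 / n) * push F (fun a => Φ (a, τ b)) b := by
    intro b
    unfold push
    rw [Fintype.sum_prod_type_right, Finset.mul_sum]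
    rw [Finset.sum_comm]
    congr 1
    ext a
    rw [Fintype.sum_eq_single (τ b)]
    · split_ifs with h
      · ring
      · ring
    · intro t ht
      have : Φ (a, t) ≠ b := by
        intro hc
        exact ht (by rw [← hc, hτ])
      simp [this]
  -- total mass of the per-index pushforwards
  have tot : ∑ b, push F (fun a => Φ (a, τ b)) b = n := by
    have : ∀ b, push F (fun a => Φ (a, τ b)) b =
        n * push (fun q : α × Fin n => F q.1 / n) Φ b := by
      intro b
      rw [key b]
      field_simp
    rw [Finset.sum_congr rfl (fun b _ => this b), ← Finset.mul_sum, push_sum]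
    rw [Fintype.sum_prod_type_right]
    have : ∀ t : Fin n, ∑ a, F a / n = 1 / n := by
      intro t
      rw [← Finset.sum_div, hF1]
    rw [Finset.sum_congr rfl (fun t _ => this t)]
    simp
    field_simp
  -- regrouping of the entropies
  have regroup : ∑ b, Real.negMulLog (push F (fun a => Φ (a, τ b)) b) =
      ∑ t : Fin n, HL (push F (fun a => Φ (a, t))) := by
    unfold HL
    rw [Finset.sum_comm]
    congr 1
    ext b
    rw [Fintype.sum_eq_single (τ b)]
    intro t ht
    have hz : push F (fun a => Φ (a, t)) b = 0 := by
      apply push_apply_eq_zero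
      intro a hc
      exact ht (by rw [← hc, hτ])
    rw [hz]
    simp [negMulLog]
  unfold HL
  calc ∑ b, Real.negMulLog (push (fun q : α × Fin n => F q.1 / n) Φ b)
      = ∑ b, ((push F (fun a => Φ (a, τ b)) b) * Real.negMulLog (1 / n)
          + (1 / n) * Real.negMulLog (push F (fun a => Φ (a, τ b)) b)) := by
        apply Finset.sum_congr rfl
        intro b _
        rw [key b, Real.negMulLog_mul]
    _ = (n : ℝ) * Real.negMulLog (1 / n)
          + (1 / n) * ∑ t : Fin n, HL (push F (fun a => Φ (a, t))) := by
        rw [Finset.sum_add_distrib, ← Finset.sum_mul, tot, ← Finset.mul_sum, regroup]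
    _ = Real.log n + (1 / n) * ∑ t : Fin n, HL (push F (fun a => Φ (a, t))) := by
        congr 1
        rw [Real.negMulLog, one_div, Real.log_inv]
        field_simp

end Unif

section Fannes

variable {β : Type*} [Fintype β]

lemma HL_mix_lower {m d : β → ℝ} (hm : ∀ b, 0 ≤ m b) (hd : ∀ b, 0 ≤ d b)
    {s : ℝ} (hsd : ∑ b, d b = s) (hs0 : 0 < s) (hs1 : s < 1) :
    (1 - s) * (∑ b, Real.negMulLog (m b / (1 - s))) ≤ ∑ b, Real.negMulLog (m b + d b) := by
  have h1s : (0:ℝ) < 1 - s := by linarith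
  rw [Finset.mul_sum]
  apply Finset.sum_le_sum
  intro b _
  have hdb : d b ≤ s := by
    rw [← hsd]
    exact Finset.single_le_sum (fun c _ => hd c) (Finset.mem_univ b)
  have := nml_concave_pt (u := m b / (1 - s)) (v := d b / s) (a := 1 - s) (b := s)
    (div_nonneg (hm b) h1s.le) (div_nonneg (hd b) hs0.le) h1s.le hs0.le (by ring)
  have heq : (1 - s) * (m b / (1 - s)) + s * (d b / s) = m b + d b := by
    field_simp
  rw [heq] at this
  have hnn : 0 ≤ s * Real.negMulLog (d b / s) := by
    apply mul_nonneg hs0.le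
    apply Real.negMulLog_nonneg (div_nonneg (hd b) hs0.le)
    rw [div_le_one hs0]
    exact hdb
  linarith

lemma HL_mix_upper {m d : β → ℝ} (hm : ∀ b, 0 ≤ m b) (hd : ∀ b, 0 ≤ d b)
    {s : ℝ} (hsd : ∑ b, d b = s) (hs0 : 0 < s) (hs1 : s < 1) (hm1 : ∑ b, m b = 1 - s) :
    ∑ b, Real.negMulLog (m b + d b) ≤
      (1 - s) * (∑ b, Real.negMulLog (m b / (1 - s)))
        + s * Real.log (Fintype.card β) + Real.negMulLog s + Real.negMulLog (1 - s) := by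
  have h1s : (0:ℝ) < 1 - s := by linarith
  have step1 : ∑ b, Real.negMulLog (m b + d b) ≤
      ∑ b, ((1 - s) * Real.negMulLog (m b / (1 - s)) + s * Real.negMulLog (d b / s)
        + (m b / (1 - s)) * Real.negMulLog (1 - s) + (d b / s) * Real.negMulLog s) := by
    apply Finset.sum_le_sum
    intro b _
    have := nml_mix_upper (u := m b / (1 - s)) (v := d b / s) (a := 1 - s) (b := s)
      (div_nonneg (hm b) h1s.le) (div_nonneg (hd b) hs0.le) h1s.le hs0.le
    have heq : (1 - s) * (m b / (1 - s)) + s * (d b / s) = m b + d b := by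
      field_simp
    rw [heq] at this
    linarith
  have hsum1 : ∑ b, m b / (1 - s) = 1 := by
    rw [← Finset.sum_div, hm1]
    field_simp
  have hsum2 : ∑ b, d b / s = 1 := by
    rw [← Finset.sum_div, hsd]
    field_simp
  have gibbs : ∑ b, Real.negMulLog (d b / s) ≤ Real.log (Fintype.card β) := by
    have := sum_nml_le (fun b => d b / s) (fun b => div_nonneg (hd b) hs0.le)
    rw [hsum2] at this
    simpa [negMulLog] using this
  calc ∑ b, Real.negMulLog (m b + d b)
      ≤ ∑ b, ((1 - s) * Real.negMulLog (m b / (1 - s)) + s * Real.negMulLog (d b / s)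
        + (m b / (1 - s)) * Real.negMulLog (1 - s) + (d b / s) * Real.negMulLog s) := step1
    _ = (1 - s) * (∑ b, Real.negMulLog (m b / (1 - s)))
        + s * (∑ b, Real.negMulLog (d b / s))
        + (∑ b, m b / (1 - s)) * Real.negMulLog (1 - s)
        + (∑ b, d b / s) * Real.negMulLog s := by
        simp only [Finset.sum_add_distrib, Finset.mul_sum, Finset.sum_mul]
    _ ≤ (1 - s) * (∑ b, Real.negMulLog (m b / (1 - s)))
        + s * Real.log (Fintype.card β) + Real.negMulLog s + Real.negMulLog (1 - s) := by
        rw [hsum1, hsum2]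
        have := mul_le_mul_of_nonneg_left gibbs hs0.le
        linarith

/-- Fannes-type continuity bound for the entropy. -/
lemma fannes {A B : β → ℝ} {ε : ℝ} (hA : ∀ b, 0 ≤ A b) (hB : ∀ b, 0 ≤ B b)
    (hA1 : ∑ b, A b = 1) (hB1 : ∑ b, B b = 1) (hε0 : 0 < ε) (hε : ε < 1 / 4)
    (hs : ∑ b, max (A b - B b) 0 ≤ ε) :
    HL A ≤ HL B + (ε * Real.log (Fintype.card β) + 2 * ε * Real.log (1 / ε)) := by
  classical
  have hlog1ε : 1 ≤ Real.log (1 / ε) := by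
    have h4 : (4:ℝ) ≤ 1 / ε := by
      rw [le_div_iff₀ hε0]
      linarith
    calc (1:ℝ) ≤ Real.log 4 := by
          have : (2:ℝ)*(0.6931471803:ℝ) ≤ 2 * Real.log 2 :=
            mul_le_mul_of_nonneg_left (le_of_lt Real.log_two_gt_d9) (by norm_num)
          have h24 : Real.log 4 = 2 * Real.log 2 := by
            rw [show (4:ℝ) = 2 ^ 2 by norm_num, Real.log_pow]
            push_cast
            ring
          rw [h24]
          linarith
      _ ≤ Real.log (1 / ε) := Real.log_le_log (by norm_num) h4
  have hlogK : 0 ≤ Real.log (Fintype.card β) := by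
    rcases Nat.eq_zero_or_pos (Fintype.card β) with h | h
    · simp [h]
    · apply Real.log_nonneg
      exact_mod_cast h
  set m : β → ℝ := fun b => min (A b) (B b) with hmdef
  set d : β → ℝ := fun b => A b - m b with hddef
  set e : β → ℝ := fun b => B b - m b with hedef
  have hd : ∀ b, 0 ≤ d b := fun b => by simp [hddef, hmdef]
  have he : ∀ b, 0 ≤ e b := fun b => by simp [hedef, hmdef]
  have hm : ∀ b, 0 ≤ m b := fun b => le_min (hA b) (hB b)
  have hdmax : ∀ b, d b = max (A b - B b) 0 := by
    intro b
    simp only [hddef, hmdef]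
    rcases le_total (A b) (B b) with h | h
    · rw [min_eq_left h, max_eq_right (by linarith)]
      ring
    · rw [min_eq_right h, max_eq_left (by linarith)]
  set s : ℝ := ∑ b, d b with hsdef
  have hsd : ∑ b, d b = s := rfl
  have hse : ∑ b, e b = s := by
    have h1 : ∑ b, d b = 1 - ∑ b, m b := by
      rw [← hA1]
      simp [hddef, Finset.sum_sub_distrib]
    have h2 : ∑ b, e b = 1 - ∑ b, m b := by
      rw [← hB1]
      simp [hedef, Finset.sum_sub_distrib]
    rw [h2, ← h1]
  have hsε : s ≤ ε := by
    rw [hsdef]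
    calc ∑ b, d b = ∑ b, max (A b - B b) 0 := Finset.sum_congr rfl fun b _ => hdmax b
      _ ≤ ε := hs
  have hs0 : 0 ≤ s := Finset.sum_nonneg fun b _ => hd b
  have hm1 : ∑ b, m b = 1 - s := by
    have h1 : ∑ b, d b = 1 - ∑ b, m b := by
      rw [← hA1]
      simp [hddef, Finset.sum_sub_distrib]
    rw [hsdef, h1]
    ring
  rcases eq_or_lt_of_le hs0 with hz | hs0'
  · -- s = 0 : A = B
    have hdz : ∀ b, d b = 0 := by
      intro b
      have := (Finset.sum_eq_zero_iff_of_nonneg (fun b _ => hd b)).1 hz.symm b (Finset.mem_univ b)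
      exact this
    have hez : ∀ b, e b = 0 := by
      intro b
      have hze : (0:ℝ) = ∑ b, e b := by rw [hse, ← hz]
      exact (Finset.sum_eq_zero_iff_of_nonneg (fun b _ => he b)).1 hze.symm b (Finset.mem_univ b)
    have hAB : A = B := by
      funext b
      have h1 := hdz b
      have h2 := hez b
      simp only [hddef, hedef] at h1 h2
      linarith
    rw [hAB]
    have t1 : 0 ≤ ε * Real.log (Fintype.card β) := mul_nonneg hε0.le hlogK
    have t2 : 0 ≤ 2 * ε * Real.log (1 / ε) :=
      mul_nonneg (by linarith) (by linarith)
    linarith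
  · have hs1 : s < 1 := lt_of_le_of_lt hsε (by linarith)
    have hAeq : ∀ b, A b = m b + d b := fun b => by simp [hddef]
    have hBeq : ∀ b, B b = m b + e b := fun b => by simp [hedef]
    have hup : HL A ≤ (1 - s) * (∑ b, Real.negMulLog (m b / (1 - s)))
        + s * Real.log (Fintype.card β) + Real.negMulLog s + Real.negMulLog (1 - s) := by
      unfold HL
      calc ∑ a, Real.negMulLog (A a) = ∑ b, Real.negMulLog (m b + d b) :=
            Finset.sum_congr rfl fun b _ => by rw [hAeq b]
        _ ≤ _ := HL_mix_upper hm hd hsd hs0' hs1 hm1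
    have hlo : (1 - s) * (∑ b, Real.negMulLog (m b / (1 - s))) ≤ HL B := by
      unfold HL
      calc (1 - s) * (∑ b, Real.negMulLog (m b / (1 - s)))
          ≤ ∑ b, Real.negMulLog (m b + e b) := HL_mix_lower hm he hse hs0' hs1
        _ = ∑ b, Real.negMulLog (B b) := Finset.sum_congr rfl fun b _ => by rw [← hBeq b]
    have hsK : s * Real.log (Fintype.card β) ≤ ε * Real.log (Fintype.card β) :=
      mul_le_mul_of_nonneg_right hsε hlogK
    have hexp4 : Real.exp 1 < 4 := lt_trans Real.exp_one_lt_d9 (by norm_num)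
    have hee : ε ≤ Real.exp (-1) := by
      rw [Real.exp_neg, inv_eq_one_div]
      have h14 : (1:ℝ) / 4 ≤ 1 / Real.exp 1 :=
        one_div_le_one_div_of_le (Real.exp_pos 1) hexp4.le
      linarith
    have hnml_s : Real.negMulLog s ≤ ε * Real.log (1 / ε) := by
      calc Real.negMulLog s ≤ Real.negMulLog ε := nml_mono hs0 hsε hee
        _ = ε * Real.log (1 / ε) := by
            rw [Real.negMulLog, one_div, Real.log_inv]; ring
    have hnml_1s : Real.negMulLog (1 - s) ≤ ε * Real.log (1 / ε) := by
      have h1 : Real.negMulLog (1 - s) ≤ s := nml_one_sub hs0 hs1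
      have h2 : ε * 1 ≤ ε * Real.log (1 / ε) := mul_le_mul_of_nonneg_left hlog1ε hε0.le
      linarith
    linarith

end Fannes

section Product

variable {X : Type*} [Fintype X]

lemma sum_prod_pi (P : X → ℝ) : ∀ n : ℕ, ∑ y : Fin n → X, ∏ i, P (y i) = (∑ x, P x) ^ n := by
  intro n
  induction n with
  | zero => simp
  | succ n ih =>
    rw [← Equiv.sum_comp (Fin.consEquiv (fun _ : Fin (n+1) => X))
      (fun y => ∏ i, P (y i)), Fintype.sum_prod_type]
    have : ∀ (x : X) (z : Fin n → X),
        (∏ i, P ((Fin.consEquiv (fun _ : Fin (n+1) => X)) (x, z) i)) =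
          P x * ∏ i, P (z i) := by
      intro x z
      rw [Fin.prod_univ_succ]
      simp [Fin.consEquiv]
    simp_rw [this]
    rw [← Finset.sum_mul_sum]
    rw [ih, pow_succ]
    ring

lemma sum_nml_prod_pi (P : X → ℝ) (hP0 : ∀ x, 0 ≤ P x) (hP1 : ∑ x, P x = 1) :
    ∀ n : ℕ, ∑ y : Fin n → X, Real.negMulLog (∏ i, P (y i)) = n * (∑ x, Real.negMulLog (P x)) := by
  intro n
  induction n with
  | zero => simp [negMulLog]
  | succ n ih =>
    rw [← Equiv.sum_comp (Fin.consEquiv (fun _ : Fin (n+1) => X))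
      (fun y => Real.negMulLog (∏ i, P (y i))), Fintype.sum_prod_type]
    have : ∀ (x : X) (z : Fin n → X),
        Real.negMulLog (∏ i, P ((Fin.consEquiv (fun _ : Fin (n+1) => X)) (x, z) i)) =
          (∏ i, P (z i)) * Real.negMulLog (P x) + P x * Real.negMulLog (∏ i, P (z i)) := by
      intro x z
      have : (∏ i, P ((Fin.consEquiv (fun _ : Fin (n+1) => X)) (x, z) i)) =
          P x * ∏ i, P (z i) := by
        rw [Fin.prod_univ_succ]
        simp [Fin.consEquiv]
      rw [this, Real.negMulLog_mul]
    simp_rw [this]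
    have e1 : ∀ x : X, ∑ z : Fin n → X, ((∏ i, P (z i)) * Real.negMulLog (P x)
        + P x * Real.negMulLog (∏ i, P (z i))) =
        Real.negMulLog (P x) + P x * (n * (∑ x, Real.negMulLog (P x))) := by
      intro x
      rw [Finset.sum_add_distrib, ← Finset.sum_mul, sum_prod_pi P n, hP1, one_pow, one_mul,
        ← Finset.mul_sum, ih]
    simp_rw [e1]
    rw [Finset.sum_add_distrib, ← Finset.sum_mul, hP1]
    push_cast
    ring

end Product

section TVsum

variable {β : Type*} [Fintype β]

lemma tv_s_bound {A B : β → ℝ} {ε : ℝ}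
    (h : ∀ S : Finset β, |∑ b ∈ S, A b - ∑ b ∈ S, B b| ≤ ε) :
    ∑ b, max (A b - B b) 0 ≤ ε := by
  classical
  have key : ∑ b, max (A b - B b) 0 =
      ∑ b ∈ Finset.univ.filter (fun b => B b ≤ A b), (A b - B b) := by
    rw [Finset.sum_filter]
    apply Finset.sum_congr rfl
    intro b _
    split_ifs with hb
    · rw [max_eq_left (by linarith)]
    · rw [max_eq_right (by push_neg at hb; linarith)]
  rw [key, Finset.sum_sub_distrib]
  calc ∑ b ∈ Finset.univ.filter (fun b => B b ≤ A b), A b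
        - ∑ b ∈ Finset.univ.filter (fun b => B b ≤ A b), B b
      ≤ |∑ b ∈ Finset.univ.filter (fun b => B b ≤ A b), A b
        - ∑ b ∈ Finset.univ.filter (fun b => B b ≤ A b), B b| := le_abs_self _
    _ ≤ ε := h _

end TVsum

section Meas
open MeasureTheory

lemma all_meas {γ : Type*} [Countable γ] [MeasurableSpace γ] [MeasurableSingletonClass γ]
    (S : Set γ) : MeasurableSet S := S.to_countable.measurableSet

variable {Ω : Type*} [Fintype Ω] [MeasurableSpace Ω] [MeasurableSingletonClass Ω]

lemma meas_finset (μ : Measure Ω) [IsFiniteMeasure μ] (S : Finset Ω) :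
    (μ ↑S).toReal = ∑ a ∈ S, (μ {a}).toReal := by
  classical
  have h1 : (↑S : Set Ω) = ⋃ a ∈ S, {a} := by ext x; simp
  rw [h1, measure_biUnion_finset ?_ (fun a _ => measurableSet_singleton a)]
  · exact ENNReal.toReal_sum (fun a _ => measure_ne_top μ _)
  · intro a _ b _ hab
    simp [Function.onFun, hab]

lemma sum_pmf_one (μ : Measure Ω) [IsProbabilityMeasure μ] :
    ∑ a, (μ {a}).toReal = 1 := by
  have := meas_finset μ Finset.univ
  rw [Finset.coe_univ, measure_univ] at this
  simpa using this.symm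

lemma pmf_nonneg (μ : Measure Ω) (a : Ω) : 0 ≤ (μ {a}).toReal := ENNReal.toReal_nonneg

variable {β : Type*} [Fintype β] [MeasurableSpace β] [MeasurableSingletonClass β]

lemma meas_map_singleton (μ : Measure Ω) [IsFiniteMeasure μ] (g : Ω → β) (b : β) :
    ((μ.map g) {b}).toReal = push (fun ω => (μ {ω}).toReal) g b := by
  classical
  rw [Measure.map_apply (measurable_of_finite g) (measurableSet_singleton b)]
  have h1 : g ⁻¹' {b} = ↑(Finset.univ.filter fun a => g a = b) := by ext x; simp
  rw [h1, meas_finset, Finset.sum_filter]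
  rfl

lemma entropy_map_eq (μ : Measure Ω) [IsProbabilityMeasure μ] (g : Ω → β) :
    entropy (μ.map g) = HL (push (fun ω => (μ {ω}).toReal) g) / Real.log 2 := by
  unfold entropy HL
  have key : ∀ q : ℝ, -(q * Real.logb 2 q) = Real.negMulLog q / Real.log 2 := by
    intro q
    rw [Real.logb, Real.negMulLog]
    ring
  rw [← Finset.sum_neg_distrib]
  simp_rw [meas_map_singleton μ g, key]
  rw [Finset.sum_div]

lemma tv_finset (μ ν : Measure Ω) [IsFiniteMeasure μ] [IsFiniteMeasure ν] {ε : ℝ}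
    (h : tvDist μ ν ≤ ε) (S : Finset Ω) :
    |∑ a ∈ S, (μ {a}).toReal - ∑ a ∈ S, (ν {a}).toReal| ≤ ε := by
  rw [← meas_finset, ← meas_finset]
  have hb : BddAbove (Set.range fun s : {s : Set Ω // MeasurableSet s} =>
      |(μ s.1).toReal - (ν s.1).toReal|) := by
    refine ⟨(μ Set.univ).toReal + (ν Set.univ).toReal, ?_⟩
    rintro x ⟨s, rfl⟩
    have h1 : (μ s.1).toReal ≤ (μ Set.univ).toReal :=
      ENNReal.toReal_mono (measure_ne_top μ _) (measure_mono (Set.subset_univ _))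
    have h2 : (ν s.1).toReal ≤ (ν Set.univ).toReal :=
      ENNReal.toReal_mono (measure_ne_top ν _) (measure_mono (Set.subset_univ _))
    have h3 : (0:ℝ) ≤ (μ s.1).toReal := ENNReal.toReal_nonneg
    have h4 : (0:ℝ) ≤ (ν s.1).toReal := ENNReal.toReal_nonneg
    rw [abs_le]
    constructor <;> linarith
  exact le_trans (le_ciSup hb ⟨↑S, all_meas _⟩) h

lemma tv_set (μ ν : Measure Ω) [IsFiniteMeasure μ] [IsFiniteMeasure ν] {ε : ℝ}
    (h : tvDist μ ν ≤ ε) (S : Set Ω) :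
    |(μ S).toReal - (ν S).toReal| ≤ ε := by
  have hb : BddAbove (Set.range fun s : {s : Set Ω // MeasurableSet s} =>
      |(μ s.1).toReal - (ν s.1).toReal|) := by
    refine ⟨(μ Set.univ).toReal + (ν Set.univ).toReal, ?_⟩
    rintro x ⟨s, rfl⟩
    have h1 : (μ s.1).toReal ≤ (μ Set.univ).toReal :=
      ENNReal.toReal_mono (measure_ne_top μ _) (measure_mono (Set.subset_univ _))
    have h2 : (ν s.1).toReal ≤ (ν Set.univ).toReal :=
      ENNReal.toReal_mono (measure_ne_top ν _) (measure_mono (Set.subset_univ _))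
    have h3 : (0:ℝ) ≤ (μ s.1).toReal := ENNReal.toReal_nonneg
    have h4 : (0:ℝ) ≤ (ν s.1).toReal := ENNReal.toReal_nonneg
    rw [abs_le]
    constructor <;> linarith
  exact le_trans (le_ciSup hb ⟨S, all_meas _⟩) h

end Meas

section Marginal

variable {X : Type*} [Fintype X]

lemma sum_prod_pi' {ι : Type*} [Fintype ι] [DecidableEq ι] (P : X → ℝ) :
    ∑ y : ι → X, ∏ i, P (y i) = (∑ x, P x) ^ (Fintype.card ι) := by
  classical
  set m := Fintype.card ι with hm
  set e := Fintype.equivFin ι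
  set E : (ι → X) ≃ (Fin m → X) := Equiv.arrowCongr e (Equiv.refl X)
  rw [← Equiv.sum_comp E.symm (fun y => ∏ i, P (y i))]
  have key : ∀ z : Fin m → X, (∏ i, P (E.symm z i)) = ∏ k, P (z k) := by
    intro z
    apply Fintype.prod_equiv e
    intro i
    simp [E, Equiv.arrowCongr]
  rw [Finset.sum_congr rfl (fun z _ => key z), sum_prod_pi]

open scoped Classical in
lemma sum_prod_pi_filter {n : ℕ} (P : X → ℝ) (hP1 : ∑ x, P x = 1) (t : Fin n) (S : Finset X) :
    ∑ y : Fin n → X, (if y t ∈ S then ∏ i, P (y i) else 0) = ∑ x ∈ S, P x := by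
  classical
  set E := Equiv.funSplitAt t X
  rw [← Equiv.sum_comp E.symm (fun y => if y t ∈ S then ∏ i, P (y i) else 0)]
  have h1 : ∀ q : X × ({ j // j ≠ t } → X), E.symm q t = q.1 := by
    intro q
    simp [E]
  have h2 : ∀ q : X × ({ j // j ≠ t } → X), (∏ i, P (E.symm q i)) =
      P q.1 * ∏ j : { j // j ≠ t }, P (q.2 j) := by
    intro q
    rw [← Finset.mul_prod_erase Finset.univ _ (Finset.mem_univ t)]
    congr 1
    · rw [h1]
    · rw [Finset.prod_subtype (Finset.univ.erase t) (p := fun j => j ≠ t)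
        (by intro j; simp [Finset.mem_erase]) (fun j => P (E.symm q j))]
      apply Finset.prod_congr rfl
      intro j _
      congr 1
      simp [E, j.2]
  calc ∑ q : X × ({ j // j ≠ t } → X), (if E.symm q t ∈ S then ∏ i, P (E.symm q i) else 0)
      = ∑ q : X × ({ j // j ≠ t } → X),
          (if q.1 ∈ S then P q.1 else 0) * ∏ j : { j // j ≠ t }, P (q.2 j) := by
        apply Finset.sum_congr rfl
        intro q _
        rw [h1, h2]
        split_ifs <;> ring
    _ = (∑ x, (if x ∈ S then P x else 0)) * ∑ z : { j // j ≠ t } → X, ∏ j, P (z j) := by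
        rw [Fintype.sum_prod_type]
        dsimp only
        rw [Finset.sum_mul_sum]
    _ = ∑ x ∈ S, P x := by
        rw [sum_prod_pi', hP1, one_pow, mul_one, Finset.sum_ite_mem]
        simp

end Marginal

section PushFinset

variable {α β : Type*} [Fintype α] [Fintype β]

open scoped Classical in
lemma push_sum_finset (F : α → ℝ) (g : α → β) (S : Finset β) :
    ∑ b ∈ S, push F g b = ∑ a, if g a ∈ S then F a else 0 := by
  classical
  unfold push
  rw [Finset.sum_comm]
  apply Finset.sum_congr rfl
  intro a _
  simp [Finset.sum_ite_eq]

end PushFinset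

end Stmt8

instance optSingleton {α : Type*} : MeasurableSingletonClass (Option α) := ⟨fun _ => trivial⟩

open Stmt8

/-- Converse bound: with X^n i.i.d. ∼ p, J independent of X^n, Markov chain
X^n − (M,J) − Y^n, realism constraint ‖P_{Y^n} − p^{⊗n}‖_TV ≤ ε < 1/4, T uniform on
[n] and V = (M, J, T, Y^{T−1}), we have
I(M,J ; Y^n) ≥ n·I(V ; Y_T) − 2n·g(ε) with g(ε) = 4ε(log|X| + log(1/ε)). -/
theorem stmt_8 {Xty Mty Jty : Type*}
    [Fintype Xty] [MeasurableSpace Xty] [MeasurableSingletonClass Xty]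
    [Fintype Mty] [MeasurableSpace Mty] [MeasurableSingletonClass Mty]
    [Fintype Jty] [MeasurableSpace Jty] [MeasurableSingletonClass Jty]
    {n : ℕ} (hn : 0 < n)
    (p : Measure Xty) [IsProbabilityMeasure p]
    (μ : Measure (((Fin n → Xty) × Mty × Jty) × (Fin n → Xty))) [IsProbabilityMeasure μ]
    -- X^n is i.i.d. with distribution p and J is independent of X^n
    (hXJ : μ.map (fun ω => (ω.1.1, ω.1.2.2)) =
      (Measure.pi fun _ => p).prod (μ.map fun ω => ω.1.2.2))
    -- Markov chain X^n − (M,J) − Y^n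
    (hMarkov : ∃ κ : Kernel (Mty × Jty) (Fin n → Xty), IsMarkovKernel κ ∧
      μ = (μ.map Prod.fst) ⊗ₘ (κ.comap Prod.snd measurable_snd))
    (ε : ℝ) (hε0 : 0 < ε) (hε : ε < 1 / 4)
    -- near-perfect realism: ‖P_{Y^n} − p^{⊗n}‖_TV ≤ ε
    (hTV : tvDist (μ.map Prod.snd) (Measure.pi fun _ => p) ≤ ε) :
    mutualInfo (μ.map fun ω => ((ω.1.2.1, ω.1.2.2), ω.2)) ≥
      (n : ℝ) * mutualInfo ((μ.prod (unif (Fin n))).map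
          (fun ω => ((ω.1.1.2.1, ω.1.1.2.2, ω.2, prefixOf ω.1.2 ω.2), ω.1.2 ω.2)))
        - 2 * n * (4 * ε * (Real.logb 2 (Fintype.card Xty) + Real.logb 2 (1 / ε))) := by
  classical
  have hL2 : (0:ℝ) < Real.log 2 := Real.log_pos (by norm_num)
  have hn' : (0:ℝ) < n := by exact_mod_cast hn
  have hn1 : (1:ℝ) ≤ n := by exact_mod_cast hn
  have hXne : Nonempty Xty := by
    by_contra hne
    rw [not_nonempty_iff] at hne
    have h1 : p Set.univ = 1 := measure_univ
    rw [Set.univ_eq_empty_iff.2 hne, measure_empty] at h1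
    exact zero_ne_one h1
  obtain ⟨xd⟩ := hXne
  -- basic data
  set F : ((Fin n → Xty) × Mty × Jty) × (Fin n → Xty) → ℝ := fun ω => (μ {ω}).toReal with hFdef
  set P : Xty → ℝ := fun x => (p {x}).toReal with hPdef
  have hF0 : ∀ ω, 0 ≤ F ω := fun ω => ENNReal.toReal_nonneg
  have hF1 : ∑ ω, F ω = 1 := sum_pmf_one μ
  have hP0 : ∀ x, 0 ≤ P x := fun x => ENNReal.toReal_nonneg
  have hP1 : ∑ x, P x = 1 := sum_pmf_one p
  set gMJ : ((Fin n → Xty) × Mty × Jty) × (Fin n → Xty) → Mty × Jty :=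
    fun ω => (ω.1.2.1, ω.1.2.2) with hgMJ
  set g1 : ((Fin n → Xty) × Mty × Jty) × (Fin n → Xty) → (Mty × Jty) × (Fin n → Xty) :=
    fun ω => ((ω.1.2.1, ω.1.2.2), ω.2) with hg1
  set Φ : (((Fin n → Xty) × Mty × Jty) × (Fin n → Xty)) × Fin n →
      (Mty × Jty × Fin n × (Fin n → Option Xty)) × Xty :=
    fun ω => ((ω.1.1.2.1, ω.1.1.2.2, ω.2, prefixOf ω.1.2 ω.2), ω.1.2 ω.2) with hΦ
  -- uniform measure is a probability measure
  haveI hunif : IsProbabilityMeasure (unif (Fin n)) := by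
    constructor
    rw [unif, Measure.smul_apply, Measure.count_univ, smul_eq_mul]
    rw [ENat.card_eq_coe_fintype_card, ENat.toENNReal_coe]
    rw [ENNReal.inv_mul_cancel]
    · simp [Fintype.card_fin, hn.ne']
    · exact ENNReal.natCast_ne_top _
  -- pmf of the product measure
  have hFp : ∀ q : (((Fin n → Xty) × Mty × Jty) × (Fin n → Xty)) × Fin n,
      ((μ.prod (unif (Fin n))) {q}).toReal = F q.1 / n := by
    intro q
    have hq : ({q} : Set _) = {q.1} ×ˢ {q.2} := (Set.singleton_prod_singleton).symm
    rw [hq, Measure.prod_prod, unif, Measure.smul_apply, Measure.count_singleton, smul_eq_mul,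
      mul_one, ENNReal.toReal_mul, ENNReal.toReal_inv, ENNReal.toReal_natCast]
    simp [F, Fintype.card_fin, div_eq_mul_inv]
  have hFpfun : (fun q => ((μ.prod (unif (Fin n))) {q}).toReal) =
      (fun q : (((Fin n → Xty) × Mty × Jty) × (Fin n → Xty)) × Fin n => F q.1 / n) :=
    funext hFp
  -- first mutual information
  have hMI1 : mutualInfo (μ.map g1) =
      (HL (push F gMJ) + HL (push F (fun ω => ω.2)) - HL (push F g1)) / Real.log 2 := by
    rw [mutualInfo, Measure.map_map (measurable_of_finite _) (measurable_of_finite _),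
      Measure.map_map (measurable_of_finite _) (measurable_of_finite _),
      entropy_map_eq μ _, entropy_map_eq μ _, entropy_map_eq μ g1]
    rw [show push (fun ω => (μ {ω}).toReal) (Prod.fst ∘ g1) = push F gMJ from
      push_congr (fun ω => rfl)]
    rw [show push (fun ω => (μ {ω}).toReal) (Prod.snd ∘ g1) = push F (fun ω => ω.2) from
      push_congr (fun ω => rfl)]
    rw [show push (fun ω => (μ {ω}).toReal) g1 = push F g1 from push_congr (fun ω => rfl)]
    ring
  -- second mutual information
  have hMI2 : mutualInfo ((μ.prod (unif (Fin n))).map Φ) =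
      (HL (push (fun q => F q.1 / n) (fun q => (Φ q).1))
        + HL (push (fun q => F q.1 / n) (fun q => (Φ q).2))
        - HL (push (fun q => F q.1 / n) Φ)) / Real.log 2 := by
    rw [mutualInfo, Measure.map_map (measurable_of_finite _) (measurable_of_finite _),
      Measure.map_map (measurable_of_finite _) (measurable_of_finite _),
      entropy_map_eq _ _, entropy_map_eq _ _, entropy_map_eq _ Φ]
    rw [show push (fun q => ((μ.prod (unif (Fin n))) {q}).toReal) (Prod.fst ∘ Φ) =
        push (fun q => F q.1 / n) (fun q => (Φ q).1) from by rw [hFpfun]; exact push_congr (fun q => rfl)]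
    rw [show push (fun q => ((μ.prod (unif (Fin n))) {q}).toReal) (Prod.snd ∘ Φ) =
        push (fun q => F q.1 / n) (fun q => (Φ q).2) from by rw [hFpfun]; exact push_congr (fun q => rfl)]
    rw [show push (fun q => ((μ.prod (unif (Fin n))) {q}).toReal) Φ =
        push (fun q => F q.1 / n) Φ from by rw [hFpfun]]
    ring
  -- the chain of prefix entropies
  set pk : ℕ → (((Fin n → Xty) × Mty × Jty) × (Fin n → Xty)) → (Fin n → Option Xty) :=
    fun k ω i => if (i : ℕ) < k then some (ω.2 i) else none with hpk
  set A : ℕ → ℝ := fun k => HL (push F (fun ω => (gMJ ω, pk k ω))) with hAdef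
  -- V-part entropies
  have hVt : ∀ t : Fin n, HL (push F (fun ω => (Φ (ω, t)).1)) = A (t : ℕ) := by
    intro t
    apply HL_push_eq_of_mutual F _ _
      (σ := fun v : Mty × Jty × Fin n × (Fin n → Option Xty) => ((v.1, v.2.1), v.2.2.2))
      (τ := fun w : (Mty × Jty) × (Fin n → Option Xty) => (w.1.1, w.1.2, t, w.2))
    · intro ω
      rfl
    · intro ω
      rfl
  -- joint-part entropies
  have hJt : ∀ t : Fin n, HL (push F (fun ω => Φ (ω, t))) = A ((t : ℕ) + 1) := by
    intro t
    apply HL_push_eq_of_mutual F _ _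
      (σ := fun w : (Mty × Jty × Fin n × (Fin n → Option Xty)) × Xty =>
        ((w.1.1, w.1.2.1), fun i : Fin n => if (i : ℕ) < (t : ℕ) then w.1.2.2.2 i
          else if (i : ℕ) = (t : ℕ) then some w.2 else none))
      (τ := fun w : (Mty × Jty) × (Fin n → Option Xty) =>
        ((w.1.1, w.1.2, t, fun i : Fin n => if (i : ℕ) < (t : ℕ) then w.2 i else none),
          (w.2 t).getD xd))
    · intro ω
      apply Prod.ext
      · rfl
      · funext i
        show pk ((t : ℕ) + 1) ω i = _
        simp only [pk, prefixOf, hΦ]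
        rcases lt_trichotomy (i : ℕ) (t : ℕ) with h | h | h
        · rw [if_pos h, if_pos (by omega), if_pos h]
        · rw [if_pos (by omega), if_neg (by omega), if_pos h]
          congr 1
          · exact congrArg ω.2 (Fin.ext h)
        · rw [if_neg (by omega), if_neg (by omega), if_neg (by omega)]
    · intro ω
      show Φ (ω, t) = _
      simp only [hΦ]
      apply Prod.ext
      · apply Prod.ext
        · rfl
        apply Prod.ext
        · rfl
        apply Prod.ext
        · rfl
        · funext i
          show prefixOf ω.2 t i = _
          simp only [prefixOf, pk]
          rcases lt_or_ge (i : ℕ) (t : ℕ) with h | h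
          · rw [if_pos h, if_pos h, if_pos (by omega)]
          · rw [if_neg (by omega), if_neg (by omega)]
      · show ω.2 t = (pk ((t : ℕ) + 1) ω t).getD xd
        simp [pk]
  -- endpoints
  have hA0 : A 0 = HL (push F gMJ) := by
    apply HL_push_eq_of_mutual F _ _
      (σ := fun w : (Mty × Jty) × (Fin n → Option Xty) => w.1)
      (τ := fun mj : Mty × Jty => (mj, fun _ : Fin n => (none : Option Xty)))
    · intro ω
      rfl
    · intro ω
      apply Prod.ext
      · rfl
      · funext i
        simp [pk]
  have hAn : A n = HL (push F g1) := by
    apply HL_push_eq_of_mutual F _ _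
      (σ := fun w : (Mty × Jty) × (Fin n → Option Xty) =>
        (w.1, fun i : Fin n => (w.2 i).getD xd))
      (τ := fun w : (Mty × Jty) × (Fin n → Xty) => (w.1, fun i : Fin n => some (w.2 i)))
    · intro ω
      apply Prod.ext
      · rfl
      · funext i
        simp [pk, i.isLt]
        rfl
    · intro ω
      apply Prod.ext
      · rfl
      · funext i
        simp [pk, i.isLt]
        rfl
  -- entropy identities for the product space
  have hV : HL (push (fun q => F q.1 / n) (fun q => (Φ q).1)) =
      Real.log n + (1 / n) * ∑ t : Fin n, A (t : ℕ) := by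
    rw [HL_push_unif hn F hF1 _ (fun v => v.2.2.1) (fun q => rfl)]
    congr 1
    congr 1
    exact Finset.sum_congr rfl (fun t _ => hVt t)
  have hJ : HL (push (fun q => F q.1 / n) Φ) =
      Real.log n + (1 / n) * ∑ t : Fin n, A ((t : ℕ) + 1) := by
    rw [HL_push_unif hn F hF1 Φ (fun w => w.1.2.2.1) (fun q => rfl)]
    congr 1
    congr 1
    exact Finset.sum_congr rfl (fun t _ => hJt t)
  -- telescoping
  have htel : ∑ t : Fin n, A ((t : ℕ) + 1) - ∑ t : Fin n, A (t : ℕ) =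
      HL (push F g1) - HL (push F gMJ) := by
    rw [← hAn, ← hA0, ← Finset.sum_sub_distrib]
    rw [Fin.sum_univ_eq_sum_range (fun k => A (k + 1) - A k) n]
    exact Finset.sum_range_sub A n
  -- pmfs of the Y-marginal, the iid measure, and the averaged marginal
  set QY : (Fin n → Xty) → ℝ := push F (fun ω => ω.2) with hQYdef
  set G : (Fin n → Xty) → ℝ := fun y => ∏ i, P (y i) with hGdef
  haveI : IsProbabilityMeasure (μ.map Prod.snd) :=
    Measure.isProbabilityMeasure_map (measurable_of_finite _).aemeasurable
  have hGmeas : ∀ y, ((Measure.pi fun _ : Fin n => p) {y}).toReal = G y := by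
    intro y
    rw [← Set.univ_pi_singleton y, Measure.pi_pi, ENNReal.toReal_prod]
  have hQYmeas : ∀ y, ((μ.map Prod.snd) {y}).toReal = QY y := fun y =>
    meas_map_singleton μ _ y
  have hKn : Real.log (Fintype.card (Fin n → Xty)) = n * Real.log (Fintype.card Xty) := by
    rw [Fintype.card_fun, Fintype.card_fin]
    push_cast
    rw [Real.log_pow]
  haveI : Nonempty Xty := ⟨xd⟩
  have hlogK0 : 0 ≤ Real.log (Fintype.card Xty) := by
    apply Real.log_nonneg
    have : 0 < Fintype.card Xty := Fintype.card_pos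
    exact_mod_cast this
  have hlogε : 1 ≤ Real.log (1 / ε) := by
    have h4 : (4:ℝ) ≤ 1 / ε := by
      rw [le_div_iff₀ hε0]
      linarith
    calc (1:ℝ) ≤ Real.log 4 := by
          have h24 : Real.log 4 = 2 * Real.log 2 := by
            rw [show (4:ℝ) = 2 ^ 2 by norm_num, Real.log_pow]
            push_cast
            ring
          have := Real.log_two_gt_d9
          rw [h24]
          linarith
      _ ≤ Real.log (1 / ε) := Real.log_le_log (by norm_num) h4
  -- (a) Fannes for the whole sequence
  have hTVfin : ∀ S : Finset (Fin n → Xty), |∑ y ∈ S, G y - ∑ y ∈ S, QY y| ≤ ε := by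
    intro S
    have h0 := tv_finset (μ.map Prod.snd) (Measure.pi fun _ => p) hTV S
    rw [Finset.sum_congr rfl (fun y _ => hQYmeas y),
      Finset.sum_congr rfl (fun y _ => hGmeas y), abs_sub_comm] at h0
    exact h0
  have hGa : ∀ y, 0 ≤ G y := fun y => Finset.prod_nonneg (fun i _ => hP0 _)
  have hG1 : ∑ y, G y = 1 := by
    rw [hGdef, sum_prod_pi P n, hP1, one_pow]
  have hQY0 : ∀ y, 0 ≤ QY y := push_nonneg hF0 _
  have hQY1 : ∑ y, QY y = 1 := by rw [hQYdef, push_sum, hF1]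
  have hFanJ : HL G ≤ HL QY +
      (ε * Real.log (Fintype.card (Fin n → Xty)) + 2 * ε * Real.log (1 / ε)) :=
    fannes hGa hQY0 hG1 hQY1 hε0 hε (tv_s_bound hTVfin)
  have hHLG : HL G = n * HL P := by
    rw [hGdef, HL]
    exact sum_nml_prod_pi P hP0 hP1 n
  -- (b) Fannes for the averaged marginal
  set Abar : Xty → ℝ := push (fun q => F q.1 / n) (fun q => (Φ q).2) with hAbardef
  have hAb0 : ∀ x, 0 ≤ Abar x := push_nonneg (fun q => div_nonneg (hF0 _) hn'.le) _
  have hsumconst : ∀ ω : ((Fin n → Xty) × Mty × Jty) × (Fin n → Xty),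
      ∑ _t : Fin n, F ω / n = F ω := by
    intro ω
    rw [Finset.sum_const, Finset.card_univ, Fintype.card_fin, nsmul_eq_mul]
    field_simp
  have hAb1 : ∑ x, Abar x = 1 := by
    rw [hAbardef, push_sum, Fintype.sum_prod_type]
    rw [Finset.sum_congr rfl (fun ω _ => hsumconst ω), hF1]
  have hAbTV : ∀ S : Finset Xty, |∑ x ∈ S, Abar x - ∑ x ∈ S, P x| ≤ ε := by
    intro S
    have h1 : ∑ x ∈ S, Abar x =
        (1 / n) * ∑ t : Fin n, (∑ ω, if ω.2 t ∈ S then F ω else 0) := by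
      rw [hAbardef, push_sum_finset, Fintype.sum_prod_type_right, Finset.mul_sum]
      apply Finset.sum_congr rfl
      intro t _
      rw [Finset.mul_sum]
      apply Finset.sum_congr rfl
      intro ω _
      show (if (Φ (ω, t)).2 ∈ S then F ω / ↑n else 0) = _
      by_cases hmem : ω.2 t ∈ S
      · rw [if_pos hmem, if_pos hmem]
        ring
      · rw [if_neg hmem, if_neg hmem]
        ring
    have h2 : ∀ t : Fin n, |(∑ ω, if ω.2 t ∈ S then F ω else 0) - ∑ x ∈ S, P x| ≤ ε := by
      intro t
      have e1 : ((μ.map Prod.snd) {y : Fin n → Xty | y t ∈ S}).toReal =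
          ∑ ω, if ω.2 t ∈ S then F ω else 0 := by
        rw [Measure.map_apply (measurable_of_finite _) (all_meas _)]
        have hset : (Prod.snd ⁻¹' {y : Fin n → Xty | y t ∈ S} :
            Set (((Fin n → Xty) × Mty × Jty) × (Fin n → Xty))) =
            ↑(Finset.univ.filter
              (fun ω : ((Fin n → Xty) × Mty × Jty) × (Fin n → Xty) => ω.2 t ∈ S)) := by
          ext ω
          simp
        rw [hset, meas_finset, Finset.sum_filter]
      have e2 : ((Measure.pi fun _ : Fin n => p) {y : Fin n → Xty | y t ∈ S}).toReal =
          ∑ x ∈ S, P x := by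
        have hsetG : ({y : Fin n → Xty | y t ∈ S} : Set (Fin n → Xty)) =
            ↑(Finset.univ.filter (fun y : Fin n → Xty => y t ∈ S)) := by
          ext y
          simp
        rw [hsetG, meas_finset, Finset.sum_filter]
        rw [Finset.sum_congr rfl (fun y _ => by
          rw [hGmeas y] : ∀ _ ∈ Finset.univ, _ = _)]
        exact sum_prod_pi_filter P hP1 t S
      rw [← e1, ← e2]
      exact tv_set (μ.map Prod.snd) (Measure.pi fun _ => p) hTV _
    rw [h1]
    have h3 : (1 / (n:ℝ)) * ∑ t : Fin n, (∑ ω, if ω.2 t ∈ S then F ω else 0) - ∑ x ∈ S, P x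
        = (1 / n) * ∑ t : Fin n,
            ((∑ ω, if ω.2 t ∈ S then F ω else 0) - ∑ x ∈ S, P x) := by
      rw [Finset.sum_sub_distrib, Finset.sum_const, Finset.card_univ, Fintype.card_fin,
        nsmul_eq_mul]
      field_simp
    rw [h3, abs_mul, abs_of_nonneg (by positivity : (0:ℝ) ≤ 1 / (n:ℝ))]
    calc (1 / (n:ℝ)) * |∑ t : Fin n,
          ((∑ ω, if ω.2 t ∈ S then F ω else 0) - ∑ x ∈ S, P x)|
        ≤ (1 / n) * ∑ t : Fin n,
            |(∑ ω, if ω.2 t ∈ S then F ω else 0) - ∑ x ∈ S, P x| := by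
          apply mul_le_mul_of_nonneg_left (Finset.abs_sum_le_sum_abs _ _) (by positivity)
      _ ≤ (1 / n) * ∑ _t : Fin n, ε := by
          apply mul_le_mul_of_nonneg_left (Finset.sum_le_sum (fun t _ => h2 t)) (by positivity)
      _ = ε := by
          rw [Finset.sum_const, Finset.card_univ, Fintype.card_fin, nsmul_eq_mul]
          field_simp
  have hFanA : HL Abar ≤ HL P +
      (ε * Real.log (Fintype.card Xty) + 2 * ε * Real.log (1 / ε)) :=
    fannes hAb0 hP0 hAb1 hP1 hε0 hε (tv_s_bound hAbTV)
  -- the main entropy inequality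
  have hfinal : (n:ℝ) * HL Abar
      - 8 * n * ε * (Real.log (Fintype.card Xty) + Real.log (1 / ε)) ≤ HL QY := by
    have h1 : HL G ≤ HL QY +
        (ε * (n * Real.log (Fintype.card Xty)) + 2 * ε * Real.log (1 / ε)) := by
      rw [← hKn]
      exact hFanJ
    have h4 := mul_le_mul_of_nonneg_left hFanA hn'.le
    have e1 : 0 ≤ (n:ℝ) * ε * Real.log (Fintype.card Xty) :=
      mul_nonneg (mul_nonneg hn'.le hε0.le) hlogK0
    have e2 : 0 ≤ ε * Real.log (1 / ε) := mul_nonneg hε0.le (by linarith)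
    have e3 : 0 ≤ (n:ℝ) * (ε * Real.log (1 / ε)) := mul_nonneg hn'.le e2
    nlinarith [h1, hHLG, h4, e1, e2, e3]
  -- put everything together
  have hQQ : HL QY = HL (push F (fun ω => ω.2)) := rfl
  have hni1 : (n:ℝ) * (1 / n * ∑ t : Fin n, A (t : ℕ)) = ∑ t : Fin n, A (t : ℕ) := by
    field_simp
  have hni2 : (n:ℝ) * (1 / n * ∑ t : Fin n, A ((t : ℕ) + 1)) =
      ∑ t : Fin n, A ((t : ℕ) + 1) := by
    field_simp
  have hmain : (n:ℝ) * (Real.log n + 1 / n * ∑ t : Fin n, A (t : ℕ) + HL Abar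
        - (Real.log n + 1 / n * ∑ t : Fin n, A ((t : ℕ) + 1)))
        - 8 * n * ε * (Real.log (Fintype.card Xty) + Real.log (1 / ε))
      ≤ HL (push F gMJ) + HL (push F (fun ω => ω.2)) - HL (push F g1) := by
    have hexp : (n:ℝ) * (Real.log n + 1 / n * ∑ t : Fin n, A (t : ℕ) + HL Abar
        - (Real.log n + 1 / n * ∑ t : Fin n, A ((t : ℕ) + 1)))
        = (∑ t : Fin n, A (t : ℕ)) + n * HL Abar - ∑ t : Fin n, A ((t : ℕ) + 1) := by
      rw [mul_sub, mul_add, mul_add, mul_add, hni1, hni2]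
      ring
    rw [hexp]
    linarith [hfinal, htel, hQQ]
  rw [ge_iff_le, hMI1, hMI2, hV, hJ]
  simp only [Real.logb]
  have hrw : (n:ℝ) * ((Real.log n + 1 / n * ∑ t : Fin n, A (t : ℕ) + HL Abar
        - (Real.log n + 1 / n * ∑ t : Fin n, A ((t : ℕ) + 1))) / Real.log 2)
      - 2 * n * (4 * ε * (Real.log (Fintype.card Xty) / Real.log 2
        + Real.log (1 / ε) / Real.log 2))
      = ((n:ℝ) * (Real.log n + 1 / n * ∑ t : Fin n, A (t : ℕ) + HL Abar
        - (Real.log n + 1 / n * ∑ t : Fin n, A ((t : ℕ) + 1)))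
        - 8 * n * ε * (Real.log (Fintype.card Xty) + Real.log (1 / ε))) / Real.log 2 := by
    field_simp
    ring
  rw [hrw]
  gcongr
end

section
/- Let X be a finite-dimensional real vector space and d the Euclidean distance. For any distribution p on X and any s > 0, the pair (d^s, p) is quantizable: there exists a sequence of measurable finite-valued quantizers κ^{(ℓ)} : X → X whose induced partitions asymptotically generate the Borel σ-algebra, such that for all τ, ε > 0 there is a Borel set B_τ with p(X \ B_τ) ≤ τ and an index L_{ε,τ} with: for all ℓ ≥ L_{ε,τ}, (i) |d(x,y)^s − d(κ^{(ℓ)}(x), κ^{(ℓ)}(y))^s| ≤ ε for all (x,y) ∈ B_τ², and (ii) d(κ^{(ℓ)}(x), κ^{(ℓ)}(y))^s ≤ d(x,y)^s + ε for all (x,y) ∉ B_τ². -/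
open MeasureTheory Real

noncomputable def euclidClamp (ℓ : ℕ) (t : ℝ) : ℝ := max (-(ℓ:ℝ)) (min (ℓ:ℝ) t)

noncomputable def euclidMesh (k ℓ : ℕ) : ℝ := ((ℓ:ℝ)+1)^2 * ((k:ℝ)+1)

noncomputable def euclidRound (k ℓ : ℕ) (t : ℝ) : ℝ :=
  (⌊euclidMesh k ℓ * euclidClamp ℓ t⌋ : ℤ) / euclidMesh k ℓ

noncomputable def euclidQF (k ℓ : ℕ) (t : ℝ) : ℝ := (1 - 1/((ℓ:ℝ)+1)) * euclidRound k ℓ t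

noncomputable def euclidRd (k ℓ : ℕ) : EuclideanSpace ℝ (Fin k) → EuclideanSpace ℝ (Fin k) :=
  fun x => WithLp.toLp 2 (fun i => euclidRound k ℓ (x i))

noncomputable def euclidCl (k ℓ : ℕ) : EuclideanSpace ℝ (Fin k) → EuclideanSpace ℝ (Fin k) :=
  fun x => WithLp.toLp 2 (fun i => euclidClamp ℓ (x i))

noncomputable def euclidQuant (k ℓ : ℕ) : EuclideanSpace ℝ (Fin k) → EuclideanSpace ℝ (Fin k) :=
  fun x => WithLp.toLp 2 (fun i => euclidQF k ℓ (x i))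

lemma mesh_pos (k ℓ : ℕ) : 0 < euclidMesh k ℓ := by
  unfold euclidMesh; positivity

lemma mesh_ge_one (k ℓ : ℕ) : 1 ≤ euclidMesh k ℓ := by
  unfold euclidMesh
  have h1 : (0:ℝ) ≤ (ℓ:ℝ) := Nat.cast_nonneg ℓ
  have h2 : (0:ℝ) ≤ (k:ℝ) := Nat.cast_nonneg k
  nlinarith

lemma sqrtk_le (k : ℕ) : Real.sqrt k ≤ (k:ℝ)+1 := by
  rw [show ((k:ℝ)+1) = Real.sqrt (((k:ℝ)+1)^2) from (Real.sqrt_sq (by positivity)).symm]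
  apply Real.sqrt_le_sqrt
  have h2 : (0:ℝ) ≤ (k:ℝ) := Nat.cast_nonneg k
  nlinarith

lemma sqrtk_div_mesh_le (k ℓ : ℕ) : Real.sqrt k / euclidMesh k ℓ ≤ 1/(((ℓ:ℝ)+1)^2) := by
  rw [div_le_div_iff₀ (mesh_pos k ℓ) (by positivity)]
  unfold euclidMesh
  have h1 := sqrtk_le k
  have h2 : (0:ℝ) ≤ ((ℓ:ℝ)+1)^2 := by positivity
  nlinarith

lemma clamp_lip (ℓ : ℕ) (t u : ℝ) : |euclidClamp ℓ t - euclidClamp ℓ u| ≤ |t - u| := by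
  unfold euclidClamp
  refine (abs_max_sub_max_le_max _ _ _ _).trans (max_le (by simp [abs_nonneg]) ?_)
  exact (abs_min_sub_min_le_max _ _ _ _).trans (max_le (by simp [abs_nonneg]) le_rfl)

lemma clamp_abs_le (ℓ : ℕ) (t : ℝ) : |euclidClamp ℓ t| ≤ (ℓ:ℝ) := by
  have h1 : (0:ℝ) ≤ (ℓ:ℝ) := Nat.cast_nonneg ℓ
  unfold euclidClamp
  rw [abs_le]
  exact ⟨le_max_left _ _, max_le (by linarith) (min_le_left _ _)⟩

lemma clamp_id (ℓ : ℕ) (t : ℝ) (h : |t| ≤ (ℓ:ℝ)) : euclidClamp ℓ t = t := by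
  rw [abs_le] at h
  unfold euclidClamp
  rw [min_eq_right h.2, max_eq_right h.1]

lemma clamp_id_of_lt (ℓ : ℕ) (t : ℝ) (h : |euclidClamp ℓ t| < (ℓ:ℝ)) : euclidClamp ℓ t = t := by
  have hl0 : (0:ℝ) ≤ (ℓ:ℝ) := Nat.cast_nonneg ℓ
  unfold euclidClamp at *
  rcases le_total t (-(ℓ:ℝ)) with h1 | h1
  · exfalso
    rw [min_eq_right (h1.trans (by linarith)), max_eq_left h1, abs_neg, abs_of_nonneg hl0] at h
    exact lt_irrefl _ h
  rcases le_total ((ℓ:ℝ)) t with h2 | h2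
  · exfalso
    rw [min_eq_left h2, max_eq_right (by linarith), abs_of_nonneg hl0] at h
    exact lt_irrefl _ h
  · rw [min_eq_right h2, max_eq_right h1]

lemma round_near (k ℓ : ℕ) (t : ℝ) :
    |euclidRound k ℓ t - euclidClamp ℓ t| ≤ 1 / euclidMesh k ℓ := by
  have hN := mesh_pos k ℓ
  unfold euclidRound
  set c := euclidClamp ℓ t
  have h1 : ((⌊euclidMesh k ℓ * c⌋ : ℤ) : ℝ) ≤ euclidMesh k ℓ * c := Int.floor_le _
  have h2 : euclidMesh k ℓ * c < (⌊euclidMesh k ℓ * c⌋ : ℤ) + 1 := Int.lt_floor_add_one _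
  have e : ((⌊euclidMesh k ℓ * c⌋ : ℤ) : ℝ) / euclidMesh k ℓ - c
      = (((⌊euclidMesh k ℓ * c⌋ : ℤ) : ℝ) - euclidMesh k ℓ * c) / euclidMesh k ℓ := by
    field_simp
  rw [e, abs_div, abs_of_pos hN]
  gcongr
  rw [abs_le]
  constructor <;> linarith

section
variable {k : ℕ}

lemma dist_le_coord (a b : EuclideanSpace ℝ (Fin k)) (c : ℝ) (hc : 0 ≤ c)
    (h : ∀ i, dist (a i) (b i) ≤ c) : dist a b ≤ Real.sqrt k * c := by
  rw [EuclideanSpace.dist_eq]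
  have h1 : ∑ i, dist (a i) (b i)^2 ≤ ∑ _i : Fin k, c^2 :=
    Finset.sum_le_sum fun i _ => by
      have := h i; have := dist_nonneg (x := a i) (y := b i); nlinarith
  calc Real.sqrt (∑ i, dist (a i) (b i)^2) ≤ Real.sqrt (∑ _i : Fin k, c^2) :=
        Real.sqrt_le_sqrt h1
    _ = Real.sqrt ((k:ℝ) * c^2) := by
        rw [Finset.sum_const, Finset.card_univ, Fintype.card_fin, nsmul_eq_mul]
    _ = Real.sqrt k * c := by rw [Real.sqrt_mul (Nat.cast_nonneg k), Real.sqrt_sq hc]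

lemma dist_le_dist_coord (a b x y : EuclideanSpace ℝ (Fin k))
    (h : ∀ i, dist (a i) (b i) ≤ dist (x i) (y i)) : dist a b ≤ dist x y := by
  rw [EuclideanSpace.dist_eq, EuclideanSpace.dist_eq]
  apply Real.sqrt_le_sqrt
  apply Finset.sum_le_sum
  intro i _
  have := h i; have := dist_nonneg (x := a i) (y := b i); nlinarith

lemma abs_coord_le_norm (x : EuclideanSpace ℝ (Fin k)) (i : Fin k) : |x i| ≤ ‖x‖ := by
  rw [EuclideanSpace.norm_eq, ← Real.sqrt_sq (abs_nonneg (x i))]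
  apply Real.sqrt_le_sqrt
  exact (Finset.single_le_sum (f := fun j => ‖x j‖^2) (fun j _ => by positivity)
    (Finset.mem_univ i)).trans_eq' (by rw [sq_abs]; norm_num)

end
section
variable (k ℓ : ℕ)

lemma theta_pos : 0 < 1/((ℓ:ℝ)+1) := by positivity

lemma theta_le_one : 1/((ℓ:ℝ)+1) ≤ 1 := by
  rw [div_le_one (by positivity)]
  have := Nat.cast_nonneg (α := ℝ) ℓ; linarith

lemma quant_eq_smul (x : EuclideanSpace ℝ (Fin k)) :
    euclidQuant k ℓ x = (1 - 1/((ℓ:ℝ)+1)) • euclidRd k ℓ x := rfl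

lemma dist_quant (x y : EuclideanSpace ℝ (Fin k)) :
    dist (euclidQuant k ℓ x) (euclidQuant k ℓ y)
      = (1 - 1/((ℓ:ℝ)+1)) * dist (euclidRd k ℓ x) (euclidRd k ℓ y) := by
  rw [quant_eq_smul, quant_eq_smul, dist_smul₀, Real.norm_eq_abs,
    abs_of_nonneg (by have := theta_le_one ℓ; linarith)]

lemma dist_rd_cl (x : EuclideanSpace ℝ (Fin k)) :
    dist (euclidRd k ℓ x) (euclidCl k ℓ x) ≤ Real.sqrt k * (1/euclidMesh k ℓ) := by
  apply dist_le_coord _ _ _ (by have := mesh_pos k ℓ; positivity)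
  intro i
  rw [Real.dist_eq]
  exact round_near k ℓ (x i)

lemma dist_rd_le (x y : EuclideanSpace ℝ (Fin k)) :
    dist (euclidRd k ℓ x) (euclidRd k ℓ y) ≤ dist x y + 2*(Real.sqrt k/euclidMesh k ℓ) := by
  have h1 := dist_rd_cl k ℓ x
  have h2 := dist_rd_cl k ℓ y
  have h3 : dist (euclidCl k ℓ x) (euclidCl k ℓ y) ≤ dist x y := by
    apply dist_le_dist_coord
    intro i
    rw [Real.dist_eq, Real.dist_eq]
    exact clamp_lip ℓ (x i) (y i)
  have h4 := dist_triangle4 (euclidRd k ℓ x) (euclidCl k ℓ x) (euclidCl k ℓ y) (euclidRd k ℓ y)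
  rw [dist_comm (euclidCl k ℓ y) (euclidRd k ℓ y)] at h4
  have e : Real.sqrt k * (1/euclidMesh k ℓ) = Real.sqrt k / euclidMesh k ℓ := mul_one_div _ _
  linarith

lemma cl_eq_self (x : EuclideanSpace ℝ (Fin k)) (hx : ∀ i, |x i| ≤ (ℓ:ℝ)) :
    euclidCl k ℓ x = x := WithLp.ofLp_injective 2 <| funext fun i => clamp_id ℓ (x i) (hx i)

lemma dist_rd_ge (x y : EuclideanSpace ℝ (Fin k)) (hx : ∀ i, |x i| ≤ (ℓ:ℝ))
    (hy : ∀ i, |y i| ≤ (ℓ:ℝ)) :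
    dist x y ≤ dist (euclidRd k ℓ x) (euclidRd k ℓ y) + 2*(Real.sqrt k/euclidMesh k ℓ) := by
  have h1 := dist_rd_cl k ℓ x
  have h2 := dist_rd_cl k ℓ y
  rw [cl_eq_self k ℓ x hx] at h1
  rw [cl_eq_self k ℓ y hy] at h2
  have h4 := dist_triangle4 x (euclidRd k ℓ x) (euclidRd k ℓ y) y
  rw [dist_comm x (euclidRd k ℓ x), dist_comm (euclidRd k ℓ y) y, dist_comm y (euclidRd k ℓ y)] at h4
  have e : Real.sqrt k * (1/euclidMesh k ℓ) = Real.sqrt k / euclidMesh k ℓ := mul_one_div _ _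
  linarith

lemma measurable_qf : Measurable (euclidQF k ℓ) := by
  have hcl : Continuous (euclidClamp ℓ) :=
    continuous_const.max (continuous_const.min continuous_id)
  unfold euclidQF euclidRound
  apply Measurable.const_mul
  apply Measurable.div_const
  exact measurable_from_top.comp (Int.measurable_floor.comp
    ((continuous_const.mul hcl).measurable))

lemma measurable_quant : Measurable (euclidQuant k ℓ) :=
  (WithLp.measurable_toLp 2 _).comp <| measurable_pi_lambda _ fun i => (measurable_qf k ℓ).comp ((measurable_pi_apply i).comp (WithLp.measurable_ofLp 2 _))

lemma finite_range_qf : (Set.range (euclidQF k ℓ)).Finite := by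
  have hN := mesh_pos k ℓ
  apply Set.Finite.subset (((Set.finite_Icc (⌊-(euclidMesh k ℓ * ℓ)⌋) (⌊euclidMesh k ℓ * ℓ⌋)).image
    (fun m : ℤ => (1 - 1/((ℓ:ℝ)+1)) * ((m:ℝ)/euclidMesh k ℓ))))
  rintro _ ⟨t, rfl⟩
  refine ⟨⌊euclidMesh k ℓ * euclidClamp ℓ t⌋, ?_, rfl⟩
  have hc := abs_le.1 (clamp_abs_le ℓ t)
  rw [Set.mem_Icc]
  constructor <;> apply Int.floor_mono <;> nlinarith [hc.1, hc.2]

lemma finite_range_quant : (Set.range (euclidQuant k ℓ)).Finite := by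
  apply Set.Finite.subset ((Set.Finite.pi (fun _i : Fin k => finite_range_qf k ℓ)).image (WithLp.toLp 2))
  rintro _ ⟨x, rfl⟩
  exact ⟨_, fun i _ => ⟨x i, rfl⟩, rfl⟩

end
lemma fiber_small (k : ℕ) (x : EuclideanSpace ℝ (Fin k)) (ρ : ℝ) (hρ : 0 < ρ) :
    ∃ ℓ : ℕ, ∀ z, euclidQuant k ℓ z = euclidQuant k ℓ x → dist z x < ρ := by
  obtain ⟨ℓ, hℓ⟩ := exists_nat_gt (max (‖x‖ + 1) (1/ρ))
  have hx1 : ‖x‖ + 1 < (ℓ:ℝ) := lt_of_le_of_lt (le_max_left _ _) hℓ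
  have hρ1 : 1/ρ < (ℓ:ℝ) := lt_of_le_of_lt (le_max_right _ _) hℓ
  have hl0 : (0:ℝ) < (ℓ:ℝ) := lt_trans (by positivity) hρ1
  have hN := mesh_pos k ℓ
  have hN1 := mesh_ge_one k ℓ
  have hθ : (1 : ℝ) - 1/((ℓ:ℝ)+1) ≠ 0 := by
    have : 1/((ℓ:ℝ)+1) < 1 := by rw [div_lt_one (by positivity)]; linarith
    linarith
  refine ⟨ℓ, fun z hz => ?_⟩
  have key : ∀ i, dist (z i) (x i) ≤ 1/euclidMesh k ℓ := by
    intro i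
    have hq : euclidQF k ℓ (z i) = euclidQF k ℓ (x i) := congrFun (congrArg WithLp.ofLp hz) i
    have hr : euclidRound k ℓ (z i) = euclidRound k ℓ (x i) := by
      unfold euclidQF at hq; exact mul_left_cancel₀ hθ hq
    have hfl : (⌊euclidMesh k ℓ * euclidClamp ℓ (z i)⌋ : ℝ)
        = (⌊euclidMesh k ℓ * euclidClamp ℓ (x i)⌋ : ℝ) := by
      unfold euclidRound at hr
      field_simp at hr
      exact_mod_cast hr
    have h1 := Int.floor_le (euclidMesh k ℓ * euclidClamp ℓ (z i))
    have h2 := Int.lt_floor_add_one (euclidMesh k ℓ * euclidClamp ℓ (z i))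
    have h3 := Int.floor_le (euclidMesh k ℓ * euclidClamp ℓ (x i))
    have h4 := Int.lt_floor_add_one (euclidMesh k ℓ * euclidClamp ℓ (x i))
    rw [hfl] at h1 h2
    have hxb : |x i| ≤ (ℓ:ℝ) := (abs_coord_le_norm x i).trans (by linarith [abs_nonneg (x i)])
    have hcx : euclidClamp ℓ (x i) = x i := clamp_id ℓ (x i) hxb
    have hnear : |euclidClamp ℓ (z i) - euclidClamp ℓ (x i)| < 1/euclidMesh k ℓ := by
      have hlt : |euclidMesh k ℓ * euclidClamp ℓ (z i) - euclidMesh k ℓ * euclidClamp ℓ (x i)| < 1 := by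
        rw [abs_lt]; constructor <;> linarith
      calc |euclidClamp ℓ (z i) - euclidClamp ℓ (x i)|
          = |euclidMesh k ℓ * euclidClamp ℓ (z i) - euclidMesh k ℓ * euclidClamp ℓ (x i)| / euclidMesh k ℓ := by
            rw [← mul_sub, abs_mul, abs_of_pos hN]; field_simp
        _ < 1/euclidMesh k ℓ := by gcongr
    rw [hcx] at hnear
    have hzc : euclidClamp ℓ (z i) = z i := by
      apply clamp_id_of_lt
      have hb : |euclidClamp ℓ (z i)| ≤ |euclidClamp ℓ (z i) - x i| + |x i| := by
        have h5 := abs_sub_abs_le_abs_sub (euclidClamp ℓ (z i)) (x i)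
        linarith
      have h1N : 1/euclidMesh k ℓ ≤ 1 := by
        rw [div_le_one hN]; exact hN1
      calc |euclidClamp ℓ (z i)| ≤ |euclidClamp ℓ (z i) - x i| + |x i| := hb
        _ < 1/euclidMesh k ℓ + |x i| := by linarith
        _ ≤ 1 + ‖x‖ := by have := abs_coord_le_norm x i; linarith
        _ < (ℓ:ℝ) := by linarith
    rw [Real.dist_eq, ← hzc]
    exact hnear.le
  have hd := dist_le_coord z x (1/euclidMesh k ℓ) (by positivity) key
  have hsq := sqrtk_div_mesh_le k ℓ
  calc dist z x ≤ Real.sqrt k * (1/euclidMesh k ℓ) := hd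
    _ = Real.sqrt k / euclidMesh k ℓ := mul_one_div _ _
    _ ≤ 1/(((ℓ:ℝ)+1)^2) := hsq
    _ ≤ 1/(ℓ:ℝ) := by
        rw [div_le_div_iff₀ (by positivity) hl0]
        nlinarith
    _ < ρ := by
        rw [div_lt_iff₀ hl0]
        rw [div_lt_iff₀ hρ] at hρ1
        nlinarith

lemma gen_eq (k : ℕ) :
    (⨆ ℓ : ℕ, MeasurableSpace.comap (euclidQuant k ℓ) inferInstance) =
      (inferInstance : MeasurableSpace (EuclideanSpace ℝ (Fin k))) := by
  apply le_antisymm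
  · exact iSup_le fun ℓ => (measurable_quant k ℓ).comap_le
  · conv_lhs => rw [BorelSpace.measurable_eq (α := EuclideanSpace ℝ (Fin k))]
    refine MeasurableSpace.generateFrom_le fun U hU => ?_
    replace hU : IsOpen U := hU
    have key : U = ⋃ ℓ : ℕ, euclidQuant k ℓ ⁻¹' {v | euclidQuant k ℓ ⁻¹' {v} ⊆ U} := by
      ext z
      simp only [Set.mem_iUnion, Set.mem_preimage, Set.mem_setOf_eq]
      constructor
      · intro hz
        obtain ⟨ρ, hρ, hball⟩ := Metric.isOpen_iff.1 hU z hz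
        obtain ⟨ℓ, hℓ⟩ := fiber_small k z ρ hρ
        refine ⟨ℓ, fun w hw => hball ?_⟩
        rw [Metric.mem_ball]
        exact hℓ w hw
      · rintro ⟨ℓ, hℓ⟩
        exact hℓ rfl
    rw [key]
    apply MeasurableSet.iUnion
    intro ℓ
    have hm : MeasurableSet[MeasurableSpace.comap (euclidQuant k ℓ) inferInstance]
        (euclidQuant k ℓ ⁻¹' {v | euclidQuant k ℓ ⁻¹' {v} ⊆ U}) := by
      rw [MeasurableSpace.measurableSet_comap]
      refine ⟨{v | euclidQuant k ℓ ⁻¹' {v} ⊆ U} ∩ Set.range (euclidQuant k ℓ), ?_,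
        Set.preimage_inter_range⟩
      exact (((finite_range_quant k ℓ).subset Set.inter_subset_right).isClosed).measurableSet
    exact (le_iSup (fun ℓ => MeasurableSpace.comap (euclidQuant k ℓ)
      (inferInstance : MeasurableSpace (EuclideanSpace ℝ (Fin k)))) ℓ) _ hm
lemma rpow_quant_bound {θ δ t u s : ℝ} (hθ : 0 < θ) (hθ1 : θ ≤ 1) (hδ : 0 ≤ δ)
    (ht : 0 ≤ t) (hu : 0 ≤ u) (h : u ≤ (1-θ)*(t+δ)) (hs : 0 ≤ s) :
    u ^ s ≤ t ^ s + (δ/θ) ^ s := by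
  rcases le_or_gt ((1-θ)*δ/θ) t with h1 | h1
  · have hut : u ≤ t := by
      rw [div_le_iff₀ hθ] at h1
      nlinarith
    have h2 := Real.rpow_le_rpow hu hut hs
    have h3 : (0:ℝ) ≤ (δ/θ)^s := Real.rpow_nonneg (by positivity) s
    linarith
  · have hud : u ≤ δ/θ := by
      rw [lt_div_iff₀ hθ] at h1
      rw [le_div_iff₀ hθ]
      nlinarith
    have h2 := Real.rpow_le_rpow hu hud hs
    have h3 : (0:ℝ) ≤ t^s := Real.rpow_nonneg ht s
    linarith

lemma rpow_uc (s : ℝ) (hs : 0 < s) (M ε : ℝ) (hε : 0 < ε) :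
    ∃ δ > 0, ∀ t ∈ Set.Icc (0:ℝ) M, ∀ u ∈ Set.Icc (0:ℝ) M, |t - u| < δ → |t ^ s - u ^ s| ≤ ε := by
  have hc : Continuous fun t : ℝ => t ^ s :=
    continuous_iff_continuousAt.2 fun x => Real.continuousAt_rpow_const x s (Or.inr hs.le)
  have huc := (isCompact_Icc (a := (0:ℝ)) (b := M)).uniformContinuousOn_of_continuous
    hc.continuousOn
  rw [Metric.uniformContinuousOn_iff] at huc
  obtain ⟨δ, hδ, h⟩ := huc ε hε
  refine ⟨δ, hδ, fun t ht u hu hd => ?_⟩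
  have := h t ht u hu (by rwa [Real.dist_eq])
  rw [Real.dist_eq] at this
  exact this.le
lemma quant_approx {θ δ t d' n' δ' : ℝ} (hθpos : 0 < θ) (hθ1 : θ ≤ 1) (hδ0 : 0 ≤ δ)
    (hδθ : δ ≤ 2*θ^2) (hθsq : θ^2 ≤ θ) (ht0 : 0 ≤ t) (hd'0 : 0 ≤ d')
    (hub : d' ≤ t + δ) (hlb : t ≤ d' + δ) (ht2 : t ≤ 2*n') (hn0 : 0 ≤ n')
    (hkey : (2*n'+4)*θ < δ') :
    |t - (1-θ)*d'| < δ' ∧ (1-θ)*d' ≤ 2*n'+2 := by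
  have hd'2 : d' ≤ 2*n'+2 := by nlinarith
  have h9 : θ*d' ≤ θ*(2*n'+2) := mul_le_mul_of_nonneg_left hd'2 hθpos.le
  have h10 : 0 ≤ θ*d' := mul_nonneg hθpos.le hd'0
  have h11 : 0 ≤ n'*θ := mul_nonneg hn0 hθpos.le
  refine ⟨?_, by nlinarith⟩
  rw [abs_lt]
  constructor <;> nlinarith
set_option maxHeartbeats 1600000 in
/-- For Euclidean space with distance d, any distribution p and any s > 0, the pair
(d^s, p) is quantizable: there is a sequence of measurable finite-valued quantizers
whose partitions asymptotically generate the Borel σ-algebra and which approximate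
the distortion d^s as in the definition of quantizability. -/
theorem stmt_10 (k : ℕ) (p : Measure (EuclideanSpace ℝ (Fin k)))
    [IsProbabilityMeasure p] (s : ℝ) (hs : 0 < s) :
    ∃ κ : ℕ → EuclideanSpace ℝ (Fin k) → EuclideanSpace ℝ (Fin k),
      (∀ ℓ, Measurable (κ ℓ) ∧ (Set.range (κ ℓ)).Finite) ∧
      (⨆ ℓ : ℕ, MeasurableSpace.comap (κ ℓ) inferInstance) =
        (inferInstance : MeasurableSpace (EuclideanSpace ℝ (Fin k))) ∧
      ∀ τ ε : ℝ, 0 < τ → 0 < ε →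
        ∃ B : Set (EuclideanSpace ℝ (Fin k)), MeasurableSet B ∧
          p Bᶜ ≤ ENNReal.ofReal τ ∧
          ∃ L : ℕ, ∀ ℓ, L ≤ ℓ →
            (∀ x ∈ B, ∀ y ∈ B,
              |dist x y ^ s - dist (κ ℓ x) (κ ℓ y) ^ s| ≤ ε) ∧
            (∀ x y, (x, y) ∉ B ×ˢ B →
              dist (κ ℓ x) (κ ℓ y) ^ s ≤ dist x y ^ s + ε) := by
  refine ⟨euclidQuant k, fun ℓ => ⟨measurable_quant k ℓ, finite_range_quant k ℓ⟩, gen_eq k, ?_⟩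
  intro τ ε hτ hε
  -- choose the set B as a large closed ball
  have hnull : ∀ m : ℕ, NullMeasurableSet ((Metric.closedBall (0 : EuclideanSpace ℝ (Fin k)) m)ᶜ) p :=
    fun m => (measurableSet_closedBall.compl).nullMeasurableSet
  have hanti : Antitone (fun m : ℕ => (Metric.closedBall (0 : EuclideanSpace ℝ (Fin k)) m)ᶜ) :=
    fun m m' hmm' => Set.compl_subset_compl.2
      (Metric.closedBall_subset_closedBall (by exact_mod_cast hmm'))
  have h2 : (⋂ m : ℕ, (Metric.closedBall (0 : EuclideanSpace ℝ (Fin k)) m)ᶜ) = ∅ := by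
    ext w
    simp only [Set.mem_iInter, Set.mem_compl_iff, Metric.mem_closedBall, not_le,
      Set.mem_empty_iff_false, iff_false, not_forall, not_lt]
    obtain ⟨m, hm⟩ := exists_nat_ge (dist w 0)
    exact ⟨m, hm⟩
  have h1 := MeasureTheory.tendsto_measure_iInter_atTop (μ := p) hnull hanti ⟨0, measure_ne_top p _⟩
  rw [h2, measure_empty] at h1
  have hpos : (0:ENNReal) < ENNReal.ofReal τ := ENNReal.ofReal_pos.2 hτ
  obtain ⟨n, hn⟩ := (h1.eventually_lt_const hpos).exists
  refine ⟨Metric.closedBall 0 n, measurableSet_closedBall, hn.le, ?_⟩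
  obtain ⟨δ', hδ'pos, hδ'⟩ := rpow_uc s hs (2*(n:ℝ)+2) ε hε
  have hεs : 0 < ε ^ (1/s) := Real.rpow_pos_of_pos hε _
  obtain ⟨L, hL⟩ := exists_nat_gt (max (n:ℝ) (max ((2*(n:ℝ)+4)/δ') (2/(ε ^ (1/s)))))
  refine ⟨L, fun ℓ hℓ => ?_⟩
  have hLl : (L:ℝ) ≤ (ℓ:ℝ) := Nat.cast_le.2 hℓ
  have hnl : (n:ℝ) ≤ (ℓ:ℝ) := le_of_lt (lt_of_le_of_lt (le_max_left _ _) (lt_of_lt_of_le hL hLl))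
  have h4 : (2*(n:ℝ)+4)/δ' < (ℓ:ℝ)+1 := by
    have := ((le_max_left ((2*(n:ℝ)+4)/δ') (2/(ε ^ (1/s)))).trans
      (le_max_right (n:ℝ) _)).trans_lt hL
    linarith
  have h5 : 2/(ε ^ (1/s)) < (ℓ:ℝ)+1 := by
    have := ((le_max_right ((2*(n:ℝ)+4)/δ') (2/(ε ^ (1/s)))).trans
      (le_max_right (n:ℝ) _)).trans_lt hL
    linarith
  have hθpos : 0 < 1/((ℓ:ℝ)+1) := theta_pos ℓ
  have hθ1 : 1/((ℓ:ℝ)+1) ≤ 1 := theta_le_one ℓ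
  have hN := mesh_pos k ℓ
  have hδ0 : (0:ℝ) ≤ 2*(Real.sqrt (k:ℝ)/euclidMesh k ℓ) := by positivity
  have hθsq : (1/((ℓ:ℝ)+1))^2 = 1/(((ℓ:ℝ)+1)^2) := by rw [div_pow, one_pow]
  have hδθ2 : 2*(Real.sqrt (k:ℝ)/euclidMesh k ℓ) ≤ 2*(1/((ℓ:ℝ)+1))^2 := by
    have := sqrtk_div_mesh_le k ℓ
    rw [hθsq]
    linarith
  have hθsq' : (1/((ℓ:ℝ)+1))^2 ≤ 1/((ℓ:ℝ)+1) := by nlinarith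
  have hkey : (2*(n:ℝ)+4)*(1/((ℓ:ℝ)+1)) < δ' := by
    rw [div_lt_iff₀ hδ'pos] at h4
    rw [mul_one_div, div_lt_iff₀ (by positivity : (0:ℝ) < (ℓ:ℝ)+1)]
    nlinarith
  constructor
  · -- condition (i) on the ball
    intro x hx y hy
    rw [Metric.mem_closedBall] at hx hy
    have hxn : ‖x‖ ≤ (n:ℝ) := by rwa [← dist_zero_right]
    have hyn : ‖y‖ ≤ (n:ℝ) := by rwa [← dist_zero_right]
    have hxi : ∀ i, |x i| ≤ (ℓ:ℝ) := fun i => (abs_coord_le_norm x i).trans (by linarith)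
    have hyi : ∀ i, |y i| ≤ (ℓ:ℝ) := fun i => (abs_coord_le_norm y i).trans (by linarith)
    have ht2r : dist x y ≤ 2*(n:ℝ) := by
      have htri := dist_triangle x (0 : EuclideanSpace ℝ (Fin k)) y
      rw [dist_comm (0 : EuclideanSpace ℝ (Fin k)) y] at htri
      linarith
    obtain ⟨habs, hu2⟩ := quant_approx hθpos hθ1 hδ0 hδθ2 hθsq' dist_nonneg dist_nonneg
      (dist_rd_le k ℓ x y) (dist_rd_ge k ℓ x y hxi hyi) ht2r (Nat.cast_nonneg n) hkey
    rw [dist_quant k ℓ x y]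
    exact hδ' (dist x y) ⟨dist_nonneg, by have := Nat.cast_nonneg (α := ℝ) n; linarith⟩ _
      ⟨mul_nonneg (by linarith) dist_nonneg, hu2⟩ habs
  · -- condition (ii) globally
    intro x y _
    have hub : dist (euclidQuant k ℓ x) (euclidQuant k ℓ y)
        ≤ (1-(1/((ℓ:ℝ)+1)))*(dist x y + 2*(Real.sqrt (k:ℝ)/euclidMesh k ℓ)) := by
      rw [dist_quant k ℓ x y]
      exact mul_le_mul_of_nonneg_left (dist_rd_le k ℓ x y) (by linarith)
    have hmain := rpow_quant_bound hθpos hθ1 hδ0 dist_nonneg dist_nonneg hub hs.le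
    have hδθ : (2*(Real.sqrt (k:ℝ)/euclidMesh k ℓ))/(1/((ℓ:ℝ)+1)) ≤ ε^(1/s) := by
      have h9 : (2*(Real.sqrt (k:ℝ)/euclidMesh k ℓ))/(1/((ℓ:ℝ)+1)) ≤ 2*(1/((ℓ:ℝ)+1)) := by
        rw [div_le_iff₀ hθpos]
        nlinarith
      have h10 : 2*(1/((ℓ:ℝ)+1)) ≤ ε^(1/s) := by
        rw [div_lt_iff₀ hεs] at h5
        rw [mul_one_div, div_le_iff₀ (by positivity : (0:ℝ) < (ℓ:ℝ)+1)]
        nlinarith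
      linarith
    have hfin : ((2*(Real.sqrt (k:ℝ)/euclidMesh k ℓ))/(1/((ℓ:ℝ)+1)))^s ≤ ε := by
      calc ((2*(Real.sqrt (k:ℝ)/euclidMesh k ℓ))/(1/((ℓ:ℝ)+1)))^s
          ≤ (ε^(1/s))^s := Real.rpow_le_rpow (by positivity) hδθ hs.le
        _ = ε := by rw [one_div, Real.rpow_inv_rpow hε.le hs.ne']
    linarith
end

section
/- Let P^{(n)} be the distribution induced by an (n, R, R_c, ∞) fixed-length code for an i.i.d. source p_X^{⊗n} on a finite alphabet X: X^n ∼ p_X^{⊗n}, J uniform on [2^{nR_c}] independent of X^n, M ∈ [2^{nR}]. For any reals ε_1, ε_2 > 0 with ε_1 + ε_2 < H(X) − R, the probability under P^{(n)} that the information density satisfies i_{P^{(n)}}(M, J) − i_{P^{(n)}}(X^n, J) > −n(H(X) − R − ε_1 − ε_2) tends to 0 as n → ∞, where i_P(w) = −log P(w). -/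
open MeasureTheory Real Filter

/-- Self-information i_ν(a) = −log ν({a}) (base 2). -/
noncomputable def iDen {α : Type*} [MeasurableSpace α] (ν : Measure α) (a : α) : ℝ :=
  -Real.logb 2 ((ν {a}).toReal)

lemma measure_coe_finset {α : Type*} [MeasurableSpace α] [MeasurableSingletonClass α]
    (μ : Measure α) (s : Finset α) : μ ↑s = ∑ x ∈ s, μ {x} := by
  rw [show (↑s : Set α) = ⋃ x ∈ s, {x} by ext a; simp,
    measure_biUnion_finset (by simp [Set.PairwiseDisjoint, Set.Pairwise, Function.onFun])
      (fun b _ => measurableSet_singleton b)]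

lemma iDen_union_bound {α : Type*} [Fintype α] [MeasurableSpace α] [MeasurableSingletonClass α]
    (ν : Measure α) [IsFiniteMeasure ν] (c : ℝ) :
    ν {a | c < iDen ν a} ≤ (Fintype.card α : ENNReal) * ENNReal.ofReal ((2:ℝ) ^ (-c)) := by
  set s : Set α := {a | c < iDen ν a} with hs
  have key : ∀ a ∈ s.toFinset, ν {a} ≤ ENNReal.ofReal ((2:ℝ) ^ (-c)) := by
    intro a ha
    rcases eq_or_ne (ν {a}) 0 with h | h
    · simp [h]
    · have ht : 0 < (ν {a}).toReal := ENNReal.toReal_pos h (measure_ne_top ν _)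
      have hmem : c < iDen ν a := by simpa [hs] using Set.mem_toFinset.mp ha
      have hlog : Real.logb 2 (ν {a}).toReal < -c := by
        simp only [iDen] at hmem; linarith
      have hlt : (ν {a}).toReal < (2:ℝ) ^ (-c) :=
        (Real.logb_lt_iff_lt_rpow (by norm_num) ht).mp hlog
      calc ν {a} = ENNReal.ofReal (ν {a}).toReal := (ENNReal.ofReal_toReal (measure_ne_top ν _)).symm
        _ ≤ _ := ENNReal.ofReal_le_ofReal hlt.le
  calc ν s = ν ↑s.toFinset := by rw [Set.coe_toFinset]
    _ = ∑ a ∈ s.toFinset, ν {a} := measure_coe_finset ν _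
    _ ≤ ∑ _a ∈ s.toFinset, ENNReal.ofReal ((2:ℝ) ^ (-c)) := Finset.sum_le_sum key
    _ = (s.toFinset.card : ENNReal) * ENNReal.ofReal ((2:ℝ) ^ (-c)) := by
        rw [Finset.sum_const, nsmul_eq_mul]
    _ ≤ _ := by
        gcongr
        exact Nat.cast_le.mpr (Finset.card_le_univ _)

lemma sum_prod_eq {X : Type*} [Fintype X] (n : ℕ) (h : Fin n → X → ℝ) :
    ∑ x : Fin n → X, ∏ i, h i (x i) = ∏ i, ∑ a, h i a := by
  rw [Finset.prod_univ_sum]; simp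

lemma cheb_eq {X : Type*} [Fintype X] (q g : X → ℝ)
    (hq1 : ∑ a, q a = 1) (hg : ∑ a, q a * g a = 0) (n : ℕ) :
    ∑ x : Fin n → X, (∏ i, q (x i)) * (∑ i, g (x i))^2
      = n * ∑ a, q a * g a ^ 2 := by
  have key : ∀ i j : Fin n, ∑ x : Fin n → X, (∏ k, q (x k)) * (g (x i) * g (x j))
      = if i = j then (∑ a, q a * g a ^ 2) else 0 := by
    intro i j
    have hterm : ∀ x : Fin n → X, (∏ k, q (x k)) * (g (x i) * g (x j))
        = ∏ k, ((if k = i then g (x k) else 1) * (if k = j then g (x k) else 1) * q (x k)) := by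
      intro x
      rw [Finset.prod_mul_distrib, Finset.prod_mul_distrib, Finset.prod_ite_eq',
        Finset.prod_ite_eq']
      simp only [Finset.mem_univ, if_true]
      ring
    rw [Finset.sum_congr rfl (fun x _ => hterm x)]
    refine (sum_prod_eq n fun k a =>
      (if k = i then g a else 1) * (if k = j then g a else 1) * q a).trans ?_
    by_cases hij : i = j
    · subst hij
      have hfac : ∀ k : Fin n, (∑ a, (if k = i then g a else 1) * (if k = i then g a else 1) * q a)
          = if k = i then (∑ a, q a * g a ^ 2) else 1 := by
        intro k
        by_cases h : k = i
        · simp only [h, if_true]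
          exact Finset.sum_congr rfl fun a _ => by ring
        · simp [h, hq1]
      rw [Finset.prod_congr rfl (fun k _ => hfac k), Finset.prod_ite_eq']
      simp
    · rw [if_neg hij]
      apply Finset.prod_eq_zero (Finset.mem_univ i)
      have : ∀ a, (if i = i then g a else 1) * (if i = j then g a else 1) * q a = q a * g a := by
        intro a; simp [hij]; ring
      rw [Finset.sum_congr rfl (fun a _ => this a), hg]
  calc ∑ x : Fin n → X, (∏ i, q (x i)) * (∑ i, g (x i))^2
      = ∑ x : Fin n → X, ∑ i, ∑ j, (∏ k, q (x k)) * (g (x i) * g (x j)) := by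
        refine Finset.sum_congr rfl fun x _ => ?_
        rw [sq, Finset.sum_mul_sum]
        rw [Finset.mul_sum]
        refine Finset.sum_congr rfl fun i _ => ?_
        rw [Finset.mul_sum]
    _ = ∑ i, ∑ j, ∑ x : Fin n → X, (∏ k, q (x k)) * (g (x i) * g (x j)) := by
        rw [Finset.sum_comm]
        exact Finset.sum_congr rfl fun i _ => Finset.sum_comm
    _ = ∑ i : Fin n, (∑ a, q a * g a ^ 2) := by
        refine Finset.sum_congr rfl fun i _ => ?_
        rw [Finset.sum_congr rfl (fun j _ => key i j), Finset.sum_ite_eq]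
        simp
    _ = n * ∑ a, q a * g a ^ 2 := by
        rw [Finset.sum_const, Finset.card_univ, Fintype.card_fin, nsmul_eq_mul]
/-- For an (n, R, R_c, ∞) fixed-length code for an i.i.d. source p^{⊗n} on a finite
alphabet, with R < H(X) and ε₁ + ε₂ < H(X) − R, the probability that
i(M,J) − i(X^n,J) > −n(H(X) − R − ε₁ − ε₂) vanishes as n → ∞. -/
theorem stmt_14 {X : Type*} [Fintype X] [MeasurableSpace X] [MeasurableSingletonClass X]
    (p : Measure X) [IsProbabilityMeasure p]
    (R Rc : ℝ) (hR : 0 ≤ R) (hRc : 0 ≤ Rc) (hRH : R < entropy p)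
    (μ : (n : ℕ) → Measure ((Fin n → X) ×
      Fin (Nat.floor ((2 : ℝ) ^ ((n : ℝ) * Rc))) ×
      Fin (Nat.floor ((2 : ℝ) ^ ((n : ℝ) * R)))))
    (hprob : ∀ n, IsProbabilityMeasure (μ n))
    -- X^n is i.i.d. ∼ p and J is uniform on [2^{nR_c}] and independent of X^n
    (hXJ : ∀ n, (μ n).map (fun ω => (ω.1, ω.2.1)) =
      (Measure.pi fun _ => p).prod (unif (Fin (Nat.floor ((2 : ℝ) ^ ((n : ℝ) * Rc))))))
    (ε₁ ε₂ : ℝ) (hε₁ : 0 < ε₁) (hε₂ : 0 < ε₂) (hsum : ε₁ + ε₂ < entropy p - R) :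
    Tendsto (fun n => μ n
      {ω | iDen ((μ n).map (fun ω' => (ω'.2.2, ω'.2.1))) (ω.2.2, ω.2.1)
         - iDen ((μ n).map (fun ω' => (ω'.1, ω'.2.1))) (ω.1, ω.2.1)
         > -(n * (entropy p - R - ε₁ - ε₂))})
      atTop (nhds 0) := by
  classical
  set Hp := entropy p with hHpdef
  set q : X → ℝ := fun a => (p {a}).toReal with hqdef
  have hq0 : ∀ a, 0 ≤ q a := fun a => ENNReal.toReal_nonneg
  have hq1 : ∑ a, q a = 1 := by
    have h := measure_coe_finset p Finset.univ
    rw [Finset.coe_univ, measure_univ] at h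
    calc ∑ a, q a = (∑ a, p {a}).toReal := (ENNReal.toReal_sum fun a _ => measure_ne_top p _).symm
      _ = 1 := by rw [← h]; simp
  set f : X → ℝ := fun a => -Real.logb 2 (q a) with hfdef
  set g : X → ℝ := fun a => f a - Hp with hgdef
  have hHp : Hp = ∑ a, q a * f a := by
    rw [hHpdef]
    show -∑ a, q a * Real.logb 2 (q a) = _
    rw [← Finset.sum_neg_distrib]
    exact Finset.sum_congr rfl fun a _ => by simp [hfdef]
  have hg0 : ∑ a, q a * g a = 0 := by
    simp only [hgdef, mul_sub]
    rw [Finset.sum_sub_distrib, ← Finset.sum_mul, hq1, one_mul, ← hHp]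
    ring
  set V : ℝ := ∑ a, q a * g a ^ 2 with hVdef
  have hV0 : 0 ≤ V := Finset.sum_nonneg fun a _ => mul_nonneg (hq0 a) (sq_nonneg _)
  have hδ : 0 < Hp - R - ε₁ - ε₂ := by linarith
  -- key per-n bound
  have key : ∀ n : ℕ, 1 ≤ n → μ n
      {ω | iDen ((μ n).map (fun ω' => (ω'.2.2, ω'.2.1))) (ω.2.2, ω.2.1)
         - iDen ((μ n).map (fun ω' => (ω'.1, ω'.2.1))) (ω.1, ω.2.1)
         > -(n * (Hp - R - ε₁ - ε₂))}
      ≤ ENNReal.ofReal ((2:ℝ) ^ (-((n:ℝ) * ε₁))) + ENNReal.ofReal (V / ((n:ℝ) * ε₂ ^ 2)) := by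
    intro n hn
    haveI := hprob n
    have hnR : (1:ℝ) ≤ (n:ℝ) := by exact_mod_cast hn
    have hnpos : (0:ℝ) < (n:ℝ) := by linarith
    set C := Nat.floor ((2 : ℝ) ^ ((n : ℝ) * Rc)) with hCdef
    set M' := Nat.floor ((2 : ℝ) ^ ((n : ℝ) * R)) with hMdef
    have hC1 : 1 ≤ C := Nat.le_floor (by exact_mod_cast Real.one_le_rpow (by norm_num) (by positivity))
    have hCpos : (0:ℝ) < (C:ℝ) := by exact_mod_cast hC1
    set νM := (μ n).map (fun ω' : (Fin n → X) × Fin C × Fin M' => (ω'.2.2, ω'.2.1)) with hνM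
    have hφM : Measurable (fun ω' : (Fin n → X) × Fin C × Fin M' => (ω'.2.2, ω'.2.1)) :=
      (measurable_snd.snd).prodMk (measurable_snd.fst)
    have hφX : Measurable (fun ω' : (Fin n → X) × Fin C × Fin M' => (ω'.1, ω'.2.1)) :=
      measurable_fst.prodMk (measurable_snd.fst)
    set νP := (Measure.pi fun _ : Fin n => p).prod (unif (Fin C)) with hνP
    have hXJn : (μ n).map (fun ω' : (Fin n → X) × Fin C × Fin M' => (ω'.1, ω'.2.1)) = νP := hXJ n
    set an : ℝ := (n:ℝ) * (R + ε₁) + Real.logb 2 C with handef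
    set bn : ℝ := (n:ℝ) * (Hp - ε₂) + Real.logb 2 C with hbndef
    have hab : an - bn = -((n:ℝ) * (Hp - R - ε₁ - ε₂)) := by rw [handef, hbndef]; ring
    -- set inclusion
    have hsub : {ω : (Fin n → X) × Fin C × Fin M' |
          iDen νM (ω.2.2, ω.2.1) - iDen νP (ω.1, ω.2.1) > -((n:ℝ) * (Hp - R - ε₁ - ε₂))}
        ⊆ {ω | an < iDen νM (ω.2.2, ω.2.1)} ∪ {ω | iDen νP (ω.1, ω.2.1) < bn} := by
      intro ω hω
      simp only [Set.mem_setOf_eq, gt_iff_lt] at hω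
      by_contra hc
      simp only [Set.mem_union, Set.mem_setOf_eq, not_or, not_lt] at hc
      obtain ⟨h1, h2⟩ := hc
      linarith
    -- A bound
    have hA : μ n {ω : (Fin n → X) × Fin C × Fin M' | an < iDen νM (ω.2.2, ω.2.1)}
        ≤ ENNReal.ofReal ((2:ℝ) ^ (-((n:ℝ) * ε₁))) := by
      haveI : IsProbabilityMeasure νM := Measure.isProbabilityMeasure_map hφM.aemeasurable
      have hpre : {ω : (Fin n → X) × Fin C × Fin M' | an < iDen νM (ω.2.2, ω.2.1)}
          = (fun ω' : (Fin n → X) × Fin C × Fin M' => (ω'.2.2, ω'.2.1)) ⁻¹' {w | an < iDen νM w} := rfl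
      rw [hpre, ← Measure.map_apply hφM ((Set.to_countable _).measurableSet), ← hνM]
      refine le_trans (iDen_union_bound νM an) ?_
      have h2C : (2:ℝ) ^ (-an) = (2:ℝ) ^ (-((n:ℝ) * (R + ε₁))) * ((C:ℝ))⁻¹ := by
        rw [show -an = -((n:ℝ) * (R + ε₁)) + -Real.logb 2 (C:ℝ) by rw [handef]; ring,
          Real.rpow_add (by norm_num), Real.rpow_neg (by norm_num) (Real.logb 2 (C:ℝ)),
          Real.rpow_logb (by norm_num) (by norm_num) hCpos]
      have hM'le : (M':ℝ) ≤ (2:ℝ) ^ ((n:ℝ) * R) := Nat.floor_le (by positivity)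
      have hrineq : ((M':ℝ) * (C:ℝ)) * ((2:ℝ) ^ (-((n:ℝ) * (R + ε₁))) * ((C:ℝ))⁻¹)
          ≤ (2:ℝ) ^ (-((n:ℝ) * ε₁)) := by
        have h1 : ((M':ℝ) * (C:ℝ)) * ((2:ℝ) ^ (-((n:ℝ) * (R + ε₁))) * ((C:ℝ))⁻¹)
            = (M':ℝ) * (2:ℝ) ^ (-((n:ℝ) * (R + ε₁))) := by
          field_simp
        rw [h1]
        calc (M':ℝ) * (2:ℝ) ^ (-((n:ℝ) * (R + ε₁)))
            ≤ (2:ℝ) ^ ((n:ℝ) * R) * (2:ℝ) ^ (-((n:ℝ) * (R + ε₁))) :=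
              mul_le_mul_of_nonneg_right hM'le (by positivity)
          _ = (2:ℝ) ^ (-((n:ℝ) * ε₁)) := by
              rw [← Real.rpow_add (by norm_num)]; ring_nf
      calc ((Fintype.card (Fin M' × Fin C) : ENNReal)) * ENNReal.ofReal ((2:ℝ) ^ (-an))
          = ((M' * C : ℕ) : ENNReal) * ENNReal.ofReal ((2:ℝ) ^ (-an)) := by
            rw [Fintype.card_prod, Fintype.card_fin, Fintype.card_fin]
        _ = ENNReal.ofReal (((M':ℝ) * (C:ℝ)) * ((2:ℝ) ^ (-((n:ℝ) * (R + ε₁))) * ((C:ℝ))⁻¹)) := by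
            rw [h2C, ← ENNReal.ofReal_natCast (M' * C), ← ENNReal.ofReal_mul (by positivity)]
            push_cast
            ring_nf
        _ ≤ ENNReal.ofReal ((2:ℝ) ^ (-((n:ℝ) * ε₁))) := ENNReal.ofReal_le_ofReal hrineq
    -- B bound
    have hCne : (C : ENNReal) ≠ 0 := Nat.cast_ne_zero.mpr (by omega)
    have hcount : (Measure.count : Measure (Fin C)) Set.univ = (C : ENNReal) := by
      rw [← Finset.coe_univ, Measure.count_apply_finset]
      simp
    have hunif_univ : unif (Fin C) Set.univ = 1 := by
      simp only [unif, Measure.smul_apply, smul_eq_mul, Fintype.card_fin]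
      rw [hcount]
      exact ENNReal.inv_mul_cancel hCne (ENNReal.natCast_ne_top C)
    haveI : IsProbabilityMeasure (unif (Fin C)) := ⟨hunif_univ⟩
    have hunif_single : ∀ j : Fin C, unif (Fin C) {j} = ((C : ENNReal))⁻¹ := by
      intro j
      simp only [unif, Measure.smul_apply, smul_eq_mul, Fintype.card_fin,
        Measure.count_singleton, mul_one]
    have hpis : ∀ x : Fin n → X, (Measure.pi fun _ : Fin n => p) {x}
        = ENNReal.ofReal (∏ i, q (x i)) := by
      intro x
      rw [← Set.univ_pi_singleton, Measure.pi_pi,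
        ENNReal.ofReal_prod_of_nonneg (fun i _ => hq0 (x i))]
      exact Finset.prod_congr rfl fun i _ => (ENNReal.ofReal_toReal (measure_ne_top p _)).symm
    have hsing : ∀ (x : Fin n → X) (j : Fin C),
        νP {(x, j)} = ENNReal.ofReal (∏ i, q (x i)) * ((C : ENNReal))⁻¹ := by
      intro x j
      rw [hνP, ← Set.singleton_prod_singleton, Measure.prod_prod, hpis, hunif_single]
    set Gfin : Finset (Fin n → X) := Finset.univ.filter
      (fun x => 0 < ∏ i, q (x i) ∧ (∑ i, f (x i)) < (n:ℝ) * (Hp - ε₂)) with hGdef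
    set Zs : Set (Fin n → X) := {x | (Measure.pi fun _ : Fin n => p) {x} = 0} with hZdef
    have hsubB : {w : (Fin n → X) × Fin C | iDen νP w < bn} ⊆ (Zs ∪ ↑Gfin) ×ˢ Set.univ := by
      rintro ⟨x, j⟩ hw
      simp only [Set.mem_setOf_eq] at hw
      refine Set.mem_prod.mpr ⟨?_, Set.mem_univ _⟩
      rcases eq_or_ne ((Measure.pi fun _ : Fin n => p) {x}) 0 with h0 | h0
      · exact Or.inl h0
      · right
        have hwpos : 0 < ∏ i, q (x i) := by
          rw [hpis x] at h0
          by_contra hle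
          push_neg at hle
          exact h0 (by simp [ENNReal.ofReal_eq_zero.mpr hle])
        have hqi : ∀ i, q (x i) ≠ 0 := by
          intro i hzero
          exact absurd (Finset.prod_eq_zero (Finset.mem_univ i) hzero) (ne_of_gt hwpos)
        have hfsum : ∑ i, f (x i) = -∑ i, Real.logb 2 (q (x i)) := by
          rw [← Finset.sum_neg_distrib]
        have hval : iDen νP (x, j) = (∑ i, f (x i)) + Real.logb 2 (C:ℝ) := by
          rw [iDen, hsing x j, ENNReal.toReal_mul, ENNReal.toReal_ofReal hwpos.le,
            ENNReal.toReal_inv, ENNReal.toReal_natCast, ← div_eq_mul_inv,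
            Real.logb_div (ne_of_gt hwpos) (ne_of_gt hCpos),
            Real.logb_prod _ _ (fun i _ => hqi i), hfsum]
          ring
        rw [hval, hbndef] at hw
        exact Finset.mem_coe.mpr (Finset.mem_filter.mpr ⟨Finset.mem_univ _, hwpos, by linarith⟩)
    have hZ : (Measure.pi fun _ : Fin n => p) Zs = 0 := by
      have hzu : Zs = ⋃ x ∈ Zs, {x} := by ext y; simp
      rw [hzu, measure_biUnion_null_iff (Zs.to_countable)]
      exact fun x hx => hx
    have hG : (Measure.pi fun _ : Fin n => p) ↑Gfin ≤ ENNReal.ofReal (V / ((n:ℝ) * ε₂ ^ 2)) := by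
      rw [measure_coe_finset]
      have hsum_eq : ∑ x ∈ Gfin, (Measure.pi fun _ : Fin n => p) {x}
          = ENNReal.ofReal (∑ x ∈ Gfin, ∏ i, q (x i)) := by
        rw [ENNReal.ofReal_sum_of_nonneg (fun x _ => Finset.prod_nonneg fun i _ => hq0 (x i))]
        exact Finset.sum_congr rfl fun x _ => hpis x
      rw [hsum_eq]
      apply ENNReal.ofReal_le_ofReal
      have hchain : (((n:ℝ) * ε₂) ^ 2) * ∑ x ∈ Gfin, ∏ i, q (x i) ≤ (n:ℝ) * V := by
        rw [Finset.mul_sum]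
        calc ∑ x ∈ Gfin, ((n:ℝ) * ε₂) ^ 2 * ∏ i, q (x i)
            ≤ ∑ x ∈ Gfin, (∏ i, q (x i)) * (∑ i, g (x i)) ^ 2 := by
              refine Finset.sum_le_sum fun x hx => ?_
              obtain ⟨hpos, hlt⟩ := Finset.mem_filter.mp hx |>.2
              have hsg : ∑ i, g (x i) = (∑ i, f (x i)) - (n:ℝ) * Hp := by
                simp only [hgdef, Finset.sum_sub_distrib, Finset.sum_const,
                  Finset.card_univ, Fintype.card_fin, nsmul_eq_mul]
              have h1 : ∑ i, g (x i) < -((n:ℝ) * ε₂) := by rw [hsg]; linarith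
              have hnn : (0:ℝ) ≤ (n:ℝ) * ε₂ := by positivity
              have h2 : ((n:ℝ) * ε₂) ^ 2 ≤ (∑ i, g (x i)) ^ 2 := by nlinarith
              rw [mul_comm]
              exact mul_le_mul_of_nonneg_left h2 hpos.le
          _ ≤ ∑ x : Fin n → X, (∏ i, q (x i)) * (∑ i, g (x i)) ^ 2 :=
              Finset.sum_le_sum_of_subset_of_nonneg (Finset.subset_univ _)
                (fun x _ _ => mul_nonneg (Finset.prod_nonneg fun i _ => hq0 (x i)) (sq_nonneg _))
          _ = (n:ℝ) * V := cheb_eq q g hq1 hg0 n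
      rw [le_div_iff₀ (by positivity)]
      nlinarith [hchain]
    have hB : μ n {ω : (Fin n → X) × Fin C × Fin M' | iDen νP (ω.1, ω.2.1) < bn}
        ≤ ENNReal.ofReal (V / ((n:ℝ) * ε₂ ^ 2)) := by
      have hpre : {ω : (Fin n → X) × Fin C × Fin M' | iDen νP (ω.1, ω.2.1) < bn}
          = (fun ω' : (Fin n → X) × Fin C × Fin M' => (ω'.1, ω'.2.1)) ⁻¹' {w | iDen νP w < bn} := rfl
      rw [hpre, ← Measure.map_apply hφX ((Set.to_countable _).measurableSet), hXJn]
      calc νP {w | iDen νP w < bn} ≤ νP ((Zs ∪ ↑Gfin) ×ˢ Set.univ) := measure_mono hsubB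
        _ = (Measure.pi fun _ : Fin n => p) (Zs ∪ ↑Gfin) * unif (Fin C) Set.univ := by
            rw [hνP, Measure.prod_prod]
        _ = (Measure.pi fun _ : Fin n => p) (Zs ∪ ↑Gfin) := by rw [hunif_univ, mul_one]
        _ ≤ (Measure.pi fun _ : Fin n => p) Zs + (Measure.pi fun _ : Fin n => p) ↑Gfin :=
            measure_union_le _ _
        _ ≤ 0 + ENNReal.ofReal (V / ((n:ℝ) * ε₂ ^ 2)) := add_le_add (le_of_eq hZ) hG
        _ = ENNReal.ofReal (V / ((n:ℝ) * ε₂ ^ 2)) := zero_add _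
    -- combine
    have hmain : {ω : (Fin n → X) × Fin C × Fin M' |
          iDen νM (ω.2.2, ω.2.1) - iDen νP (ω.1, ω.2.1) > -((n:ℝ) * (Hp - R - ε₁ - ε₂))}
        = {ω : (Fin n → X) × Fin C × Fin M' |
          iDen ((μ n).map (fun ω' => (ω'.2.2, ω'.2.1))) (ω.2.2, ω.2.1)
            - iDen ((μ n).map (fun ω' => (ω'.1, ω'.2.1))) (ω.1, ω.2.1)
            > -((n:ℕ) * (Hp - R - ε₁ - ε₂))} := by
      rw [hνM, hXJn]
    rw [← hmain]
    calc μ n _ ≤ μ n ({ω : (Fin n → X) × Fin C × Fin M' | an < iDen νM (ω.2.2, ω.2.1)}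
          ∪ {ω | iDen νP (ω.1, ω.2.1) < bn}) := measure_mono hsub
      _ ≤ μ n {ω : (Fin n → X) × Fin C × Fin M' | an < iDen νM (ω.2.2, ω.2.1)}
          + μ n {ω | iDen νP (ω.1, ω.2.1) < bn} := measure_union_le _ _
      _ ≤ _ := add_le_add hA hB
  -- the limit
  have hreal : Tendsto (fun n : ℕ => (2:ℝ) ^ (-((n:ℝ) * ε₁)) + V / ((n:ℝ) * ε₂ ^ 2))
      atTop (nhds 0) := by
    have h1 : Tendsto (fun n : ℕ => (2:ℝ) ^ (-((n:ℝ) * ε₁))) atTop (nhds 0) := by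
      have hr : ∀ n : ℕ, (2:ℝ) ^ (-((n:ℝ) * ε₁)) = ((2:ℝ) ^ (-ε₁)) ^ n := fun n => by
        rw [show -((n:ℝ) * ε₁) = (-ε₁) * (n:ℝ) by ring, Real.rpow_mul (by norm_num),
          Real.rpow_natCast]
      simp only [hr]
      exact tendsto_pow_atTop_nhds_zero_of_lt_one (Real.rpow_nonneg (by norm_num) _)
        (Real.rpow_lt_one_of_one_lt_of_neg (by norm_num) (by linarith))
    have h2 : Tendsto (fun n : ℕ => V / ((n:ℝ) * ε₂ ^ 2)) atTop (nhds 0) := by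
      have hrw : ∀ n : ℕ, V / ((n:ℝ) * ε₂ ^ 2) = (V / ε₂ ^ 2) / (n:ℝ) := fun n => by
        rw [div_div]; ring_nf
      simp only [hrw]
      exact tendsto_const_div_atTop_nhds_zero_nat _
    simpa using h1.add h2
  have hoRe : Tendsto (fun n : ℕ => ENNReal.ofReal ((2:ℝ) ^ (-((n:ℝ) * ε₁)))
      + ENNReal.ofReal (V / ((n:ℝ) * ε₂ ^ 2))) atTop (nhds 0) := by
    have hcomp : Tendsto (fun n : ℕ =>
        ENNReal.ofReal ((2:ℝ) ^ (-((n:ℝ) * ε₁)) + V / ((n:ℝ) * ε₂ ^ 2))) atTop (nhds 0) := by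
      have := (ENNReal.continuous_ofReal.tendsto 0).comp hreal
      simpa [Function.comp_def] using this
    refine hcomp.congr fun n => ?_
    rw [ENNReal.ofReal_add (by positivity) (div_nonneg hV0 (by positivity))]
  refine tendsto_of_tendsto_of_tendsto_of_le_of_le' tendsto_const_nhds hoRe
    (Eventually.of_forall fun n => zero_le ..) ?_
  filter_upwards [eventually_ge_atTop 1] with n hn using key n hn
end
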